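/- arXiv:2109.12341 — 7 statements merged into one kernel-verified Lean document; each statement's English description precedes it below -/
import Mathlib

section
/- Let P be a parafree group and let N be a normal subgroup of P such that the quotient P/N is also a parafree group of the same abelian rank as P. Then N is trivial. -/
/-- A finitely generated group is *parafree* if it is residually nilpotent (the
intersection of its lower central series is trivial) and it has the same lower central
quotients as some finitely generated free group.  Here `lowerCentralSeries G k` is
`γ_{k+1} G`. -/
def IsParafree (G : Type*) [Group G] : Prop :=
  Group.FG G ∧ (⨅ n : ℕ, (⊤ : Subgroup G).lowerCentralSeries n) = ⊥ ∧
    ∃ n : ℕ, ∀ k : ℕ,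
      Nonempty ((G ⧸ (⊤ : Subgroup G).lowerCentralSeries k) ≃*
        (FreeGroup (Fin n) ⧸ (⊤ : Subgroup (FreeGroup (Fin n))).lowerCentralSeries k))

/-- The abelian rank of a group: the minimal number of generators of its
abelianization. -/
noncomputable def abelianRank (G : Type*) [Group G] : ℕ :=
  sInf {n : ℕ | ∃ s : Finset (Abelianization G),
    s.card = n ∧ Subgroup.closure (s : Set (Abelianization G)) = ⊤}

/-- An element is a proper power if it is `y ^ n` for some `n ≥ 2`. -/
def IsProperPower {A : Type*} [Monoid A] (x : A) : Prop :=
  ∃ (y : A) (n : ℕ), 2 ≤ n ∧ x = y ^ n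

notation "LCS" G:max n:max => Subgroup.lowerCentralSeries (⊤ : Subgroup G) n

section Aux

open Function Subgroup
open scoped commutatorElement

universe u

lemma lcs_succ_def {G : Type*} [Group G] (d : ℕ) :
    LCS G (d + 1) = ⁅LCS G d, ⊤⁆ := rfl

lemma lcs_map_eq {G H : Type*} [Group G] [Group H] (f : G →* H) (hf : Surjective f) (n : ℕ) :
    (LCS G n).map f = LCS H n := by
  induction n with
  | zero => simpa using Subgroup.map_top_of_surjective f hf
  | succ d ih =>
    rw [lcs_succ_def, lcs_succ_def, Subgroup.map_commutator, ih,
      Subgroup.map_top_of_surjective f hf]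

lemma lcs_comm (i : ℕ) : ∀ {G : Type u} [Group G] (j : ℕ),
    ⁅LCS G i, LCS G j⁆ ≤ LCS G (i + j + 1) := by
  induction i with
  | zero =>
    intro G _ j
    rw [Subgroup.lowerCentralSeries_zero, Subgroup.commutator_comm]
    simpa using le_of_eq (lcs_succ_def j).symm
  | succ i ih =>
    intro G _ j
    have key : Subgroup.map (QuotientGroup.mk' (LCS G (i + 1 + j + 1)))
        ⁅LCS G (i + 1), LCS G j⁆ = ⊥ := by
      set f := QuotientGroup.mk' (LCS G (i + 1 + j + 1)) with hfdef
      have hf : Surjective f := QuotientGroup.mk'_surjective _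
      have hbot : LCS (G ⧸ LCS G (i + 1 + j + 1)) (i + 1 + j + 1)
          = ⊥ := by
        rw [← lcs_map_eq f hf, Subgroup.map_eq_bot_iff, QuotientGroup.ker_mk']
      rw [Subgroup.map_commutator, lcs_map_eq f hf, lcs_map_eq f hf, lcs_succ_def i]
      apply Subgroup.commutator_commutator_eq_bot_of_rotate
      · rw [Subgroup.commutator_comm (⊤ : Subgroup _), ← lcs_succ_def j, Subgroup.commutator_comm]
        rw [eq_bot_iff, ← hbot]
        have := ih (G := G ⧸ LCS G (i + 1 + j + 1)) (j + 1)
        convert this using 2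
        omega
      · rw [Subgroup.commutator_comm (LCS _ j), eq_bot_iff, ← hbot]
        calc ⁅⁅LCS _ i, LCS _ j⁆, (⊤ : Subgroup _)⁆
            ≤ ⁅LCS _ (i + j + 1), (⊤ : Subgroup _)⁆ :=
              Subgroup.commutator_mono (ih j) le_rfl
          _ = LCS _ (i + j + 1 + 1) := (lcs_succ_def _).symm
          _ ≤ _ := by apply le_of_eq; congr 1; omega
    rw [Subgroup.map_eq_bot_iff, QuotientGroup.ker_mk'] at key
    exact le_trans key (le_of_eq (by congr 1))

lemma comm_cancel_left {Q : Type*} [Group Q] (c u z : Q) (h1 : ∀ y, Commute c y) :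
    ⁅c * u, z⁆ = ⁅u, z⁆ := by
  have h := (h1 (u * z * u⁻¹)).eq
  calc ⁅c * u, z⁆ = c * (u * z * u⁻¹) * c⁻¹ * z⁻¹ := by
        rw [commutatorElement_def]; group
    _ = u * z * u⁻¹ * z⁻¹ := by rw [h]; group
    _ = ⁅u, z⁆ := (commutatorElement_def u z).symm

lemma key_identity {Q : Type*} [Group Q] (c u d v : Q) (h1 : ∀ y, Commute c y)
    (h2 : Commute u d) (h3 : Commute d ⁅u, v⁆) : ⁅c * u, d * v⁆ = ⁅u, v⁆ := by
  rw [comm_cancel_left c u _ h1]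
  calc ⁅u, d * v⁆ = u * d * (v * u⁻¹ * v⁻¹ * d⁻¹) := by rw [commutatorElement_def]; group
    _ = d * u * (v * u⁻¹ * v⁻¹ * d⁻¹) := by rw [h2.eq]
    _ = d * ⁅u, v⁆ * d⁻¹ := by rw [commutatorElement_def]; group
    _ = ⁅u, v⁆ := by rw [h3.eq]; group

lemma approx {G : Type u} [Group G] (h : G →* G)
    (hh : ∀ x, h x * x⁻¹ ∈ LCS G 1) :
    ∀ j, ∀ z ∈ LCS G j, h z * z⁻¹ ∈ LCS G (j + 1) := by
  intro j
  induction j with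
  | zero => intro z _; exact hh z
  | succ j ih =>
    have hnorm : (LCS G (j + 2)).Normal := inferInstance
    have hmem : ∀ w : G, h w * w⁻¹ ∈ LCS G (j + 2) ↔
        ((h w : G ⧸ LCS G (j + 2))) = (w : G ⧸ LCS G (j + 2)) := by
      intro w
      rw [QuotientGroup.eq_iff_div_mem, div_eq_mul_inv]
    intro z hz
    have hz' : z ∈ Subgroup.closure
        { g | ∃ g₁ ∈ LCS G j, ∃ g₂ ∈ (⊤ : Subgroup G), ⁅g₁, g₂⁆ = g } := by
      rw [← Subgroup.commutator_def, ← lcs_succ_def]; exact hz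
    clear hz
    induction hz' using Subgroup.closure_induction with
    | mem z hzmem =>
      obtain ⟨u, hu, v, -, rfl⟩ := hzmem
      rw [hmem]
      have mkc : ∀ a b : G, ((⁅a, b⁆ : G) : G ⧸ LCS G (j + 2)) = ⁅(a : G ⧸ LCS G (j + 2)), (b : G ⧸ LCS G (j + 2))⁆ := fun a b =>
        map_commutatorElement (QuotientGroup.mk' (LCS G (j + 2))) a b
      have mk1 : ∀ a : G, ((a : G ⧸ LCS G (j + 2)) = 1) ↔ a ∈ LCS G (j + 2) := fun a => QuotientGroup.eq_one_iff a
      have hcK : h u * u⁻¹ ∈ LCS G (j + 1) := ih u hu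
      have hdK : h v * v⁻¹ ∈ LCS G 1 := hh v
      have huv : ⁅u, v⁆ ∈ LCS G (j + 1) := by
        rw [lcs_succ_def]
        exact Subgroup.commutator_mem_commutator hu (Subgroup.mem_top v)
      calc ((h ⁅u, v⁆ : G) : G ⧸ LCS G (j + 2)) = ↑(⁅h u, h v⁆ : G) := by
            rw [map_commutatorElement]
        _ = ⁅((h u * u⁻¹ : G) : G ⧸ LCS G (j + 2)) * u,
              ((h v * v⁻¹ : G) : G ⧸ LCS G (j + 2)) * v⁆ := by
            rw [mkc, ← QuotientGroup.mk_mul, ← QuotientGroup.mk_mul, inv_mul_cancel_right,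
              inv_mul_cancel_right]
        _ = ⁅((u : G) : G ⧸ LCS G (j + 2)), ((v : G) : G ⧸ LCS G (j + 2))⁆ := by
            apply key_identity
            · intro y
              obtain ⟨w, rfl⟩ := QuotientGroup.mk_surjective y
              rw [← commutatorElement_eq_one_iff_commute, ← mkc, mk1, lcs_succ_def]
              exact Subgroup.commutator_mem_commutator hcK (mem_top w)
            · rw [← commutatorElement_eq_one_iff_commute, ← mkc, mk1]
              exact lcs_comm j 1 (Subgroup.commutator_mem_commutator hu hdK)
            · rw [← mkc, ← commutatorElement_eq_one_iff_commute, ← mkc, mk1]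
              refine (Subgroup.lowerCentralSeries_antitone (S := ⊤)) (show j + 2 ≤ 1 + (j + 1) + 1 by omega) ?_
              exact lcs_comm 1 (j + 1) (Subgroup.commutator_mem_commutator hdK huv)
        _ = ↑(⁅u, v⁆ : G) := (mkc u v).symm
    | one => simpa using Subgroup.one_mem _
    | mul a b _ _ hpa hpb =>
      have key : h (a * b) * (a * b)⁻¹ = (h a * a⁻¹) * (a * (h b * b⁻¹) * a⁻¹) := by
        rw [map_mul]; group
      rw [key]
      exact Subgroup.mul_mem _ hpa (hnorm.conj_mem _ hpb a)
    | inv a _ hpa =>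
      have key : h a⁻¹ * (a⁻¹)⁻¹ = a⁻¹ * (h a * a⁻¹)⁻¹ * (a⁻¹)⁻¹ := by rw [map_inv]; group
      rw [key]
      exact hnorm.conj_mem _ (Subgroup.inv_mem _ hpa) a⁻¹

lemma approx_preimage {G : Type u} [Group G] (h : G →* G)
    (hh : ∀ x, h x * x⁻¹ ∈ LCS G 1) (k : ℕ) :
    ∀ x : G, h x ∈ LCS G k → x ∈ LCS G k := by
  induction k with
  | zero => intro x _; exact Subgroup.mem_top x
  | succ k ih =>
    intro x hx
    have hxk : x ∈ LCS G k :=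
      ih x ((Subgroup.lowerCentralSeries_antitone (S := ⊤)) (Nat.le_succ k) hx)
    have h1 : h x * x⁻¹ ∈ LCS G (k + 1) := approx h hh k x hxk
    have : x = (h x * x⁻¹)⁻¹ * h x := by group
    rw [this]
    exact Subgroup.mul_mem _ (Subgroup.inv_mem _ h1) hx

section hopf2
variable {n k : ℕ}
local notation "F" => FreeGroup (Fin n)

lemma hopf_main (hk : 1 ≤ k)
    (e : (FreeGroup (Fin n) ⧸ LCS (FreeGroup (Fin n)) k) →*
      (FreeGroup (Fin n) ⧸ LCS (FreeGroup (Fin n)) k))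
    (he : Surjective e) : Injective e := by
  classical
  set q : F →* F ⧸ LCS F k := QuotientGroup.mk' (LCS F k) with hq
  have hqs : Surjective q := QuotientGroup.mk'_surjective _
  set f : F →* F := FreeGroup.lift (fun i => Classical.choose (hqs (e (q (FreeGroup.of i))))) with hf
  have hqf : q.comp f = e.comp q := by
    apply FreeGroup.ext_hom
    intro i
    simp only [MonoidHom.comp_apply, hf, FreeGroup.lift_apply_of]
    exact Classical.choose_spec (hqs (e (q (FreeGroup.of i))))
  have hqf' : ∀ x, q (f x) = e (q x) := fun x => DFunLike.congr_fun hqf x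
  have habs : Surjective (Abelianization.of : F →* Abelianization F) :=
    fun y => QuotientGroup.mk_surjective y
  haveI hFG : Group.FG F := Group.fg_iff.mpr
    ⟨Set.range FreeGroup.of, FreeGroup.closure_range_of _, Set.finite_range _⟩
  haveI : Group.FG (Abelianization F) := Group.fg_of_surjective habs
  -- key: elements congruent mod γ_k are identified in the abelianization
  have hcomm : ∀ x y : F, x * y⁻¹ ∈ LCS F k →
      Abelianization.of x = Abelianization.of y := by
    intro x y hxy
    have h1 : x * y⁻¹ ∈ commutator F := by
      rw [← Subgroup.top_lowerCentralSeries_one]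
      exact (Subgroup.lowerCentralSeries_antitone (S := ⊤)) hk hxy
    have h2 : Abelianization.of (x * y⁻¹) = 1 :=
      Abelianization.commutator_subset_ker Abelianization.of h1
    rw [map_mul, map_inv, mul_inv_eq_one] at h2
    exact h2
  -- the induced endomorphism of the abelianization is surjective
  have hfab : Surjective (Abelianization.map f) := by
    intro y
    obtain ⟨x, rfl⟩ := habs y
    obtain ⟨w, hw⟩ := he (q x)
    obtain ⟨y', rfl⟩ := hqs w
    refine ⟨Abelianization.of y', ?_⟩
    rw [Abelianization.map_of]
    apply hcomm
    have : q (f y' * x⁻¹) = 1 := by rw [map_mul, map_inv, hqf', hw, mul_inv_cancel]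
    rwa [← MonoidHom.mem_ker, hq, QuotientGroup.ker_mk'] at this
  -- hence injective, since the abelianization is a Noetherian ℤ-module
  haveI : Module.Finite ℤ (Additive (Abelianization F)) := Module.Finite.iff_addGroup_fg.mpr
    (AddGroup.fg_of_group_fg (G := Abelianization F))
  have hfabinj : Injective (Abelianization.map f) := by
    have := OrzechProperty.injective_of_surjective_endomorphism
      (R := ℤ) (MonoidHom.toAdditive (Abelianization.map f)).toIntLinearMap hfab
    exact this
  set E := MulEquiv.ofBijective (Abelianization.map f) ⟨hfabinj, hfab⟩ with hE
  set g : F →* F := FreeGroup.lift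
    (fun i => Classical.choose (habs (E.symm (Abelianization.of (FreeGroup.of i))))) with hg
  have hgab : (Abelianization.of : F →* Abelianization F).comp g
      = E.symm.toMonoidHom.comp (Abelianization.of : F →* Abelianization F) := by
    apply FreeGroup.ext_hom
    intro i
    simp only [MonoidHom.comp_apply, hg, FreeGroup.lift_apply_of, MulEquiv.coe_toMonoidHom]
    exact Classical.choose_spec (habs (E.symm (Abelianization.of (FreeGroup.of i))))
  have hgab' : ∀ x, Abelianization.of (g x) = E.symm (Abelianization.of x) :=
    fun x => DFunLike.congr_fun hgab x
  set h : F →* F := g.comp f with hh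
  have hhid : ∀ x : F, h x * x⁻¹ ∈ LCS F 1 := by
    intro x
    have h1 : Abelianization.of (h x) = Abelianization.of x := by
      rw [hh, MonoidHom.comp_apply, hgab', ← Abelianization.map_of f x]
      exact E.symm_apply_apply (Abelianization.of x)
    have h2 : Abelianization.of (h x * x⁻¹) = 1 := by
      rw [map_mul, map_inv, h1, mul_inv_cancel]
    rw [Subgroup.top_lowerCentralSeries_one]
    exact (QuotientGroup.eq_one_iff _).mp h2
  rw [← MonoidHom.ker_eq_bot_iff, eq_bot_iff]
  intro u hu
  obtain ⟨x, rfl⟩ := hqs u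
  have hfx : f x ∈ LCS F k := by
    have : q (f x) = 1 := by rw [hqf']; exact hu
    rwa [← MonoidHom.mem_ker, hq, QuotientGroup.ker_mk'] at this
  have hhx : h x ∈ LCS F k := by
    have := Subgroup.lowerCentralSeries.map g k ⟨f x, hfx, rfl⟩
    exact this
  have hx : x ∈ LCS F k := approx_preimage h hhid k x hhx
  have : q x = 1 := by rw [← MonoidHom.mem_ker, hq, QuotientGroup.ker_mk'] at *; exact hx
  simpa using this

end hopf2

end Aux

section Aux2
open Function Subgroup

lemma abelianRank_congr {G H : Type*} [Group G] [Group H]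
    (e : Abelianization G ≃* Abelianization H) : abelianRank G = abelianRank H := by
  classical
  unfold abelianRank
  congr 1
  ext m
  constructor
  · rintro ⟨s, rfl, hs⟩
    refine ⟨s.image e, ?_, ?_⟩
    · rw [Finset.card_image_of_injective _ e.injective]
    · rw [Finset.coe_image]
      have hcoe : ⇑e '' ↑s = ⇑e.toMonoidHom '' ↑s := rfl
      rw [hcoe, ← MonoidHom.map_closure, hs]
      exact Subgroup.map_top_of_surjective _ e.surjective
  · rintro ⟨s, rfl, hs⟩
    refine ⟨s.image e.symm, ?_, ?_⟩
    · rw [Finset.card_image_of_injective _ e.symm.injective]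
    · rw [Finset.coe_image]
      have hcoe : ⇑e.symm '' ↑s = ⇑e.symm.toMonoidHom '' ↑s := rfl
      rw [hcoe, ← MonoidHom.map_closure, hs]
      exact Subgroup.map_top_of_surjective _ e.symm.surjective

lemma abelianization_equiv_of_quot1 {G H : Type*} [Group G] [Group H]
    (e : (G ⧸ LCS G 1) ≃* (H ⧸ LCS H 1)) :
    Nonempty (Abelianization G ≃* Abelianization H) := by
  have h1 : commutator G = LCS G 1 := (Subgroup.top_lowerCentralSeries_one).symm
  have h2 : LCS H 1 = commutator H := Subgroup.top_lowerCentralSeries_one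
  exact ⟨((QuotientGroup.quotientMulEquivOfEq h1).trans e).trans
    (QuotientGroup.quotientMulEquivOfEq h2)⟩

lemma abelianRank_freeGroup (n : ℕ) : abelianRank (FreeGroup (Fin n)) = n := by
  classical
  set F := FreeGroup (Fin n)
  -- the free abelian group of rank n, as a ℤ-module
  have L : Additive (Abelianization F) ≃ₗ[ℤ] (Fin n → ℤ) :=
    (show FreeAbelianGroup (Fin n) ≃+ (Fin n →₀ ℤ) from
      FreeAbelianGroup.equivFinsupp (Fin n)).toIntLinearEquiv.trans
      (Finsupp.linearEquivFunOnFinite ℤ ℤ (Fin n))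
  have hub : ∀ m ∈ {m : ℕ | ∃ s : Finset (Abelianization F),
      s.card = m ∧ Subgroup.closure (s : Set (Abelianization F)) = ⊤}, n ≤ m := by
    rintro m ⟨s, rfl, hs⟩
    set v : s → Additive (Abelianization F) := fun i => Additive.ofMul i.val with hv
    have hspan : Submodule.span ℤ (Set.range v) = ⊤ := by
      rw [eq_top_iff]
      rintro x -
      have main : ∀ y : Abelianization F, y ∈ Subgroup.closure (s : Set (Abelianization F)) →
          Additive.ofMul y ∈ Submodule.span ℤ (Set.range v) := by
        intro y hy
        induction hy using Subgroup.closure_induction with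
        | mem z hz => exact Submodule.subset_span ⟨⟨z, hz⟩, rfl⟩
        | one => exact Submodule.zero_mem _
        | mul a b _ _ ha hb => exact Submodule.add_mem _ ha hb
        | inv a _ ha => exact Submodule.neg_mem _ ha
      exact main x.toMul (by rw [hs]; trivial)
    have hsurj : Surjective (L.toLinearMap ∘ₗ Fintype.linearCombination ℤ v) := by
      rw [← LinearMap.range_eq_top, LinearMap.range_comp, Fintype.range_linearCombination,
        hspan, Submodule.map_top, LinearEquiv.range]
    simpa [Fintype.card_coe] using card_le_of_surjective ℤ _ hsurj
  set s₀ : Finset (Abelianization F) :=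
    Finset.image (fun i => Abelianization.of (FreeGroup.of i)) Finset.univ with hs₀
  have hmem : s₀.card ∈ {m : ℕ | ∃ s : Finset (Abelianization F),
      s.card = m ∧ Subgroup.closure (s : Set (Abelianization F)) = ⊤} := by
    refine ⟨s₀, rfl, ?_⟩
    have hfact : (fun i : Fin n => Abelianization.of (FreeGroup.of i))
        = (Abelianization.of : F →* Abelianization F) ∘ FreeGroup.of := rfl
    rw [hs₀, Finset.coe_image, Finset.coe_univ, Set.image_univ, hfact, Set.range_comp,
      ← MonoidHom.map_closure, FreeGroup.closure_range_of]
    exact Subgroup.map_top_of_surjective _ (fun y => QuotientGroup.mk_surjective y)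
  have hcard : s₀.card ≤ n := le_trans (Finset.card_image_le) (by simp)
  exact le_antisymm (le_trans (Nat.sInf_le hmem) hcard)
    (le_csInf ⟨s₀.card, hmem⟩ hub)

end Aux2

open Function Subgroup in
/-- If `P` is parafree and `P ⧸ N` is parafree of the same abelian rank, then `N` is
trivial. -/
theorem parafree_quotient_same_rank_eq_bot
    (P : Type*) [Group P] (N : Subgroup P) [N.Normal]
    (hP : IsParafree P) (hQ : IsParafree (P ⧸ N))
    (hrank : abelianRank (P ⧸ N) = abelianRank P) :
    N = ⊥ := by
  obtain ⟨-, hPres, n, φ⟩ := hP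
  obtain ⟨-, -, m, ψ⟩ := hQ
  -- the two free groups have the same rank
  have hn : abelianRank P = n := by
    obtain ⟨e⟩ := abelianization_equiv_of_quot1 (φ 1).some
    rw [abelianRank_congr e, abelianRank_freeGroup]
  have hm : abelianRank (P ⧸ N) = m := by
    obtain ⟨e⟩ := abelianization_equiv_of_quot1 (ψ 1).some
    rw [abelianRank_congr e, abelianRank_freeGroup]
  have hmn : m = n := by omega
  subst hmn
  -- N is contained in every term of the lower central series of P
  have key : ∀ k : ℕ, N ≤ LCS P k := by
    intro k
    match k with
    | 0 => exact le_top
    | (k + 1) =>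
      set k' := k + 1
      have hcl : LCS P k' ≤
          Subgroup.comap (QuotientGroup.mk' N) (LCS (P ⧸ N) k') := by
        rw [← Subgroup.map_le_iff_le_comap]
        exact Subgroup.lowerCentralSeries.map _ k'
      set πb : (P ⧸ LCS P k') →* ((P ⧸ N) ⧸ LCS (P ⧸ N) k') :=
        QuotientGroup.map _ _ (QuotientGroup.mk' N) hcl with hπb
      have hπbs : Surjective πb := by
        intro y
        obtain ⟨q, rfl⟩ := QuotientGroup.mk_surjective y
        obtain ⟨p, rfl⟩ := QuotientGroup.mk_surjective q
        exact ⟨QuotientGroup.mk p, rfl⟩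
      set e := ((ψ k').some.toMonoidHom.comp πb).comp (φ k').some.symm.toMonoidHom with he
      have hecoe : ⇑e = ⇑(ψ k').some ∘ ⇑πb ∘ ⇑(φ k').some.symm := rfl
      have hes : Surjective e := by
        rw [hecoe]
        exact ((ψ k').some.surjective.comp hπbs).comp (φ k').some.symm.surjective
      have hei : Injective e := hopf_main (Nat.le_add_left 1 k) e hes
      have hπbi : Injective πb := by
        have : ⇑πb = (⇑(ψ k').some.symm ∘ ⇑e) ∘ ⇑(φ k').some := by
          funext x
          simp [he]
        rw [this]
        exact (((ψ k').some.symm.injective.comp hei).comp (φ k').some.injective)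
      intro x hx
      have h1 : πb (QuotientGroup.mk x) = 1 := by
        have h2 : πb (QuotientGroup.mk x) = QuotientGroup.mk (QuotientGroup.mk' N x) := rfl
        have h3 : QuotientGroup.mk' N x = (1 : P ⧸ N) := (QuotientGroup.eq_one_iff x).mpr hx
        rw [h2, h3]
        rfl
      have h4 : QuotientGroup.mk x = (1 : P ⧸ LCS P k') := by
        apply hπbi
        rw [h1, map_one]
      exact (QuotientGroup.eq_one_iff x).mp h4
  have : N ≤ ⨅ k : ℕ, LCS P k := le_iInf key
  rw [hPres] at this
  exact le_bot_iff.mp this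
end

section
/- Let k be a commutative ring and let φ : G̃ → G be a surjective group homomorphism with kernel K. Regard the group algebra kG as a kG̃-module via φ. If the natural homomorphism of kG-modules kI_{G̃} ⊗_{kG̃} kG → kI_G, defined by a ⊗ b ↦ φ(a)·b (where φ also denotes the induced map kG̃ → kG on group algebras), is an isomorphism, then k ⊗_ℤ (K/[K,K]) = 0. -/
/-- The augmentation homomorphism `kG → k`, sending every group element to `1`. -/
noncomputable def augHom (k : Type*) [CommRing k] (G : Type*) [Group G] :
    MonoidAlgebra k G →ₐ[k] k :=
  MonoidAlgebra.lift k k G 1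

/-- The augmentation ideal `kI_G`: the kernel of the augmentation map `kG → k`. -/
noncomputable def augIdeal (k : Type*) [CommRing k] (G : Type*) [Group G] :
    Ideal (MonoidAlgebra k G) :=
  RingHom.ker (augHom k G)

/-- `kI_Λ^Γ` for `Λ` (the image of) a subgroup given by a subset `s` of `Γ`: the left
ideal of `kΓ` generated by the elements `λ - 1` for `λ ∈ s`. -/
noncomputable def relAugIdeal (k : Type*) [CommRing k] {G : Type*} [Group G] (s : Set G) :
    Ideal (MonoidAlgebra k G) :=
  Ideal.span ((fun g => (MonoidAlgebra.of k G g : MonoidAlgebra k G) - 1) '' s)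

section Aux

variable {Gt G : Type} [Group Gt] [Group G] (φ : Gt →* G) (hφ : Function.Surjective φ)

open Classical in
/-- A set-theoretic section of `φ` sending `1` to `1`. -/
noncomputable def mySec : G → Gt :=
  fun x => if x = 1 then 1 else (hφ x).choose

lemma mySec_spec (x : G) : φ (mySec φ hφ x) = x := by
  unfold mySec
  split
  · simp [*]
  · exact (hφ x).choose_spec

lemma mySec_one : mySec φ hφ 1 = 1 := if_pos rfl

lemma abel_mk_congr {H : Type*} [Group H] (S : Subgroup H) (v w : H) (pv : v ∈ S) (pw : w ∈ S)
    (h : v = w) : Abelianization.of (⟨v, pv⟩ : S) = Abelianization.of (⟨w, pw⟩ : S) := by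
  subst h; rfl

lemma abel_mk_mul {H : Type*} [Group H] (S : Subgroup H) (v w u : H) (pv : v ∈ S) (pw : w ∈ S)
    (pu : u ∈ S) (h : u = v * w) :
    Abelianization.of (⟨u, pu⟩ : S) =
      Abelianization.of (⟨v, pv⟩ : S) * Abelianization.of (⟨w, pw⟩ : S) := by
  have : (⟨u, pu⟩ : S) = ⟨v, pv⟩ * ⟨w, pw⟩ := Subtype.ext h
  rw [this, map_mul]

/-- For `g : G̃`, the class of `s(φ g)⁻¹ g ∈ K` in `k ⊗ K_ab`'s second factor. -/
noncomputable def myMu (g : Gt) : Additive (Abelianization ↥φ.ker) :=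
  Additive.ofMul (Abelianization.of ⟨(mySec φ hφ (φ g))⁻¹ * g, by
    simp [MonoidHom.mem_ker, map_mul, mySec_spec φ hφ]⟩)

lemma myMu_sec (x : G) : myMu φ hφ (mySec φ hφ x) = 0 := by
  unfold myMu
  rw [show Additive.ofMul (α := Abelianization ↥φ.ker) = Additive.ofMul from rfl]
  rw [ofMul_eq_zero]
  have h : (mySec φ hφ (φ (mySec φ hφ x)))⁻¹ * mySec φ hφ x = 1 := by
    rw [mySec_spec φ hφ]; exact inv_mul_cancel _
  have : (⟨(mySec φ hφ (φ (mySec φ hφ x)))⁻¹ * mySec φ hφ x, by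
      simp [MonoidHom.mem_ker, map_mul, mySec_spec φ hφ]⟩ : φ.ker) = 1 := Subtype.ext h
  rw [this, map_one]

lemma myMu_one : myMu φ hφ 1 = 0 := by
  have := myMu_sec φ hφ 1
  rwa [mySec_one] at this

lemma myMu_mul (h g : Gt) :
    myMu φ hφ (h * g) = myMu φ hφ (h * mySec φ hφ (φ g)) + myMu φ hφ g := by
  unfold myMu
  rw [← ofMul_mul]
  refine congrArg Additive.ofMul (abel_mk_mul _ _ _ _ _ _ _ ?_)
  have h1 : φ (h * mySec φ hφ (φ g)) = φ (h * g) := by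
    simp [map_mul, mySec_spec φ hφ]
  rw [h1]
  group

end Aux

section Lam

variable (k : Type) [CommRing k] {Gt G : Type} [Group Gt] [Group G]
variable (φ : Gt →* G) (hφ : Function.Surjective φ)

/-- The linear map `kG̃ → k ⊗ K_ab`, `g ↦ 1 ⊗ [s(φ g)⁻¹ g]`. -/
noncomputable def myLam :
    MonoidAlgebra k Gt →+ TensorProduct ℤ k (Additive (Abelianization ↥φ.ker)) :=
  AddMonoidHom.comp (Finsupp.liftAddHom (fun g =>
    { toFun := fun r => r ⊗ₜ[ℤ] myMu φ hφ g
      map_zero' := TensorProduct.zero_tmul _ _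
      map_add' := fun r r' => TensorProduct.add_tmul r r' _ }))
    MonoidAlgebra.coeffAddEquiv.toAddMonoidHom

lemma myLam_single (g : Gt) (r : k) :
    myLam k φ hφ (MonoidAlgebra.single g r) = r ⊗ₜ[ℤ] myMu φ hφ g :=
  Finsupp.liftAddHom_apply_single _ _ _

/-- The `k`-linear section `kG → kG̃` induced by `mySec`. -/
noncomputable def mySig : MonoidAlgebra k G →+ MonoidAlgebra k Gt :=
  { toFun := MonoidAlgebra.mapDomain (mySec φ hφ)
    map_zero' := MonoidAlgebra.mapDomain_zero _
    map_add' := MonoidAlgebra.mapDomain_add _ }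

lemma mySig_single (x : G) (c : k) :
    mySig k φ hφ (MonoidAlgebra.single x c) = MonoidAlgebra.single (mySec φ hφ x) c :=
  MonoidAlgebra.mapDomain_single

end Lam

section Pi

variable (k : Type) [CommRing k] {Gt G : Type} [Group Gt] [Group G]
variable (φ : Gt →* G) (hφ : Function.Surjective φ)
variable (π : MonoidAlgebra k Gt →ₐ[k] MonoidAlgebra k G)
lemma pi_single (hπ : ∀ g : Gt, π (MonoidAlgebra.of k Gt g) = MonoidAlgebra.of k G (φ g))
    (g : Gt) (c : k) :
    π (MonoidAlgebra.single g c) = MonoidAlgebra.single (φ g) c := by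
  have h1 : (MonoidAlgebra.single g c : MonoidAlgebra k Gt) = c • MonoidAlgebra.of k Gt g := by
    rw [MonoidAlgebra.of_apply, MonoidAlgebra.smul_single', mul_one]
  rw [h1, map_smul, hπ g, MonoidAlgebra.of_apply, MonoidAlgebra.smul_single', mul_one]

lemma pi_sigma (hπ : ∀ g : Gt, π (MonoidAlgebra.of k Gt g) = MonoidAlgebra.of k G (φ g))
    (b : MonoidAlgebra k G) :
    π (mySig k φ hφ b) = b := by
  induction b using MonoidAlgebra.induction_linear with
  | zero => simp
  | add f g hf hg => rw [map_add, map_add, hf, hg]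
  | single g c => rw [mySig_single, pi_single k φ π hπ, mySec_spec φ hφ]

end Pi

section Key

variable (k : Type) [CommRing k] {Gt G : Type} [Group Gt] [Group G]
variable (φ : Gt →* G) (hφ : Function.Surjective φ)
variable (π : MonoidAlgebra k Gt →ₐ[k] MonoidAlgebra k G)

lemma key_gen (hπ : ∀ g : Gt, π (MonoidAlgebra.of k Gt g) = MonoidAlgebra.of k G (φ g))
    (h : Gt) (r : k) (z : MonoidAlgebra k Gt) :
    myLam k φ hφ ((MonoidAlgebra.single h r - MonoidAlgebra.single 1 r) * z)
      = myLam k φ hφ ((MonoidAlgebra.single h r - MonoidAlgebra.single 1 r)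
          * mySig k φ hφ (π z)) := by
  induction z using MonoidAlgebra.induction_linear with
  | zero => simp
  | add f g hf hg =>
      rw [mul_add, map_add, hf, hg, map_add, map_add, mul_add, map_add]
  | single g c =>
      rw [show π (MonoidAlgebra.single g c) = MonoidAlgebra.single (φ g) c from pi_single k φ π hπ g c,
        mySig_single]
      rw [sub_mul, sub_mul, map_sub, map_sub]
      rw [MonoidAlgebra.single_mul_single, MonoidAlgebra.single_mul_single,
        MonoidAlgebra.single_mul_single, MonoidAlgebra.single_mul_single]
      rw [one_mul, one_mul]
      rw [myLam_single, myLam_single, myLam_single, myLam_single]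
      rw [myMu_mul φ hφ h g, myMu_sec φ hφ, TensorProduct.tmul_add, TensorProduct.tmul_zero]
      abel

lemma key (hπ : ∀ g : Gt, π (MonoidAlgebra.of k Gt g) = MonoidAlgebra.of k G (φ g))
    (a : MonoidAlgebra k Gt) (ha : a ∈ augIdeal k Gt) (z : MonoidAlgebra k Gt) :
    myLam k φ hφ (a * z)
      = myLam k φ hφ (a * mySig k φ hφ (π z)) := by
  have haug : (a.coeff.sum fun _ r => r) = 0 := by
    rw [augIdeal, RingHom.mem_ker] at ha
    have h2 : augHom k Gt a = a.coeff.sum fun _ r => r := by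
      rw [augHom, MonoidAlgebra.lift_apply]
      simp
    rw [← h2]
    exact ha
  have h0 : (a.coeff.sum fun _ r => MonoidAlgebra.single (1 : Gt) r)
      = MonoidAlgebra.single (1 : Gt) (a.coeff.sum fun _ r => r) :=
    (map_finsuppSum (MonoidAlgebra.singleAddHom (1 : Gt)) a.coeff (fun _ r => r)).symm
  have hsum : a = a.coeff.sum fun h r => MonoidAlgebra.single h r - MonoidAlgebra.single 1 r := by
    rw [Finsupp.sum_sub, h0, haug]
    rw [show MonoidAlgebra.single (1 : Gt) (0 : k) = 0 from MonoidAlgebra.single_zero 1, sub_zero]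
    exact (congrArg MonoidAlgebra.ofCoeff (Finsupp.sum_single a.coeff)).symm.trans
      (MonoidAlgebra.ofCoeff_finsuppSum _ _)
  conv_lhs => rw [hsum]
  conv_rhs => rw [hsum]
  rw [Finsupp.sum_mul, Finsupp.sum_mul, map_finsuppSum, map_finsuppSum]
  exact Finsupp.sum_congr fun h _ => key_gen k φ hφ π hπ h (a.coeff h) z

end Key

section Final

variable (k : Type) [CommRing k] {Gt G : Type} [Group Gt] [Group G]
variable (φ : Gt →* G) (hφ : Function.Surjective φ)

lemma myMu_ker (κ : φ.ker) :
    myMu φ hφ (κ : Gt) = Additive.ofMul (Abelianization.of κ) := by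
  unfold myMu
  congr 1
  have hv : (mySec φ hφ (φ (κ : Gt)))⁻¹ * (κ : Gt) = (κ : Gt) := by
    rw [show φ (κ : Gt) = 1 from κ.2, mySec_one]
    simp
  exact congrArg _ (Subtype.ext hv)

lemma aug_single (g : Gt) (r : k) : augHom k Gt (MonoidAlgebra.single g r) = r := by
  rw [augHom, MonoidAlgebra.lift_single]
  simp

end Final


/-- Let `φ : G̃ → G` be a surjective group homomorphism with kernel `K`, and let
`π : kG̃ → kG` be the induced map of group algebras.  If the natural homomorphism
`kI_{G̃} ⊗_{kG̃} kG → kI_G`, `a ⊗ b ↦ φ(a)·b`, is an isomorphism — expressed here via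
the universal property: the canonical `kG̃`-balanced biadditive map
`kI_{G̃} × kG → kI_G`, `(a, b) ↦ π(a)·b`, is universal among such maps — then
`k ⊗_ℤ K_{ab} = 0`, i.e. the tensor product is trivial. -/
theorem tensor_augmentation_iso_implies_kernel_abelianization_trivial
    (k : Type) [CommRing k] (Gt G : Type) [Group Gt] [Group G]
    (φ : Gt →* G) (hφ : Function.Surjective φ)
    (π : MonoidAlgebra k Gt →ₐ[k] MonoidAlgebra k G)
    (hπ : ∀ g : Gt, π (MonoidAlgebra.of k Gt g) = MonoidAlgebra.of k G (φ g))
    (huniv : ∀ (Q : Type) (_ : AddCommGroup Q)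
      (β : ↥(augIdeal k Gt) → MonoidAlgebra k G → Q),
      (∀ a a' b, β (a + a') b = β a b + β a' b) →
      (∀ a b b', β a (b + b') = β a b + β a b') →
      (∀ (a : ↥(augIdeal k Gt)) (r : MonoidAlgebra k Gt) (b : MonoidAlgebra k G)
        (har : (a : MonoidAlgebra k Gt) * r ∈ augIdeal k Gt),
          β ⟨(a : MonoidAlgebra k Gt) * r, har⟩ b = β a (π r * b)) →
      ∃! h : ↥(augIdeal k G) →+ Q,
        ∀ (a : ↥(augIdeal k Gt)) (b : MonoidAlgebra k G)
          (hx : π (a : MonoidAlgebra k Gt) * b ∈ augIdeal k G),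
            h ⟨π (a : MonoidAlgebra k Gt) * b, hx⟩ = β a b) :
    Subsingleton (TensorProduct ℤ k (Additive (Abelianization ↥φ.ker))) := by
  obtain ⟨h, hh, -⟩ := huniv (TensorProduct ℤ k (Additive (Abelianization ↥φ.ker)))
    inferInstance
    (fun a b => myLam k φ hφ ((a : MonoidAlgebra k Gt) * mySig k φ hφ b))
    (by
      intro a a' b
      show myLam k φ hφ (((a : MonoidAlgebra k Gt) + (a' : MonoidAlgebra k Gt))
          * mySig k φ hφ b) = _
      rw [add_mul, map_add])
    (by
      intro a b b'
      show myLam k φ hφ ((a : MonoidAlgebra k Gt) * mySig k φ hφ (b + b')) = _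
      rw [map_add, mul_add, map_add])
    (by
      intro a r b har
      show myLam k φ hφ (((a : MonoidAlgebra k Gt) * r) * mySig k φ hφ b)
        = myLam k φ hφ ((a : MonoidAlgebra k Gt) * mySig k φ hφ (π r * b))
      rw [mul_assoc, key k φ hφ π hπ (a : MonoidAlgebra k Gt) a.2 (r * mySig k φ hφ b),
        show π (r * mySig k φ hφ b) = π r * b from by
          rw [map_mul, pi_sigma k φ hφ π hπ]])
  have hz : ∀ (r : k) (κ : φ.ker),
      r ⊗ₜ[ℤ] (Additive.ofMul (Abelianization.of κ))
        = (0 : TensorProduct ℤ k (Additive (Abelianization ↥φ.ker))) := by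
    intro r κ
    set a0 : MonoidAlgebra k Gt :=
      MonoidAlgebra.single (κ : Gt) r - MonoidAlgebra.single 1 r with ha0
    have ha : a0 ∈ augIdeal k Gt := by
      rw [augIdeal, RingHom.mem_ker]
      show augHom k Gt a0 = 0
      rw [ha0, map_sub, aug_single, aug_single, sub_self]
    have h0 : π a0 * 1 = 0 := by
      rw [ha0, map_sub, pi_single k φ π hπ, pi_single k φ π hπ,
        show φ (κ : Gt) = 1 from κ.2, map_one φ, sub_self, zero_mul]
    have hx : π a0 * 1 ∈ augIdeal k G := by rw [h0]; exact zero_mem _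
    have he : (⟨π a0 * 1, hx⟩ : ↥(augIdeal k G)) = 0 := Subtype.ext h0
    have := hh ⟨a0, ha⟩ 1 hx
    rw [he, map_zero] at this
    -- this : 0 = myLam (a0 * mySig 1)
    have hsig1 : mySig k φ hφ (1 : MonoidAlgebra k G) = 1 := by
      rw [MonoidAlgebra.one_def, mySig_single, mySec_one, ← MonoidAlgebra.one_def]
    rw [show ((⟨a0, ha⟩ : ↥(augIdeal k Gt)) : MonoidAlgebra k Gt) = a0 from rfl] at this
    rw [hsig1, mul_one, ha0, map_sub, myLam_single, myLam_single, myMu_one,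
      TensorProduct.tmul_zero, sub_zero, myMu_ker] at this
    exact this.symm
  refine subsingleton_of_forall_eq 0 fun z => ?_
  induction z using TensorProduct.induction_on with
  | zero => rfl
  | tmul r m =>
      have hsurj : ∀ y : Abelianization ↥φ.ker, ∃ κ, Abelianization.of κ = y :=
        fun y => QuotientGroup.induction_on y fun κ => ⟨κ, rfl⟩
      obtain ⟨κ, hκ⟩ := hsurj (Additive.toMul m)
      have hm : Additive.ofMul (Abelianization.of κ) = m := by rw [hκ]; rfl
      rw [← hm]
      exact hz r κ
  | add x y hx hy => rw [hx, hy, add_zero]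
end

section
/- Let k be a commutative ring, let θ₁ : C → A and θ₂ : C → B be group homomorphisms, and let Γ = A *_C B be the induced amalgamated product, i.e. the quotient of the free product A * B by the normal closure of {θ₁(c)θ₂(c)⁻¹ : c ∈ C}; denote by A, B, C also their canonical images in Γ (under which θ₁(c) = θ₂(c) for all c ∈ C). Then the sequence of left kΓ-modules 0 → kI_C^Γ →α kI_A^Γ ⊕ kI_B^Γ →β kI_Γ → 0 is exact, where α(z) = (z, −z) for z ∈ kI_C^Γ (viewing kI_C^Γ as contained in both kI_A^Γ and kI_B^Γ) and β(x, y) = x + y. -/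
/-- The amalgamated product `A *_C B` of `θ₁ : C →* A` and `θ₂ : C →* B`: the quotient
of the free product `A ∗ B` by the normal closure of the elements
`inl (θ₁ c) * (inr (θ₂ c))⁻¹`, `c ∈ C`. -/
abbrev Amal (A B C : Type) [Group A] [Group B] [Group C]
    (θ₁ : C →* A) (θ₂ : C →* B) : Type :=
  Monoid.Coprod A B ⧸ Subgroup.normalClosure
    {x : Monoid.Coprod A B | ∃ c : C,
      x = Monoid.Coprod.inl (θ₁ c) * (Monoid.Coprod.inr (θ₂ c))⁻¹}

/-- The ideal `kI_A^Γ` of `kΓ` for `Γ = A *_C B`, where `A` denotes the canonical image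
of `A` in `Γ`. -/
noncomputable def amalIA (k : Type) [CommRing k] (A B C : Type) [Group A] [Group B]
    [Group C] (θ₁ : C →* A) (θ₂ : C →* B) : Ideal (MonoidAlgebra k (Amal A B C θ₁ θ₂)) :=
  relAugIdeal k
    (Set.range fun a : A => (QuotientGroup.mk (Monoid.Coprod.inl a) : Amal A B C θ₁ θ₂))

/-- The ideal `kI_B^Γ` of `kΓ` for `Γ = A *_C B`. -/
noncomputable def amalIB (k : Type) [CommRing k] (A B C : Type) [Group A] [Group B]
    [Group C] (θ₁ : C →* A) (θ₂ : C →* B) : Ideal (MonoidAlgebra k (Amal A B C θ₁ θ₂)) :=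
  relAugIdeal k
    (Set.range fun b : B => (QuotientGroup.mk (Monoid.Coprod.inr b) : Amal A B C θ₁ θ₂))

/-- The ideal `kI_C^Γ` of `kΓ` for `Γ = A *_C B`, where `C` denotes the canonical image
of `C` in `Γ` (the images of `θ₁` and `θ₂` agree in `Γ`). -/
noncomputable def amalIC (k : Type) [CommRing k] (A B C : Type) [Group A] [Group B]
    [Group C] (θ₁ : C →* A) (θ₂ : C →* B) : Ideal (MonoidAlgebra k (Amal A B C θ₁ θ₂)) :=
  relAugIdeal k
    (Set.range fun c : C =>
      (QuotientGroup.mk (Monoid.Coprod.inl (θ₁ c)) : Amal A B C θ₁ θ₂))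

set_option linter.unusedSectionVars false
open Finsupp

section Coset
variable {k : Type} [CommRing k] {Γ : Type} [Group Γ]

/-- `Finsupp.mapDomain` as a `k`-linear endomap of the monoid algebra. -/
noncomputable def tmap (f : Γ → Γ) : MonoidAlgebra k Γ →ₗ[k] MonoidAlgebra k Γ :=
  (MonoidAlgebra.coeffLinearEquiv k).symm.toLinearMap ∘ₗ Finsupp.lmapDomain k k f ∘ₗ
    (MonoidAlgebra.coeffLinearEquiv k).toLinearMap

/-- The `k`-linear map `kΓ → k[Γ/H]`. -/
noncomputable def qmap (H : Subgroup Γ) : MonoidAlgebra k Γ →ₗ[k] ((Γ ⧸ H) →₀ k) :=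
  Finsupp.lmapDomain k k QuotientGroup.mk ∘ₗ (MonoidAlgebra.coeffLinearEquiv k).toLinearMap

theorem tmap_single (f : Γ → Γ) (γ : Γ) (d : k) :
    tmap f (MonoidAlgebra.single γ d) = MonoidAlgebra.single (f γ) d :=
  congrArg MonoidAlgebra.ofCoeff Finsupp.mapDomain_single

theorem qmap_apply (H : Subgroup Γ) (x : MonoidAlgebra k Γ) :
    qmap H x = Finsupp.mapDomain (QuotientGroup.mk (s := H)) x.coeff := rfl

theorem qmap_single (H : Subgroup Γ) (γ : Γ) (d : k) :
    qmap H (MonoidAlgebra.single γ d : MonoidAlgebra k Γ)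
      = Finsupp.single (QuotientGroup.mk γ : Γ ⧸ H) d :=
  Finsupp.mapDomain_single

variable (H : Subgroup Γ)

theorem single_mul_eq_smul_tmap (g : Γ) (c : k) (x : MonoidAlgebra k Γ) :
    (MonoidAlgebra.single g c) * x = c • tmap (fun γ => g * γ) x := by
  induction x using MonoidAlgebra.induction_linear with
  | zero => simp
  | add f h hf hh => rw [mul_add, hf, hh, map_add, smul_add]
  | single γ d =>
    rw [MonoidAlgebra.single_mul_single, tmap_single, MonoidAlgebra.smul_single, smul_eq_mul]

theorem mem_relAugIdeal_of_qmap_eq_zero {x : MonoidAlgebra k Γ}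
    (hx : qmap H x = 0) :
    x ∈ relAugIdeal k (H : Set Γ) := by
  have key : ∀ y : MonoidAlgebra k Γ,
      y - tmap (fun γ => ((QuotientGroup.mk γ : Γ ⧸ H).out)) y ∈ relAugIdeal k (H : Set Γ) := by
    intro y
    induction y using MonoidAlgebra.induction_linear with
    | zero => simp
    | add f h hf hh =>
      rw [map_add, add_sub_add_comm]
      exact add_mem hf hh
    | single γ d =>
      rw [tmap_single]
      set ρ : Γ := (QuotientGroup.mk γ : Γ ⧸ H).out with hρ
      have hmem : ρ⁻¹ * γ ∈ H := by
        rw [← QuotientGroup.eq]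
        exact QuotientGroup.out_eq' _
      have heq : (MonoidAlgebra.single γ d : MonoidAlgebra k Γ) - MonoidAlgebra.single ρ d
          = (MonoidAlgebra.single ρ d) * ((MonoidAlgebra.of k Γ (ρ⁻¹ * γ)) - 1) := by
        rw [mul_sub, mul_one, MonoidAlgebra.of_apply, MonoidAlgebra.single_mul_single,
          mul_inv_cancel_left, mul_one]
      rw [heq]
      exact Ideal.mul_mem_left _ _ (Ideal.subset_span ⟨ρ⁻¹ * γ, hmem, rfl⟩)
  have h2 : tmap (fun γ => ((QuotientGroup.mk γ : Γ ⧸ H).out)) x = 0 := by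
    have hc : tmap (k := k) (fun γ => ((QuotientGroup.mk γ : Γ ⧸ H).out)) x
        = MonoidAlgebra.ofCoeff (Finsupp.mapDomain (Quotient.out : Γ ⧸ H → Γ) (qmap H x)) :=
          congrArg MonoidAlgebra.ofCoeff Finsupp.mapDomain_comp
    rw [hc, hx, mapDomain_zero, MonoidAlgebra.ofCoeff_zero]
  have h3 := key x
  rwa [h2, sub_zero] at h3

theorem qmap_eq_zero_of_mem_relAugIdeal {x : MonoidAlgebra k Γ}
    (hx : x ∈ relAugIdeal k (H : Set Γ)) :
    qmap H x = 0 := by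
  refine Submodule.span_induction ?_ ?_ ?_ ?_ hx
  · rintro _ ⟨g, hg, rfl⟩
    show qmap H ((MonoidAlgebra.of k Γ g : MonoidAlgebra k Γ) - 1) = 0
    have h1 : (MonoidAlgebra.of k Γ g : MonoidAlgebra k Γ) - 1
        = (MonoidAlgebra.single g 1 : MonoidAlgebra k Γ) - MonoidAlgebra.single 1 1 := rfl
    rw [h1, map_sub, qmap_single, qmap_single]
    have hg1 : (QuotientGroup.mk g : Γ ⧸ H) = QuotientGroup.mk 1 := by
      rw [QuotientGroup.eq]
      simpa using hg
    rw [hg1, sub_self]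
  · simp
  · intro y z _ _ hy hz
    rw [map_add, hy, hz, add_zero]
  · intro r y _ hy
    induction r using MonoidAlgebra.induction_linear with
    | zero => rw [zero_smul, map_zero]
    | add f h hf hh => rw [add_smul, map_add, hf, hh, add_zero]
    | single γ d =>
      have h1 : (MonoidAlgebra.single γ d : MonoidAlgebra k Γ) • y
          = d • tmap (fun x => γ * x) y := by
        rw [smul_eq_mul]
        exact single_mul_eq_smul_tmap γ d y
      rw [h1, map_smul]
      have h2 : qmap (k := k) H (tmap (fun x => γ * x) y)
          = Finsupp.mapDomain ((QuotientGroup.mk (s := H)) ∘ (fun x => γ * x)) y.coeff :=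
        (Finsupp.mapDomain_comp).symm
      have hcomp : (QuotientGroup.mk (s := H)) ∘ (fun x => γ * x)
          = (fun q => γ • q) ∘ (QuotientGroup.mk (s := H)) := by
        funext a
        exact (MulAction.Quotient.smul_mk H γ a).symm
      have h3 : Finsupp.mapDomain ((fun q : Γ ⧸ H => γ • q) ∘ (QuotientGroup.mk (s := H))) y.coeff
          = Finsupp.mapDomain (fun q : Γ ⧸ H => γ • q) (qmap H y) := Finsupp.mapDomain_comp
      rw [h2, hcomp, h3, hy, mapDomain_zero, smul_zero]

end Coset
section Abstract
variable {Γ : Type} [Group Γ] (SA SB SC : Subgroup Γ)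

/-- The `Bool`-indexed family of subgroups `SA, SB`. -/
def G2 : Bool → Subgroup Γ := fun i => cond i SA SB

variable (hCA : SC ≤ SA) (hCB : SC ≤ SB)

/-- The inclusions of `SC` into `SA` and `SB`. -/
def φ2 : ∀ i : Bool, ↥SC →* ↥(G2 SA SB i) := fun i => match i with
  | true => Subgroup.inclusion hCA
  | false => Subgroup.inclusion hCB

theorem φ2_injective : ∀ i, Function.Injective (φ2 SA SB SC hCA hCB i) := by
  intro i
  cases i
  · exact Subgroup.inclusion_injective hCB
  · exact Subgroup.inclusion_injective hCA

theorem alternating_ne_one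
    (f : Γ →* Monoid.PushoutI (φ2 SA SB SC hCA hCB))
    (hfA : ∀ x (hx : x ∈ SA), f x = Monoid.PushoutI.of (φ := φ2 SA SB SC hCA hCB) true ⟨x, hx⟩)
    (hfB : ∀ x (hx : x ∈ SB), f x = Monoid.PushoutI.of (φ := φ2 SA SB SC hCA hCB) false ⟨x, hx⟩)
    (n : ℕ) (hn : 0 < n) (idx : ℕ → Bool) (x : ℕ → Γ)
    (hidx : ∀ t, idx (t + 1) = !(idx t))
    (hmem : ∀ t, x t ∈ G2 SA SB (idx t))
    (hC : ∀ t, x t ∉ SC) :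
    ((List.range n).map x).prod ≠ 1 := by
  intro hprod
  -- the word
  set letter : ℕ → (Σ i : Bool, ↥(G2 SA SB i)) := fun t => ⟨idx t, ⟨x t, hmem t⟩⟩ with hletter
  have hne_one : ∀ l ∈ (List.range n).map letter, Sigma.snd l ≠ 1 := by
    intro l hl
    rw [List.mem_map] at hl
    obtain ⟨t, _, rfl⟩ := hl
    intro h1
    apply hC t
    have : x t = ((1 : ↥(G2 SA SB (idx t))) : Γ) := congrArg Subtype.val h1
    rw [OneMemClass.coe_one] at this
    rw [this]
    exact one_mem _
  have hchain : ((List.range n).map letter).IsChain (fun l l' => Sigma.fst l ≠ Sigma.fst l') := by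
    rw [List.isChain_map]
    rcases n with _ | m
    · simp
    · rw [List.isChain_range_succ]
      intro t _
      show idx t ≠ idx (t + 1)
      rw [hidx t]
      cases idx t <;> simp
  set w : Monoid.CoprodI.Word (fun i => ↥(G2 SA SB i)) :=
    ⟨(List.range n).map letter, hne_one, hchain⟩ with hw
  have hred : Monoid.PushoutI.Reduced (φ2 SA SB SC hCA hCB) w := by
    intro g hg
    rw [hw] at hg
    simp only [List.mem_map, List.mem_range] at hg
    obtain ⟨t, _, rfl⟩ := hg
    intro hrange
    apply hC t
    obtain ⟨y, hy⟩ := hrange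
    have hcoe : ((φ2 SA SB SC hCA hCB (letter t).1 y : ↥(G2 SA SB (letter t).1)) : Γ)
        = x t := congrArg Subtype.val hy
    have : ((φ2 SA SB SC hCA hCB (letter t).1 y : ↥(G2 SA SB (letter t).1)) : Γ) = (y : Γ) := by
      rcases (letter t).1 with _ | _ <;> rfl
    rw [this] at hcoe
    rw [← hcoe]
    exact y.2
  have hprod1 : Monoid.PushoutI.ofCoprodI (φ := φ2 SA SB SC hCA hCB) w.prod = 1 := by
    have h1 : Monoid.PushoutI.ofCoprodI (φ := φ2 SA SB SC hCA hCB) w.prod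
        = ((List.range n).map (fun t => f (x t))).prod := by
      rw [Monoid.CoprodI.Word.prod, map_list_prod]
      rw [hw]
      simp only [List.map_map]
      apply congrArg List.prod
      apply List.map_congr_left
      intro t _
      show Monoid.PushoutI.ofCoprodI (φ := φ2 SA SB SC hCA hCB) (Monoid.CoprodI.of (letter t).2) = f (x t)
      rw [Monoid.PushoutI.ofCoprodI_of]
      have hof : ∀ (i : Bool) (g : ↥(G2 SA SB i)),
          Monoid.PushoutI.of (φ := φ2 SA SB SC hCA hCB) i g = f g := by
        intro i g
        cases i
        · exact (hfB g g.2).symm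
        · exact (hfA g g.2).symm
      exact hof (letter t).1 (letter t).2
    rw [h1]
    have h2 : ((List.range n).map (fun t => f (x t))).prod
        = f (((List.range n).map x).prod) := by
      rw [map_list_prod, List.map_map]
      rfl
    rw [h2, hprod, map_one]
  have hbase : Monoid.PushoutI.ofCoprodI (φ := φ2 SA SB SC hCA hCB) w.prod
      ∈ (Monoid.PushoutI.base (φ2 SA SB SC hCA hCB)).range := by
    rw [hprod1]; exact one_mem _
  have hempty := hred.eq_empty_of_mem_range (φ2_injective SA SB SC hCA hCB) hbase
  have : ((List.range n).map letter) = [] := congrArg Monoid.CoprodI.Word.toList hempty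
  rw [List.map_eq_nil_iff, List.range_eq_nil] at this
  omega

end Abstract
theorem key_abstract {k : Type} [CommRing k] {Γ : Type} [Group Γ]
    (SA SB SC : Subgroup Γ) (hCA : SC ≤ SA) (hCB : SC ≤ SB)
    (hword : ∀ n : ℕ, 0 < n → ∀ (idx : ℕ → Bool) (x : ℕ → Γ),
      (∀ t, idx (t + 1) = !(idx t)) → (∀ t, x t ∈ G2 SA SB (idx t)) → (∀ t, x t ∉ SC) →
      ((List.range n).map x).prod ≠ 1)
    (u : MonoidAlgebra k Γ) (hA : qmap SA u = 0) (hB : qmap SB u = 0) :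
    qmap SC u = 0 := by
  classical
  -- the maps between coset spaces
  set liftA : Γ ⧸ SC → Γ ⧸ SA := fun q => Quotient.liftOn' q (QuotientGroup.mk)
    (fun a b hab => by
      rw [QuotientGroup.eq]
      exact hCA (QuotientGroup.leftRel_apply.mp hab)) with hliftA
  set liftB : Γ ⧸ SC → Γ ⧸ SB := fun q => Quotient.liftOn' q (QuotientGroup.mk)
    (fun a b hab => by
      rw [QuotientGroup.eq]
      exact hCB (QuotientGroup.leftRel_apply.mp hab)) with hliftB
  set v : (Γ ⧸ SC) →₀ k := qmap SC u with hv
  have hvA : Finsupp.mapDomain liftA v = 0 := by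
    have h1 : Finsupp.mapDomain liftA v
        = Finsupp.mapDomain (liftA ∘ (QuotientGroup.mk (s := SC))) u.coeff :=
      (Finsupp.mapDomain_comp).symm
    have h2 : liftA ∘ (QuotientGroup.mk (s := SC)) = (QuotientGroup.mk (s := SA)) := rfl
    rw [h1, h2, ← qmap_apply, hA]
  have hvB : Finsupp.mapDomain liftB v = 0 := by
    have h1 : Finsupp.mapDomain liftB v
        = Finsupp.mapDomain (liftB ∘ (QuotientGroup.mk (s := SC))) u.coeff :=
      (Finsupp.mapDomain_comp).symm
    have h2 : liftB ∘ (QuotientGroup.mk (s := SC)) = (QuotientGroup.mk (s := SB)) := rfl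
    rw [h1, h2, ← qmap_apply, hB]
  by_contra hvne
  have hS : v.support.Nonempty := Finsupp.support_nonempty_iff.mpr hvne
  -- every coset in the support has a partner
  have hpartner : ∀ (β : Type) (q : Γ ⧸ SC → β), Finsupp.mapDomain q v = 0 →
      ∀ e ∈ v.support, ∃ e' ∈ v.support, e' ≠ e ∧ q e' = q e := by
    intro β q hq e he
    by_contra hno
    push_neg at hno
    have h0 : Finsupp.mapDomain q v (q e) = 0 := by rw [hq]; rfl
    rw [Finsupp.mapDomain, Finsupp.sum_apply] at h0
    have hsum : v.sum (fun a c => (Finsupp.single (q a) c) (q e)) = v e := by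
      rw [Finsupp.sum, Finset.sum_eq_single_of_mem e he]
      · rw [Finsupp.single_apply, if_pos rfl]
      · intro a ha hne
        rw [Finsupp.single_apply, if_neg (hno a ha hne)]
    rw [hsum] at h0
    exact (Finsupp.mem_support_iff.mp he) h0
  choose! pA hpA1 hpA2 hpA3 using hpartner _ liftA hvA
  choose! pB hpB1 hpB2 hpB3 using hpartner _ liftB hvB
  -- the walk
  set w : ℕ → Γ ⧸ SC := fun n =>
    Nat.rec hS.choose (fun t prev => if Even t then pA prev else pB prev) n with hwdef
  have hwsucc : ∀ t, w (t + 1) = if Even t then pA (w t) else pB (w t) := fun t => rfl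
  have hwS : ∀ t, w t ∈ v.support := by
    intro t
    induction t with
    | zero => exact hS.choose_spec
    | succ t ih =>
      rw [hwsucc]
      split
      · exact hpA1 _ ih
      · exact hpB1 _ ih
  have hwne : ∀ t, w (t + 1) ≠ w t := by
    intro t
    rw [hwsucc]
    split
    · exact hpA2 _ (hwS t)
    · exact hpB2 _ (hwS t)
  have hwA : ∀ t, Even t → liftA (w (t + 1)) = liftA (w t) := by
    intro t ht
    rw [hwsucc, if_pos ht]
    exact hpA3 _ (hwS t)
  have hwB : ∀ t, ¬Even t → liftB (w (t + 1)) = liftB (w t) := by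
    intro t ht
    rw [hwsucc, if_neg ht]
    exact hpB3 _ (hwS t)
  -- pigeonhole
  obtain ⟨i, j, hij, hwij⟩ : ∃ i j, i < j ∧ w i = w j := by
    obtain ⟨i, j, hne, heq⟩ := Finite.exists_ne_map_eq_of_infinite
      (fun n : ℕ => (⟨w n, hwS n⟩ : {x // x ∈ v.support}))
    rcases hne.lt_or_gt with h | h
    · exact ⟨i, j, h, congrArg Subtype.val heq⟩
    · exact ⟨j, i, h, (congrArg Subtype.val heq).symm⟩
  set n : ℕ := j - i with hn
  set γ : ℕ → Γ := fun t => (w (i + t)).out with hγ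
  set x : ℕ → Γ := fun t => (γ t)⁻¹ * γ (t + 1) with hx
  set idx : ℕ → Bool := fun t => decide (Even (i + t)) with hidx
  have hmk : ∀ s, QuotientGroup.mk (s := SC) ((w s).out) = w s := fun s =>
    QuotientGroup.out_eq' _
  have hidx' : ∀ t, idx (t + 1) = !(idx t) := by
    intro t
    show decide (Even (i + t + 1)) = !decide (Even (i + t))
    by_cases h : Even (i + t)
    · have h1 : ¬Even (i + t + 1) := by simp [Nat.even_add_one, h]
      simp [h, h1]
    · have h1 : Even (i + t + 1) := by simp [Nat.even_add_one, h]
      simp [h, h1]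
  have hmemx : ∀ t, x t ∈ G2 SA SB (idx t) := by
    intro t
    by_cases h : Even (i + t)
    · have ht : idx t = true := by simp [hidx, h]
      rw [ht]
      show x t ∈ SA
      have h1 : liftA (w (i + t + 1)) = liftA (w (i + t)) := hwA (i + t) h
      have h2 : (QuotientGroup.mk (γ t) : Γ ⧸ SA) = QuotientGroup.mk (γ (t + 1)) := by
        have e1 : liftA (w (i + t)) = QuotientGroup.mk (γ t) := by rw [← hmk (i + t)]; rfl
        have e2 : liftA (w (i + t + 1)) = QuotientGroup.mk (γ (t + 1)) := by
          rw [← hmk (i + t + 1)]; rfl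
        rw [← e1, ← e2, h1]
      exact QuotientGroup.eq.mp h2
    · have ht : idx t = false := by simp [hidx, h]
      rw [ht]
      show x t ∈ SB
      have h1 : liftB (w (i + t + 1)) = liftB (w (i + t)) := hwB (i + t) h
      have h2 : (QuotientGroup.mk (γ t) : Γ ⧸ SB) = QuotientGroup.mk (γ (t + 1)) := by
        have e1 : liftB (w (i + t)) = QuotientGroup.mk (γ t) := by rw [← hmk (i + t)]; rfl
        have e2 : liftB (w (i + t + 1)) = QuotientGroup.mk (γ (t + 1)) := by
          rw [← hmk (i + t + 1)]; rfl
        rw [← e1, ← e2, h1]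
      exact QuotientGroup.eq.mp h2
  have hxC : ∀ t, x t ∉ SC := by
    intro t hmem
    have h2 : (QuotientGroup.mk (γ t) : Γ ⧸ SC) = QuotientGroup.mk (γ (t + 1)) :=
      QuotientGroup.eq.mpr hmem
    rw [hmk (i + t), hmk (i + (t + 1))] at h2
    exact hwne (i + t) h2.symm
  have htel : ∀ m, ((List.range m).map x).prod = (γ 0)⁻¹ * γ m := by
    intro m
    induction m with
    | zero => simp
    | succ m ih =>
      rw [List.range_succ, List.map_append, List.prod_append, ih]
      show (γ 0)⁻¹ * γ m * ([x m].prod) = (γ 0)⁻¹ * γ (m + 1)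
      rw [List.prod_singleton, hx]
      group
  have hγn : γ n = γ 0 := by
    have h1 : i + n = j := by omega
    have h2 : i + 0 = i := by omega
    rw [hγ]
    show (w (i + n)).out = (w (i + 0)).out
    rw [h1, h2, hwij]
  have hprod : ((List.range n).map x).prod = 1 := by
    rw [htel n, hγn, inv_mul_cancel]
  exact hword n (by omega) idx x hidx' hmemx hxC hprod
namespace SwanAux
section
variable (A B C : Type) [Group A] [Group B] [Group C] (θ₁ : C →* A) (θ₂ : C →* B)

def homA : A →* Amal A B C θ₁ θ₂ := (QuotientGroup.mk' _).comp Monoid.Coprod.inl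
def homB : B →* Amal A B C θ₁ θ₂ := (QuotientGroup.mk' _).comp Monoid.Coprod.inr

abbrev SA : Subgroup (Amal A B C θ₁ θ₂) := (homA A B C θ₁ θ₂).range
abbrev SB : Subgroup (Amal A B C θ₁ θ₂) := (homB A B C θ₁ θ₂).range
abbrev SC : Subgroup (Amal A B C θ₁ θ₂) := ((homA A B C θ₁ θ₂).comp θ₁).range

theorem hrel (c : C) : homA A B C θ₁ θ₂ (θ₁ c) = homB A B C θ₁ θ₂ (θ₂ c) := by
  set N := Subgroup.normalClosure
    {x : Monoid.Coprod A B | ∃ c : C,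
      x = Monoid.Coprod.inl (θ₁ c) * (Monoid.Coprod.inr (θ₂ c))⁻¹} with hN
  set y := Monoid.Coprod.inl (M := A) (N := B) (θ₁ c) with hy
  set z := Monoid.Coprod.inr (M := A) (N := B) (θ₂ c) with hz
  show (QuotientGroup.mk y : Amal A B C θ₁ θ₂) = QuotientGroup.mk z
  rw [QuotientGroup.eq]
  have hg : y * z⁻¹ ∈ N := Subgroup.subset_normalClosure ⟨c, rfl⟩
  have h2 : y⁻¹ * (y * z⁻¹)⁻¹ * (y⁻¹)⁻¹ ∈ N :=
    Subgroup.Normal.conj_mem (Subgroup.normalClosure_normal) _ (inv_mem hg) y⁻¹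
  have heq : y⁻¹ * z = y⁻¹ * (y * z⁻¹)⁻¹ * (y⁻¹)⁻¹ := by group
  rw [heq]
  exact h2

theorem hCA : SC A B C θ₁ θ₂ ≤ SA A B C θ₁ θ₂ := by
  rintro x ⟨c, rfl⟩
  exact ⟨θ₁ c, rfl⟩

theorem hCB : SC A B C θ₁ θ₂ ≤ SB A B C θ₁ θ₂ := by
  rintro x ⟨c, rfl⟩
  exact ⟨θ₂ c, (hrel A B C θ₁ θ₂ c).symm⟩

noncomputable def FF : Monoid.Coprod A B →* Monoid.PushoutI
    (φ2 (SA A B C θ₁ θ₂) (SB A B C θ₁ θ₂) (SC A B C θ₁ θ₂)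
      (hCA A B C θ₁ θ₂) (hCB A B C θ₁ θ₂)) :=
  Monoid.Coprod.lift
    ((Monoid.PushoutI.of (φ := φ2 (SA A B C θ₁ θ₂) (SB A B C θ₁ θ₂) (SC A B C θ₁ θ₂)
        (hCA A B C θ₁ θ₂) (hCB A B C θ₁ θ₂)) true).comp (homA A B C θ₁ θ₂).rangeRestrict)
    ((Monoid.PushoutI.of (φ := φ2 (SA A B C θ₁ θ₂) (SB A B C θ₁ θ₂) (SC A B C θ₁ θ₂)
        (hCA A B C θ₁ θ₂) (hCB A B C θ₁ θ₂)) false).comp (homB A B C θ₁ θ₂).rangeRestrict)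

theorem fker : ∀ x ∈ Subgroup.normalClosure
    {x : Monoid.Coprod A B | ∃ c : C,
      x = Monoid.Coprod.inl (θ₁ c) * (Monoid.Coprod.inr (θ₂ c))⁻¹},
    FF A B C θ₁ θ₂ x = 1 := by
  intro x hx
  refine MonoidHom.mem_ker.mp (Subgroup.normalClosure_le_normal ?_ hx)
  rintro _ ⟨c, rfl⟩
  rw [SetLike.mem_coe, MonoidHom.mem_ker, map_mul, map_inv]
  rw [show FF A B C θ₁ θ₂ (Monoid.Coprod.inl (θ₁ c))
      = Monoid.PushoutI.of (φ := φ2 (SA A B C θ₁ θ₂) (SB A B C θ₁ θ₂) (SC A B C θ₁ θ₂)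
        (hCA A B C θ₁ θ₂) (hCB A B C θ₁ θ₂)) true
          ((homA A B C θ₁ θ₂).rangeRestrict (θ₁ c)) from
    Monoid.Coprod.lift_apply_inl _ _ _]
  rw [show FF A B C θ₁ θ₂ (Monoid.Coprod.inr (θ₂ c))
      = Monoid.PushoutI.of (φ := φ2 (SA A B C θ₁ θ₂) (SB A B C θ₁ θ₂) (SC A B C θ₁ θ₂)
        (hCA A B C θ₁ θ₂) (hCB A B C θ₁ θ₂)) false
          ((homB A B C θ₁ θ₂).rangeRestrict (θ₂ c)) from
    Monoid.Coprod.lift_apply_inr _ _ _]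
  rw [mul_inv_eq_one]
  set z : ↥(SC A B C θ₁ θ₂) := ⟨homA A B C θ₁ θ₂ (θ₁ c), ⟨c, rfl⟩⟩ with hzz
  have h1 : (homA A B C θ₁ θ₂).rangeRestrict (θ₁ c)
      = φ2 (SA A B C θ₁ θ₂) (SB A B C θ₁ θ₂) (SC A B C θ₁ θ₂)
        (hCA A B C θ₁ θ₂) (hCB A B C θ₁ θ₂) true z := Subtype.ext rfl
  have h2 : (homB A B C θ₁ θ₂).rangeRestrict (θ₂ c)
      = φ2 (SA A B C θ₁ θ₂) (SB A B C θ₁ θ₂) (SC A B C θ₁ θ₂)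
        (hCA A B C θ₁ θ₂) (hCB A B C θ₁ θ₂) false z :=
    Subtype.ext (hrel A B C θ₁ θ₂ c).symm
  rw [h1, h2, Monoid.PushoutI.of_apply_eq_base, Monoid.PushoutI.of_apply_eq_base]

noncomputable def fhom : Amal A B C θ₁ θ₂ →* Monoid.PushoutI
    (φ2 (SA A B C θ₁ θ₂) (SB A B C θ₁ θ₂) (SC A B C θ₁ θ₂)
      (hCA A B C θ₁ θ₂) (hCB A B C θ₁ θ₂)) :=
  QuotientGroup.lift _ (FF A B C θ₁ θ₂) (fker A B C θ₁ θ₂)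

theorem fhom_A : ∀ x (hx : x ∈ SA A B C θ₁ θ₂),
    fhom A B C θ₁ θ₂ x = Monoid.PushoutI.of
      (φ := φ2 (SA A B C θ₁ θ₂) (SB A B C θ₁ θ₂) (SC A B C θ₁ θ₂)
        (hCA A B C θ₁ θ₂) (hCB A B C θ₁ θ₂)) true ⟨x, hx⟩ := by
  rintro _ ⟨a, rfl⟩
  have h0 : fhom A B C θ₁ θ₂ (homA A B C θ₁ θ₂ a)
      = FF A B C θ₁ θ₂ (Monoid.Coprod.inl a) := rfl
  rw [h0, show FF A B C θ₁ θ₂ (Monoid.Coprod.inl a)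
      = Monoid.PushoutI.of (φ := φ2 (SA A B C θ₁ θ₂) (SB A B C θ₁ θ₂) (SC A B C θ₁ θ₂)
        (hCA A B C θ₁ θ₂) (hCB A B C θ₁ θ₂)) true
          ((homA A B C θ₁ θ₂).rangeRestrict a) from
    Monoid.Coprod.lift_apply_inl _ _ _]
  exact congrArg _ (Subtype.ext rfl)

theorem fhom_B : ∀ x (hx : x ∈ SB A B C θ₁ θ₂),
    fhom A B C θ₁ θ₂ x = Monoid.PushoutI.of
      (φ := φ2 (SA A B C θ₁ θ₂) (SB A B C θ₁ θ₂) (SC A B C θ₁ θ₂)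
        (hCA A B C θ₁ θ₂) (hCB A B C θ₁ θ₂)) false ⟨x, hx⟩ := by
  rintro _ ⟨b, rfl⟩
  have h0 : fhom A B C θ₁ θ₂ (homB A B C θ₁ θ₂ b)
      = FF A B C θ₁ θ₂ (Monoid.Coprod.inr b) := rfl
  rw [h0, show FF A B C θ₁ θ₂ (Monoid.Coprod.inr b)
      = Monoid.PushoutI.of (φ := φ2 (SA A B C θ₁ θ₂) (SB A B C θ₁ θ₂) (SC A B C θ₁ θ₂)
        (hCA A B C θ₁ θ₂) (hCB A B C θ₁ θ₂)) false
          ((homB A B C θ₁ θ₂).rangeRestrict b) from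
    Monoid.Coprod.lift_apply_inr _ _ _]
  exact congrArg _ (Subtype.ext rfl)

theorem amal_hword : ∀ n : ℕ, 0 < n → ∀ (idx : ℕ → Bool) (x : ℕ → Amal A B C θ₁ θ₂),
    (∀ t, idx (t + 1) = !(idx t)) →
    (∀ t, x t ∈ G2 (SA A B C θ₁ θ₂) (SB A B C θ₁ θ₂) (idx t)) →
    (∀ t, x t ∉ SC A B C θ₁ θ₂) →
    ((List.range n).map x).prod ≠ 1 :=
  fun n hn idx x hidx hmem hC =>
    alternating_ne_one (SA A B C θ₁ θ₂) (SB A B C θ₁ θ₂) (SC A B C θ₁ θ₂)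
      (hCA A B C θ₁ θ₂) (hCB A B C θ₁ θ₂) (fhom A B C θ₁ θ₂)
      (fhom_A A B C θ₁ θ₂) (fhom_B A B C θ₁ θ₂) n hn idx x hidx hmem hC

end
end SwanAux
section Final
open SwanAux

variable {k : Type} [CommRing k]

theorem mem_augIdeal_iff {G : Type} [Group G] (x : MonoidAlgebra k G) :
    x ∈ augIdeal k G ↔ augHom k G x = 0 := RingHom.mem_ker

theorem augHom_of {G : Type} [Group G] (g : G) :
    augHom k G (MonoidAlgebra.of k G g) = 1 := by
  rw [show augHom k G = MonoidAlgebra.lift k k G 1 from rfl, MonoidAlgebra.lift_of]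
  rfl

theorem augIdeal_le_of {G : Type} [Group G] (J : Ideal (MonoidAlgebra k G))
    (h : ∀ g : G, (MonoidAlgebra.of k G g : MonoidAlgebra k G) - 1 ∈ J) :
    augIdeal k G ≤ J := by
  intro w hw
  rw [mem_augIdeal_iff] at hw
  have haug : augHom k G w = ∑ g ∈ w.coeff.support, w.coeff g := by
    rw [show augHom k G w = MonoidAlgebra.lift k k G 1 w from rfl, MonoidAlgebra.lift_apply]
    simp [Finsupp.sum]
  have hrepr : w = ∑ g ∈ w.coeff.support,
      (w.coeff g) • ((MonoidAlgebra.of k G g : MonoidAlgebra k G) - 1) := by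
    have h1 : ∑ g ∈ w.coeff.support, (w.coeff g) • ((MonoidAlgebra.of k G g : MonoidAlgebra k G) - 1)
        = (∑ g ∈ w.coeff.support, (w.coeff g) • (MonoidAlgebra.of k G g : MonoidAlgebra k G))
          - ∑ g ∈ w.coeff.support, (w.coeff g) • (1 : MonoidAlgebra k G) := by
      rw [← Finset.sum_sub_distrib]
      exact Finset.sum_congr rfl (fun g _ => smul_sub _ _ _)
    have h2 : (∑ g ∈ w.coeff.support, (w.coeff g) • (MonoidAlgebra.of k G g : MonoidAlgebra k G)) = w := by
      have hterm : ∀ g ∈ w.coeff.support,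
          (w.coeff g) • (MonoidAlgebra.of k G g : MonoidAlgebra k G) = MonoidAlgebra.single g (w.coeff g) := by
        intro g _
        rw [MonoidAlgebra.of_apply, MonoidAlgebra.smul_single, smul_eq_mul, mul_one]
      rw [Finset.sum_congr rfl hterm]
      exact MonoidAlgebra.sum_coeff_single w
    have h3 : ∑ g ∈ w.coeff.support, (w.coeff g) • (1 : MonoidAlgebra k G)
        = (∑ g ∈ w.coeff.support, w.coeff g) • (1 : MonoidAlgebra k G) := (Finset.sum_smul).symm
    rw [h1, h2, h3, ← haug, hw, zero_smul, sub_zero]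
  rw [hrepr]
  exact Submodule.sum_mem _ (fun g _ => Submodule.smul_of_tower_mem _ _ (h g))

variable {A B C : Type} [Group A] [Group B] [Group C] {θ₁ : C →* A} {θ₂ : C →* B}

theorem of_sub_one_mem_sup (g : Amal A B C θ₁ θ₂) :
    (MonoidAlgebra.of k (Amal A B C θ₁ θ₂) g : MonoidAlgebra k (Amal A B C θ₁ θ₂)) - 1
      ∈ amalIA k A B C θ₁ θ₂ ⊔ amalIB k A B C θ₁ θ₂ := by
  obtain ⟨y, rfl⟩ := QuotientGroup.mk_surjective g
  have hy : y ∈ Subgroup.closure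
      (Set.range (Monoid.Coprod.inl : A →* Monoid.Coprod A B)
        ∪ Set.range (Monoid.Coprod.inr : B →* Monoid.Coprod A B)) := by
    rw [Monoid.Coprod.closure_range_inl_union_inr]
    trivial
  refine Subgroup.closure_induction
    (p := fun y _ =>
      (MonoidAlgebra.of k (Amal A B C θ₁ θ₂) (QuotientGroup.mk y) :
        MonoidAlgebra k (Amal A B C θ₁ θ₂)) - 1
          ∈ amalIA k A B C θ₁ θ₂ ⊔ amalIB k A B C θ₁ θ₂)
    ?_ ?_ ?_ ?_ hy
  · rintro z (⟨a, rfl⟩ | ⟨b, rfl⟩)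
    · show (MonoidAlgebra.of k (Amal A B C θ₁ θ₂) (QuotientGroup.mk (Monoid.Coprod.inl a)) :
          MonoidAlgebra k (Amal A B C θ₁ θ₂)) - 1
            ∈ amalIA k A B C θ₁ θ₂ ⊔ amalIB k A B C θ₁ θ₂
      have hgen : (MonoidAlgebra.of k (Amal A B C θ₁ θ₂)
            (QuotientGroup.mk (Monoid.Coprod.inl a)) :
          MonoidAlgebra k (Amal A B C θ₁ θ₂)) - 1 ∈ amalIA k A B C θ₁ θ₂ :=
        Ideal.subset_span ⟨QuotientGroup.mk (Monoid.Coprod.inl a), ⟨a, rfl⟩, rfl⟩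
      exact SetLike.le_def.mp le_sup_left hgen
    · show (MonoidAlgebra.of k (Amal A B C θ₁ θ₂) (QuotientGroup.mk (Monoid.Coprod.inr b)) :
          MonoidAlgebra k (Amal A B C θ₁ θ₂)) - 1
            ∈ amalIA k A B C θ₁ θ₂ ⊔ amalIB k A B C θ₁ θ₂
      have hgen : (MonoidAlgebra.of k (Amal A B C θ₁ θ₂)
            (QuotientGroup.mk (Monoid.Coprod.inr b)) :
          MonoidAlgebra k (Amal A B C θ₁ θ₂)) - 1 ∈ amalIB k A B C θ₁ θ₂ :=
        Ideal.subset_span ⟨QuotientGroup.mk (Monoid.Coprod.inr b), ⟨b, rfl⟩, rfl⟩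
      exact SetLike.le_def.mp le_sup_right hgen
  · show (MonoidAlgebra.of k (Amal A B C θ₁ θ₂) (QuotientGroup.mk 1) :
        MonoidAlgebra k (Amal A B C θ₁ θ₂)) - 1
          ∈ amalIA k A B C θ₁ θ₂ ⊔ amalIB k A B C θ₁ θ₂
    have h1 : (MonoidAlgebra.of k (Amal A B C θ₁ θ₂) (QuotientGroup.mk 1) :
        MonoidAlgebra k (Amal A B C θ₁ θ₂)) - 1 = 0 := by
      rw [show (QuotientGroup.mk 1 : Amal A B C θ₁ θ₂) = 1 from rfl, map_one, sub_self]
    rw [h1]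
    exact zero_mem _
  · intro y z _ _ hyi hzi
    show (MonoidAlgebra.of k (Amal A B C θ₁ θ₂) (QuotientGroup.mk (y * z)) :
        MonoidAlgebra k (Amal A B C θ₁ θ₂)) - 1
          ∈ amalIA k A B C θ₁ θ₂ ⊔ amalIB k A B C θ₁ θ₂
    have hmul : (QuotientGroup.mk (y * z) : Amal A B C θ₁ θ₂)
        = QuotientGroup.mk y * QuotientGroup.mk z := rfl
    have heq : (MonoidAlgebra.of k (Amal A B C θ₁ θ₂) (QuotientGroup.mk (y * z)) :
          MonoidAlgebra k (Amal A B C θ₁ θ₂)) - 1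
        = (MonoidAlgebra.of k (Amal A B C θ₁ θ₂) (QuotientGroup.mk y))
            * ((MonoidAlgebra.of k (Amal A B C θ₁ θ₂) (QuotientGroup.mk z)) - 1)
          + ((MonoidAlgebra.of k (Amal A B C θ₁ θ₂) (QuotientGroup.mk y)) - 1) := by
      rw [mul_sub, mul_one, ← map_mul, ← hmul, sub_add_sub_cancel]
    rw [heq]
    exact add_mem (Ideal.mul_mem_left _ _ hzi) hyi
  · intro y _ hyi
    show (MonoidAlgebra.of k (Amal A B C θ₁ θ₂) (QuotientGroup.mk y⁻¹) :
        MonoidAlgebra k (Amal A B C θ₁ θ₂)) - 1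
          ∈ amalIA k A B C θ₁ θ₂ ⊔ amalIB k A B C θ₁ θ₂
    have hinv : (QuotientGroup.mk y⁻¹ : Amal A B C θ₁ θ₂) = (QuotientGroup.mk y)⁻¹ := rfl
    have heq : (MonoidAlgebra.of k (Amal A B C θ₁ θ₂) (QuotientGroup.mk y⁻¹) :
          MonoidAlgebra k (Amal A B C θ₁ θ₂)) - 1
        = -((MonoidAlgebra.of k (Amal A B C θ₁ θ₂) (QuotientGroup.mk y⁻¹))
            * ((MonoidAlgebra.of k (Amal A B C θ₁ θ₂) (QuotientGroup.mk y)) - 1)) := by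
      rw [mul_sub, mul_one, ← map_mul, hinv, inv_mul_cancel, map_one, neg_sub]
    rw [heq]
    exact neg_mem (Ideal.mul_mem_left _ _ hyi)

end Final

/-- Swan's theorem: for `Γ = A *_C B` the sequence
`0 → kI_C^Γ → kI_A^Γ ⊕ kI_B^Γ → kI_Γ → 0`, with maps `z ↦ (z, -z)` and
`(x, y) ↦ x + y`, is exact (stated elementwise). -/
theorem swan_exact_sequence
    (k : Type) [CommRing k] (A B C : Type) [Group A] [Group B] [Group C]
    (θ₁ : C →* A) (θ₂ : C →* B) :
    (amalIC k A B C θ₁ θ₂ ≤ amalIA k A B C θ₁ θ₂) ∧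
    (amalIC k A B C θ₁ θ₂ ≤ amalIB k A B C θ₁ θ₂) ∧
    (amalIA k A B C θ₁ θ₂ ≤ augIdeal k (Amal A B C θ₁ θ₂)) ∧
    (amalIB k A B C θ₁ θ₂ ≤ augIdeal k (Amal A B C θ₁ θ₂)) ∧
    (∀ x ∈ amalIA k A B C θ₁ θ₂, ∀ y ∈ amalIB k A B C θ₁ θ₂,
      (x + y = 0 ↔ ∃ z ∈ amalIC k A B C θ₁ θ₂, x = z ∧ y = -z)) ∧
    (∀ w ∈ augIdeal k (Amal A B C θ₁ θ₂),
      ∃ x ∈ amalIA k A B C θ₁ θ₂, ∃ y ∈ amalIB k A B C θ₁ θ₂, x + y = w) := by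
  have hsetA : (Set.range fun a : A =>
      (QuotientGroup.mk (Monoid.Coprod.inl a) : Amal A B C θ₁ θ₂))
        = ↑(SwanAux.SA A B C θ₁ θ₂) := by
    ext g
    exact ⟨fun ⟨a, h⟩ => ⟨a, h⟩, fun ⟨a, h⟩ => ⟨a, h⟩⟩
  have hsetB : (Set.range fun b : B =>
      (QuotientGroup.mk (Monoid.Coprod.inr b) : Amal A B C θ₁ θ₂))
        = ↑(SwanAux.SB A B C θ₁ θ₂) := by
    ext g
    exact ⟨fun ⟨b, h⟩ => ⟨b, h⟩, fun ⟨b, h⟩ => ⟨b, h⟩⟩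
  have hsetC : (Set.range fun c : C =>
      (QuotientGroup.mk (Monoid.Coprod.inl (θ₁ c)) : Amal A B C θ₁ θ₂))
        = ↑(SwanAux.SC A B C θ₁ θ₂) := by
    ext g
    exact ⟨fun ⟨c, h⟩ => ⟨c, h⟩, fun ⟨c, h⟩ => ⟨c, h⟩⟩
  have hIA : amalIA k A B C θ₁ θ₂ = relAugIdeal k ↑(SwanAux.SA A B C θ₁ θ₂) :=
    congrArg (relAugIdeal k) hsetA
  have hIB : amalIB k A B C θ₁ θ₂ = relAugIdeal k ↑(SwanAux.SB A B C θ₁ θ₂) :=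
    congrArg (relAugIdeal k) hsetB
  have hIC : amalIC k A B C θ₁ θ₂ = relAugIdeal k ↑(SwanAux.SC A B C θ₁ θ₂) :=
    congrArg (relAugIdeal k) hsetC
  refine ⟨?_, ?_, ?_, ?_, ?_, ?_⟩
  · apply Ideal.span_mono
    apply Set.image_mono
    rintro _ ⟨c, rfl⟩
    exact ⟨θ₁ c, rfl⟩
  · apply Ideal.span_mono
    apply Set.image_mono
    rintro _ ⟨c, rfl⟩
    exact ⟨θ₂ c, (SwanAux.hrel A B C θ₁ θ₂ c).symm⟩
  · refine Ideal.span_le.mpr ?_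
    rintro _ ⟨g, -, rfl⟩
    rw [SetLike.mem_coe, mem_augIdeal_iff, map_sub, augHom_of, map_one, sub_self]
  · refine Ideal.span_le.mpr ?_
    rintro _ ⟨g, -, rfl⟩
    rw [SetLike.mem_coe, mem_augIdeal_iff, map_sub, augHom_of, map_one, sub_self]
  · intro x hx y hy
    constructor
    · intro hxy
      have hyx : y = -x := eq_neg_of_add_eq_zero_right hxy
      have hxy' : x = -y := eq_neg_of_add_eq_zero_left hxy
      have hxA : qmap (SwanAux.SA A B C θ₁ θ₂) x = 0 := by
        apply qmap_eq_zero_of_mem_relAugIdeal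
        rw [← hIA]
        exact hx
      have hyB : qmap (SwanAux.SB A B C θ₁ θ₂) y = 0 := by
        apply qmap_eq_zero_of_mem_relAugIdeal
        rw [← hIB]
        exact hy
      have hxB : qmap (SwanAux.SB A B C θ₁ θ₂) x = 0 := by
        rw [hxy', map_neg, hyB, neg_zero]
      have hxC : qmap (SwanAux.SC A B C θ₁ θ₂) x = 0 :=
        key_abstract (SwanAux.SA A B C θ₁ θ₂) (SwanAux.SB A B C θ₁ θ₂)
          (SwanAux.SC A B C θ₁ θ₂) (SwanAux.hCA A B C θ₁ θ₂) (SwanAux.hCB A B C θ₁ θ₂)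
          (SwanAux.amal_hword A B C θ₁ θ₂) x hxA hxB
      refine ⟨x, ?_, rfl, hyx⟩
      rw [hIC]
      exact mem_relAugIdeal_of_qmap_eq_zero _ hxC
    · rintro ⟨z, hz, rfl, rfl⟩
      simp
  · intro w hw
    have h1 : w ∈ amalIA k A B C θ₁ θ₂ ⊔ amalIB k A B C θ₁ θ₂ :=
      augIdeal_le_of _ (fun g => of_sub_one_mem_sup g) hw
    obtain ⟨x, hx, y, hy, hxy⟩ := Submodule.mem_sup.mp h1
    exact ⟨x, hx, y, hy, hxy⟩
end

section
/- Let k be a commutative ring and let Γ = A * B be the free product of two groups A and B. Then the homomorphism of left kΓ-modules kI_A^Γ ⊕ kI_B^Γ → kI_Γ defined by (x, y) ↦ x + y is an isomorphism. -/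
namespace FPAux

/-- Auxiliary monoid structure modelling `R ⋊ R` (upper triangular 2x2 matrices
`[[fst, snd],[0,1]]`). -/
@[ext] structure Aux (S : Type*) where
  fst : S
  snd : S

variable {S : Type*} [Ring S]

instance : Mul (Aux S) := ⟨fun x y => ⟨x.fst * y.fst, x.fst * y.snd + x.snd⟩⟩
instance : One (Aux S) := ⟨⟨1, 0⟩⟩

@[simp] lemma mul_fst (x y : Aux S) : (x * y).fst = x.fst * y.fst := rfl
@[simp] lemma mul_snd (x y : Aux S) : (x * y).snd = x.fst * y.snd + x.snd := rfl
@[simp] lemma one_fst : (1 : Aux S).fst = 1 := rfl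
@[simp] lemma one_snd : (1 : Aux S).snd = 0 := rfl

instance : Monoid (Aux S) where
  mul_assoc x y z := by
    refine Aux.ext ?_ ?_ <;> simp [mul_assoc, mul_add, add_assoc]
  one_mul x := by refine Aux.ext ?_ ?_ <;> simp
  mul_one x := by refine Aux.ext ?_ ?_ <;> simp

variable (k : Type) [CommRing k] (A B : Type) [Group A] [Group B]

local notation "Γ" => Monoid.Coprod A B
local notation "R" => MonoidAlgebra k (Monoid.Coprod A B)

noncomputable abbrev og (g : Γ) : R := MonoidAlgebra.of k Γ g

/-- `a ↦ [[a, a-1],[0,1]]`. -/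
noncomputable def fA : A →* Aux R where
  toFun a := ⟨og k A B (Monoid.Coprod.inl a), og k A B (Monoid.Coprod.inl a) - 1⟩
  map_one' := by refine Aux.ext ?_ ?_ <;> simp [og, MonoidAlgebra.one_def]
  map_mul' a a' := by
    refine Aux.ext ?_ ?_ <;> simp [mul_sub, sub_mul]

/-- `b ↦ [[b, 0],[0,1]]`. -/
noncomputable def fB : B →* Aux R where
  toFun b := ⟨og k A B (Monoid.Coprod.inr b), 0⟩
  map_one' := by refine Aux.ext ?_ ?_ <;> simp [og, MonoidAlgebra.one_def]
  map_mul' b b' := by refine Aux.ext ?_ ?_ <;> simp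

noncomputable def F : Γ →* Aux R := Monoid.Coprod.lift (fA k A B) (fB k A B)

lemma F_fst (g : Γ) : (F k A B g).fst = og k A B g := by
  induction g using Monoid.Coprod.induction_on with
  | inl a => simp [F, fA]
  | inr b => simp [F, fB]
  | mul x y hx hy => simp [map_mul, hx, hy]

/-- The derivation `d : Γ → kΓ` with `d(inl a) = a - 1`, `d(inr b) = 0`. -/
noncomputable def d (g : Γ) : R := (F k A B g).snd

lemma d_inl (a : A) : d k A B (Monoid.Coprod.inl a) = og k A B (Monoid.Coprod.inl a) - 1 := by
  simp [d, F, fA]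

lemma d_inr (b : B) : d k A B (Monoid.Coprod.inr b) = 0 := by
  simp [d, F, fB]

lemma d_mul (g h : Γ) : d k A B (g * h) = og k A B g * d k A B h + d k A B g := by
  simp only [d, map_mul, mul_snd, F_fst]

/-- `k`-linear extension of `d` to `kΓ`. -/
noncomputable def D : R →ₗ[k] R :=
  Finsupp.lift R k Γ (d k A B) ∘ₗ (MonoidAlgebra.coeffLinearEquiv k).toLinearMap

lemma D_of (g : Γ) : D k A B (og k A B g) = d k A B g := by
  unfold og D
  rw [MonoidAlgebra.of_apply, LinearMap.comp_apply]
  erw [Finsupp.lift_apply]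
  change (Finsupp.single g (1 : k)).sum (fun x r => r • d k A B x) = _
  rw [Finsupp.sum_single_index (by simp), one_smul]

lemma D_mul_of (x : R) (h : Γ) :
    D k A B (x * og k A B h) = D k A B x + x * d k A B h := by
  induction x using MonoidAlgebra.induction_on with
  | of g =>
      rw [← map_mul, D_of, D_of, d_mul, add_comm]
  | add f g hf hg =>
      rw [add_mul, map_add, hf, hg, map_add, add_mul]
      abel
  | smul r f hf =>
      rw [smul_mul_assoc, map_smul, hf, map_smul, smul_add, smul_mul_assoc]

lemma D_mul_inr (x : R) (b : B) :
    D k A B (x * (og k A B (Monoid.Coprod.inr b) - 1)) = 0 := by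
  rw [mul_sub, mul_one, map_sub, D_mul_of, d_inr, mul_zero, add_zero, sub_self]

lemma D_mul_inl (x : R) (a : A) :
    D k A B (x * (og k A B (Monoid.Coprod.inl a) - 1))
      = x * (og k A B (Monoid.Coprod.inl a) - 1) := by
  rw [mul_sub, mul_one, map_sub, D_mul_of, d_inl, mul_sub, mul_one]
  abel

lemma D_eq_zero_of_memB (z : R)
    (hz : z ∈ relAugIdeal k (Set.range fun b : B => (Monoid.Coprod.inr b : Γ))) :
    D k A B z = 0 := by
  have key : ∀ r : R, D k A B (r * z) = 0 := by
    refine Submodule.span_induction (p := fun z _ => ∀ r : R, D k A B (r * z) = 0)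
      ?_ ?_ ?_ ?_ hz
    · rintro s ⟨g, ⟨b, rfl⟩, rfl⟩ r
      exact D_mul_inr k A B r b
    · intro r; simp
    · intro u v _ _ hu hv r
      rw [mul_add, map_add, hu, hv, add_zero]
    · intro c u _ hu r
      rw [smul_eq_mul, ← mul_assoc, hu]
  simpa using key 1

lemma D_eq_self_of_memA (z : R)
    (hz : z ∈ relAugIdeal k (Set.range fun a : A => (Monoid.Coprod.inl a : Γ))) :
    D k A B z = z := by
  have key : ∀ r : R, D k A B (r * z) = r * z := by
    refine Submodule.span_induction (p := fun z _ => ∀ r : R, D k A B (r * z) = r * z)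
      ?_ ?_ ?_ ?_ hz
    · rintro s ⟨g, ⟨a, rfl⟩, rfl⟩ r
      exact D_mul_inl k A B r a
    · intro r; simp
    · intro u v _ _ hu hv r
      rw [mul_add, map_add, hu, hv]
    · intro c u _ hu r
      rw [smul_eq_mul, ← mul_assoc, hu, mul_assoc]
  simpa using key 1

end FPAux

/-- For a free product `Γ = A ∗ B`, the map `kI_A^Γ ⊕ kI_B^Γ → kI_Γ`, `(x, y) ↦ x + y`,
is an isomorphism (stated elementwise: it lands in `kI_Γ`, is injective and
surjective). -/
theorem freeProduct_augmentationIdeal_decomposition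
    (k : Type) [CommRing k] (A B : Type) [Group A] [Group B] :
    (relAugIdeal k (Set.range fun a : A => (Monoid.Coprod.inl a : Monoid.Coprod A B)) ≤
        augIdeal k (Monoid.Coprod A B)) ∧
    (relAugIdeal k (Set.range fun b : B => (Monoid.Coprod.inr b : Monoid.Coprod A B)) ≤
        augIdeal k (Monoid.Coprod A B)) ∧
    (∀ x ∈ relAugIdeal k
        (Set.range fun a : A => (Monoid.Coprod.inl a : Monoid.Coprod A B)),
      ∀ y ∈ relAugIdeal k
        (Set.range fun b : B => (Monoid.Coprod.inr b : Monoid.Coprod A B)),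
        x + y = 0 → x = 0 ∧ y = 0) ∧
    (∀ w ∈ augIdeal k (Monoid.Coprod A B),
      ∃ x ∈ relAugIdeal k
        (Set.range fun a : A => (Monoid.Coprod.inl a : Monoid.Coprod A B)),
      ∃ y ∈ relAugIdeal k
        (Set.range fun b : B => (Monoid.Coprod.inr b : Monoid.Coprod A B)),
        x + y = w) := by
  set Γ := Monoid.Coprod A B
  set IA := relAugIdeal k (Set.range fun a : A => (Monoid.Coprod.inl a : Γ)) with hIA
  set IB := relAugIdeal k (Set.range fun b : B => (Monoid.Coprod.inr b : Γ)) with hIB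
  have hle : ∀ s : Set Γ, relAugIdeal k s ≤ augIdeal k Γ := by
    intro s
    rw [relAugIdeal, Ideal.span_le]
    rintro x ⟨g, -, rfl⟩
    simp [augIdeal, RingHom.mem_ker, augHom]
  have hmem_sup : ∀ g : Γ, MonoidAlgebra.of k Γ g - 1 ∈ IA ⊔ IB := by
    intro g
    induction g using Monoid.Coprod.induction_on with
    | inl a =>
        exact Submodule.mem_sup_left (Ideal.subset_span ⟨_, ⟨a, rfl⟩, rfl⟩)
    | inr b =>
        exact Submodule.mem_sup_right (Ideal.subset_span ⟨_, ⟨b, rfl⟩, rfl⟩)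
    | mul x y hx hy =>
        have : MonoidAlgebra.of k Γ (x * y) - 1
            = MonoidAlgebra.of k Γ x * (MonoidAlgebra.of k Γ y - 1)
              + (MonoidAlgebra.of k Γ x - 1) := by
          rw [map_mul, mul_sub, mul_one]; abel
        rw [this]
        exact add_mem (Ideal.mul_mem_left _ _ hy) hx
  refine ⟨hle _, hle _, ?_, ?_⟩
  · intro x hx y hy hxy
    have hDx : FPAux.D k A B x = x := FPAux.D_eq_self_of_memA k A B x hx
    have hDy : FPAux.D k A B y = 0 := FPAux.D_eq_zero_of_memB k A B y hy
    have : FPAux.D k A B (x + y) = x := by rw [map_add, hDx, hDy, add_zero]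
    rw [hxy, map_zero] at this
    refine ⟨this.symm, ?_⟩
    have hx0 : x = 0 := this.symm
    rw [hx0, zero_add] at hxy
    exact hxy
  · intro w hw
    have hw' : w ∈ IA ⊔ IB := by
      have hrepr : w = w.coeff.sum fun g c => c • (MonoidAlgebra.of k Γ g - 1) := by
        have h1 : (w.coeff.sum fun g c => c • (MonoidAlgebra.of k Γ g - 1))
            = w - (augHom k Γ w) • (1 : MonoidAlgebra k Γ) := by
          simp only [smul_sub]
          rw [Finsupp.sum_sub]
          congr 1
          · conv_rhs => rw [← MonoidAlgebra.sum_coeff_single w]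
            refine Finsupp.sum_congr fun g _ => ?_
            simp [MonoidAlgebra.of_apply, MonoidAlgebra.smul_single']
          · rw [augHom, MonoidAlgebra.lift_apply, Finsupp.sum, Finsupp.sum, Finset.sum_smul]
            simp
            rfl
        have h2 : augHom k Γ w = 0 := hw
        rw [h1, h2, zero_smul, sub_zero]
      rw [hrepr]
      exact Submodule.finsuppSum_mem _ _ _ _ fun g _ => Submodule.smul_of_tower_mem _ _ (hmem_sup g)
    obtain ⟨x, hx, y, hy, hxy⟩ := Submodule.mem_sup.mp hw'
    exact ⟨x, hx, y, hy, hxy⟩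
end

section
/- Let k be a commutative ring, let S be a set, and let F be the free group freely generated by S. Then the family {s − 1 : s ∈ S} is a basis of the augmentation ideal kI_F as a left kF-module; in particular kI_F is a free left kF-module of rank |S|. -/
/-! ### Fox derivative machinery -/

/-- Pairs `(u, d)` with `u` a unit: `w ↦ (w, ∂w)` is a group homomorphism. -/
@[ext] structure FoxPair (R : Type*) [Ring R] where
  u : Rˣ
  d : R

namespace FoxPair

variable {R : Type*} [Ring R]

instance : Mul (FoxPair R) := ⟨fun x y => ⟨x.u * y.u, x.d + (x.u : R) * y.d⟩⟩
instance : One (FoxPair R) := ⟨⟨1, 0⟩⟩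
instance : Inv (FoxPair R) := ⟨fun x => ⟨x.u⁻¹, -(((x.u⁻¹ : Rˣ) : R) * x.d)⟩⟩

@[simp] lemma mul_u (x y : FoxPair R) : (x * y).u = x.u * y.u := rfl
@[simp] lemma mul_d (x y : FoxPair R) : (x * y).d = x.d + (x.u : R) * y.d := rfl
@[simp] lemma one_u : (1 : FoxPair R).u = 1 := rfl
@[simp] lemma one_d : (1 : FoxPair R).d = 0 := rfl
@[simp] lemma inv_u (x : FoxPair R) : x⁻¹.u = x.u⁻¹ := rfl
@[simp] lemma inv_d (x : FoxPair R) : x⁻¹.d = -(((x.u⁻¹ : Rˣ) : R) * x.d) := rfl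

instance : Group (FoxPair R) where
  mul_assoc x y z := by ext <;> simp [mul_assoc, mul_add, add_assoc]
  one_mul x := by ext <;> simp
  mul_one x := by ext <;> simp
  inv_mul_cancel x := by ext <;> simp

/-- Projection onto the unit component, as a monoid hom. -/
def uHom : FoxPair R →* Rˣ where
  toFun := FoxPair.u
  map_one' := rfl
  map_mul' _ _ := rfl

end FoxPair

variable (k : Type) [CommRing k] (S : Type) [DecidableEq S]

/-- The homomorphism computing the Fox derivative with respect to `t`. -/
noncomputable def foxHom (t : S) :
    FreeGroup S →* FoxPair (MonoidAlgebra k (FreeGroup S)) :=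
  FreeGroup.lift fun s =>
    ⟨(MonoidAlgebra.of k (FreeGroup S)).toHomUnits (FreeGroup.of s),
      if s = t then 1 else 0⟩

lemma foxHom_u (t : S) (w : FreeGroup S) :
    ((foxHom k S t w).u : MonoidAlgebra k (FreeGroup S)) =
      MonoidAlgebra.of k (FreeGroup S) w := by
  have : (FoxPair.uHom.comp (foxHom k S t)) w =
      (MonoidAlgebra.of k (FreeGroup S)).toHomUnits w := by
    refine DFunLike.congr_fun (FreeGroup.ext_hom _ _ fun s => ?_) w
    simp [foxHom, FoxPair.uHom]
  simpa [FoxPair.uHom] using congrArg (Units.val) this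

/-- The Fox derivative, extended `k`-linearly to the group algebra. -/
noncomputable def foxD (t : S) :
    MonoidAlgebra k (FreeGroup S) →ₗ[k] MonoidAlgebra k (FreeGroup S) :=
  Finsupp.linearCombination k (fun w => (foxHom k S t w).d) ∘ₗ
    (MonoidAlgebra.coeffLinearEquiv k).toLinearMap

lemma foxD_single (t : S) (w : FreeGroup S) (c : k) :
    foxD k S t (MonoidAlgebra.single w c) = c • (foxHom k S t w).d :=
  Finsupp.linearCombination_single k c w

lemma augHom_single (w : FreeGroup S) (c : k) :
    augHom k (FreeGroup S) (MonoidAlgebra.single w c) = c := by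
  simp [augHom, MonoidAlgebra.lift_single]

lemma foxD_mul (t : S) (a b : MonoidAlgebra k (FreeGroup S)) :
    foxD k S t (a * b) =
      augHom k (FreeGroup S) b • foxD k S t a + a * foxD k S t b := by
  induction a using MonoidAlgebra.induction_linear with
  | zero => simp
  | add x y hx hy =>
    rw [add_mul, map_add, hx, hy, map_add, smul_add, add_mul]; abel
  | single u c =>
    induction b using MonoidAlgebra.induction_linear with
    | zero => simp
    | add x y hx hy =>
      rw [mul_add, map_add, hx, hy, map_add, map_add, add_smul, mul_add]; abel
    | single v d =>
      rw [MonoidAlgebra.single_mul_single, foxD_single, foxD_single, foxD_single,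
        augHom_single, map_mul, FoxPair.mul_d, foxHom_u]
      have hs : (MonoidAlgebra.single u c : MonoidAlgebra k (FreeGroup S)) =
          c • MonoidAlgebra.of k (FreeGroup S) u := by
        rw [MonoidAlgebra.of_apply, MonoidAlgebra.smul_single', mul_one]
      rw [hs]
      simp only [smul_add, smul_smul, smul_mul_assoc, mul_smul_comm, mul_comm d c]

lemma foxD_of_sub_one (t s : S) :
    foxD k S t (MonoidAlgebra.of k (FreeGroup S) (FreeGroup.of s) - 1) =
      if s = t then 1 else 0 := by
  have h1 : foxD k S t (1 : MonoidAlgebra k (FreeGroup S)) = 0 := by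
    rw [MonoidAlgebra.one_def, foxD_single]
    simp
  rw [map_sub, h1, sub_zero, MonoidAlgebra.of_apply, foxD_single, one_smul]
  simp [foxHom]

lemma augHom_of_sub_one (s : S) :
    augHom k (FreeGroup S) (MonoidAlgebra.of k (FreeGroup S) (FreeGroup.of s) - 1) = 0 := by
  rw [map_sub, map_one, MonoidAlgebra.of_apply, augHom_single, sub_self]

/-- For a free group `F` freely generated by `S`, the family `{s - 1 : s ∈ S}` is a
basis of the augmentation ideal `kI_F` as a left `kF`-module; in particular `kI_F` is
free of rank `|S|`. -/
theorem augmentationIdeal_freeGroup_basis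
    (k : Type) [CommRing k] (S : Type) :
    ∃ b : Module.Basis S (MonoidAlgebra k (FreeGroup S)) ↥(augIdeal k (FreeGroup S)),
      ∀ s : S, (b s : MonoidAlgebra k (FreeGroup S)) =
        MonoidAlgebra.of k (FreeGroup S) (FreeGroup.of s) - 1 := by
  classical
  set v : S → MonoidAlgebra k (FreeGroup S) := fun s => MonoidAlgebra.of k (FreeGroup S) (FreeGroup.of s) - 1 with hv
  -- linear independence via Fox derivatives
  have hli : LinearIndependent (MonoidAlgebra k (FreeGroup S)) v := by
    rw [linearIndependent_iff]
    intro l hl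
    refine Finsupp.ext fun t => ?_
    have h0 := congrArg (foxD k S t) hl
    rw [map_zero, Finsupp.linearCombination_apply, Finsupp.sum, map_sum] at h0
    have hterm : ∀ s ∈ l.support,
        foxD k S t (l s • v s) = if s = t then l s else 0 := by
      intro s _
      rw [smul_eq_mul, hv, foxD_mul, augHom_of_sub_one, zero_smul, zero_add,
        foxD_of_sub_one]
      split <;> simp
    rw [Finset.sum_congr rfl hterm, Finset.sum_ite_eq' l.support t (fun s => l s)] at h0
    by_cases ht : t ∈ l.support
    · simpa [ht] using h0
    · exact Finsupp.notMem_support_iff.mp ht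
  -- spanning
  have hmem : ∀ w : FreeGroup S,
      (MonoidAlgebra.of k (FreeGroup S) w : MonoidAlgebra k (FreeGroup S)) - 1 ∈ Submodule.span (MonoidAlgebra k (FreeGroup S)) (Set.range v) := by
    intro w
    induction w with
    | C1 =>
      rw [map_one, sub_self]
      exact (Submodule.span (MonoidAlgebra k (FreeGroup S)) (Set.range v)).zero_mem
    | of s => exact Submodule.subset_span ⟨s, rfl⟩
    | inv_of s ih =>
      show (MonoidAlgebra.of k (FreeGroup S) (FreeGroup.of s)⁻¹ : MonoidAlgebra k (FreeGroup S)) - 1 ∈ _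
      have key : (MonoidAlgebra.of k (FreeGroup S) (FreeGroup.of s)⁻¹ : MonoidAlgebra k (FreeGroup S)) - 1 =
          (-(MonoidAlgebra.of k (FreeGroup S) (FreeGroup.of s)⁻¹)) •
            ((MonoidAlgebra.of k (FreeGroup S) (FreeGroup.of s) : MonoidAlgebra k (FreeGroup S)) - 1) := by
        rw [smul_eq_mul, neg_mul, mul_sub, mul_one, ← map_mul, inv_mul_cancel, map_one,
          neg_sub]
      rw [key]
      exact Submodule.smul_mem _ _ ih
    | mul x y ihx ihy =>
      have key : (MonoidAlgebra.of k (FreeGroup S) (x * y) : MonoidAlgebra k (FreeGroup S)) - 1 =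
          (MonoidAlgebra.of k (FreeGroup S) x : MonoidAlgebra k (FreeGroup S)) •
            ((MonoidAlgebra.of k (FreeGroup S) y : MonoidAlgebra k (FreeGroup S)) - 1) +
          ((MonoidAlgebra.of k (FreeGroup S) x : MonoidAlgebra k (FreeGroup S)) - 1) := by
        rw [smul_eq_mul, mul_sub, mul_one, ← map_mul, sub_add_sub_cancel]
      rw [key]
      exact Submodule.add_mem _ (Submodule.smul_mem _ _ ihy) ihx
  have hspan : Submodule.span (MonoidAlgebra k (FreeGroup S)) (Set.range v) = augIdeal k (FreeGroup S) := by
    apply le_antisymm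
    · rw [Submodule.span_le]
      rintro _ ⟨s, rfl⟩
      show augHom k (FreeGroup S) _ = 0
      exact augHom_of_sub_one k S s
    · intro x hx
      have hx0 : augHom k (FreeGroup S) x = 0 := hx
      have hsum : ∑ w ∈ x.coeff.support, x.coeff w = 0 := by
        have : augHom k (FreeGroup S) x = ∑ w ∈ x.coeff.support, x.coeff w := by
          conv_lhs => rw [← MonoidAlgebra.sum_coeff_single x]
          rw [map_finsuppSum, Finsupp.sum]
          exact Finset.sum_congr rfl fun w _ => augHom_single k S w (x.coeff w)
        rw [← this, hx0]
      have hxe : x = ∑ w ∈ x.coeff.support,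
          (MonoidAlgebra.single (1 : FreeGroup S) (x.coeff w) : MonoidAlgebra k (FreeGroup S)) *
            ((MonoidAlgebra.of k (FreeGroup S) w : MonoidAlgebra k (FreeGroup S)) - 1) := by
        have key : ∀ w : FreeGroup S, (MonoidAlgebra.single (1 : FreeGroup S) (x.coeff w) : MonoidAlgebra k (FreeGroup S)) *
            ((MonoidAlgebra.of k (FreeGroup S) w : MonoidAlgebra k (FreeGroup S)) - 1) =
            MonoidAlgebra.single w (x.coeff w) - MonoidAlgebra.single (1 : FreeGroup S) (x.coeff w) := by
          intro w
          rw [mul_sub, mul_one, MonoidAlgebra.of_apply, MonoidAlgebra.single_mul_single,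
            one_mul, mul_one]
        rw [Finset.sum_congr rfl fun w _ => key w, Finset.sum_sub_distrib]
        have h2 : ∑ w ∈ x.coeff.support, (MonoidAlgebra.single (1 : FreeGroup S) (x.coeff w) : MonoidAlgebra k (FreeGroup S)) =
            MonoidAlgebra.single (1 : FreeGroup S) (∑ w ∈ x.coeff.support, x.coeff w) :=
          (map_sum (MonoidAlgebra.singleAddHom (1 : FreeGroup S)) (fun w => x.coeff w) x.coeff.support).symm
        rw [h2, hsum, MonoidAlgebra.single_zero, sub_zero]
        exact (MonoidAlgebra.sum_coeff_single x).symm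
      rw [hxe]
      exact Submodule.sum_mem _ fun w _ => Submodule.smul_mem _ _ (hmem w)
  refine ⟨(Module.Basis.span hli).map (LinearEquiv.ofEq _ _ hspan), fun s => ?_⟩
  rw [Module.Basis.map_apply, LinearEquiv.coe_ofEq_apply]
  exact congrArg Subtype.val (Module.Basis.span_apply hli s)
end

section
/- Let k be a commutative ring, let F be the free group freely generated by a set S, let T ⊆ F, let N be the normal closure of T in F, let G = F/N, and let π : kF → kG be the induced ring homomorphism. For f ∈ F let ∂f/∂s ∈ kF (s ∈ S, all but finitely many zero) denote the unique Fox derivatives satisfying f − 1 = Σ_{s∈S} (∂f/∂s)(s − 1) in kF. Let kG^(S) be the free left kG-module with basis {e_s : s ∈ S} and let ∂₁ : kG^(S) → kG be the kG-linear map with ∂₁(e_s) = π(s) − 1. Then: (a) the image of ∂₁ equals the augmentation ideal kI_G; (b) the map N → kG^(S) sending r ↦ Σ_{s∈S} π(∂r/∂s)·e_s is a group homomorphism from N to the additive group of kG^(S) that vanishes on [N,N], the induced k-linear map k ⊗_ℤ (N/[N,N]) → kG^(S) is injective, and its image equals the kernel of ∂₁; in particular, the kernel of ∂₁ is the kG-submodule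 of kG^(S) generated by {Σ_{s∈S} π(∂t/∂s)·e_s : t ∈ T}. -/
open scoped TensorProduct

/-- The quotient `G = F/N` of the free group on `S` by the normal closure `N` of a set
`T` of relators. -/
abbrev RelQuot (S : Type) (T : Set (FreeGroup S)) : Type :=
  FreeGroup S ⧸ Subgroup.normalClosure T

/-- The ring homomorphism `π : kF → kG` induced by the projection `F → G = F/N`. -/
noncomputable def foxPi (k S : Type) [CommRing k] (T : Set (FreeGroup S)) :
    MonoidAlgebra k (FreeGroup S) →ₐ[k] MonoidAlgebra k (RelQuot S T) :=
  MonoidAlgebra.lift k (MonoidAlgebra k (RelQuot S T)) (FreeGroup S)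
    ((MonoidAlgebra.of k (RelQuot S T)).comp
      (QuotientGroup.mk' (Subgroup.normalClosure T)))

/-- The map `∂₁ : kG^(S) → kG` sending the basis vector `e_s` to `π(s) - 1`, where
`kG^(S)` is realised as `S →₀ kG` (so `e_s = Finsupp.single s 1`). -/
noncomputable def foxD1 (k S : Type) [CommRing k] (T : Set (FreeGroup S)) :
    (S →₀ MonoidAlgebra k (RelQuot S T)) → MonoidAlgebra k (RelQuot S T) :=
  fun w => w.sum fun s c =>
    c * (MonoidAlgebra.of k (RelQuot S T) (QuotientGroup.mk (FreeGroup.of s)) - 1)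

/-- The map `F → kG^(S)`, `f ↦ Σ_s π(∂f/∂s)·e_s`, built from a family `D` of Fox
derivatives. -/
noncomputable def foxRho (k S : Type) [CommRing k] (T : Set (FreeGroup S))
    (D : FreeGroup S → (S →₀ MonoidAlgebra k (FreeGroup S))) :
    FreeGroup S → (S →₀ MonoidAlgebra k (RelQuot S T)) :=
  fun f => (D f).mapRange (foxPi k S T) (map_zero _)

noncomputable section

namespace FoxCalc

variable (k S : Type) [CommRing k]

lemma pure_eq_of (s : S) : (pure s : FreeGroup S) = FreeGroup.of s := rfl

/-- Auxiliary group for defining Fox derivatives. -/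
@[ext] structure FoxPair (k S : Type) [CommRing k] where
  g : FreeGroup S
  d : S →₀ MonoidAlgebra k (FreeGroup S)

namespace FoxPair

instance : One (FoxPair k S) := ⟨⟨1, 0⟩⟩
instance : Mul (FoxPair k S) :=
  ⟨fun x y => ⟨x.g * y.g, x.d + (MonoidAlgebra.of k (FreeGroup S) x.g) • y.d⟩⟩
instance : Inv (FoxPair k S) :=
  ⟨fun x => ⟨x.g⁻¹, -((MonoidAlgebra.of k (FreeGroup S) x.g⁻¹) • x.d)⟩⟩

@[simp] lemma one_g : (1 : FoxPair k S).g = 1 := rfl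
@[simp] lemma one_d : (1 : FoxPair k S).d = 0 := rfl
@[simp] lemma mul_g (x y : FoxPair k S) : (x * y).g = x.g * y.g := rfl
@[simp] lemma mul_d (x y : FoxPair k S) :
    (x * y).d = x.d + (MonoidAlgebra.of k (FreeGroup S) x.g) • y.d := rfl
@[simp] lemma inv_g (x : FoxPair k S) : (x⁻¹).g = x.g⁻¹ := rfl
@[simp] lemma inv_d (x : FoxPair k S) :
    (x⁻¹).d = -((MonoidAlgebra.of k (FreeGroup S) x.g⁻¹) • x.d) := rfl

instance : Group (FoxPair k S) where
  mul_assoc x y z := by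
    refine FoxPair.ext (mul_assoc ..) ?_
    simp only [mul_d, mul_g, map_mul, mul_smul, smul_add, add_assoc]
  one_mul x := by
    refine FoxPair.ext (one_mul _) ?_
    simp [← MonoidAlgebra.one_def]
  mul_one x := by refine FoxPair.ext (mul_one _) ?_; simp
  inv_mul_cancel x := by
    refine FoxPair.ext (inv_mul_cancel _) ?_
    simp [← mul_smul, ← map_mul]

end FoxPair

/-- The homomorphism computing Fox derivatives. -/
def foxHom : FreeGroup S →* FoxPair k S :=
  FreeGroup.lift fun s =>
    ⟨FreeGroup.of s, Finsupp.single s (1 : MonoidAlgebra k (FreeGroup S))⟩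

@[simp] lemma foxHom_of (s : S) :
    foxHom k S (FreeGroup.of s) =
      ⟨FreeGroup.of s, Finsupp.single s (1 : MonoidAlgebra k (FreeGroup S))⟩ :=
  FreeGroup.lift_apply_of

@[simp] lemma foxHom_g (f : FreeGroup S) : (foxHom k S f).g = f := by
  induction f using FreeGroup.induction_on with
  | C1 => simp
  | of s => rw [foxHom_of]
  | inv_of s ih => rw [map_inv, FoxPair.inv_g, ih]
  | mul x y ihx ihy => rw [map_mul, FoxPair.mul_g, ihx, ihy]

/-- The Fox derivative (all partials at once). -/
def Dfun (f : FreeGroup S) : S →₀ MonoidAlgebra k (FreeGroup S) := (foxHom k S f).d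

@[simp] lemma Dfun_one : Dfun k S 1 = 0 := by simp [Dfun]

@[simp] lemma Dfun_of (s : S) :
    Dfun k S (FreeGroup.of s) = Finsupp.single s 1 := by
  simp [Dfun]

lemma Dfun_mul (f f' : FreeGroup S) :
    Dfun k S (f * f') =
      Dfun k S f + (MonoidAlgebra.of k (FreeGroup S) f) • Dfun k S f' := by
  simp [Dfun, map_mul]

lemma Dfun_inv (f : FreeGroup S) :
    Dfun k S f⁻¹ = -((MonoidAlgebra.of k (FreeGroup S) f⁻¹) • Dfun k S f) := by
  simp [Dfun, map_inv]

/-- `J : kF^(S) → kF`, `e_s ↦ s - 1`, as a `kF`-linear map. -/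
def Jmap : (S →₀ MonoidAlgebra k (FreeGroup S)) →ₗ[MonoidAlgebra k (FreeGroup S)]
    MonoidAlgebra k (FreeGroup S) :=
  Finsupp.lsum ℕ fun s => LinearMap.toSpanSingleton (MonoidAlgebra k (FreeGroup S))
    (MonoidAlgebra k (FreeGroup S)) (MonoidAlgebra.of k (FreeGroup S) (FreeGroup.of s) - 1)

lemma Jmap_apply (w : S →₀ MonoidAlgebra k (FreeGroup S)) :
    Jmap k S w = w.sum fun s c =>
      c * (MonoidAlgebra.of k (FreeGroup S) (FreeGroup.of s) - 1) := by
  rfl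

@[simp] lemma Jmap_single (s : S) (c : MonoidAlgebra k (FreeGroup S)) :
    Jmap k S (Finsupp.single s c) =
      c * (MonoidAlgebra.of k (FreeGroup S) (FreeGroup.of s) - 1) := by
  simp [Jmap, smul_eq_mul]

/-- The defining property of Fox derivatives. -/
lemma Dfun_spec (f : FreeGroup S) :
    MonoidAlgebra.of k (FreeGroup S) f - 1 = Jmap k S (Dfun k S f) := by
  induction f using FreeGroup.induction_on with
  | C1 => simp [MonoidAlgebra.one_def]
  | of s => rw [Dfun_of, Jmap_single, one_mul]
  | inv_of s ih =>
      rw [Dfun_inv, map_neg, LinearMap.map_smul, ← ih, smul_eq_mul, mul_sub, mul_one,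
        ← map_mul, inv_mul_cancel, map_one, neg_sub]
  | mul x y ihx ihy =>
      rw [Dfun_mul, map_add, LinearMap.map_smul, ← ihx, ← ihy, smul_eq_mul, map_mul]
      rw [mul_sub, mul_one]
      abel

/-- The `k`-linear extension of the Fox derivative to the group algebra. -/
def Dlin : MonoidAlgebra k (FreeGroup S) →ₗ[k] (S →₀ MonoidAlgebra k (FreeGroup S)) :=
  (Finsupp.lsum k fun f => LinearMap.toSpanSingleton k _ (Dfun k S f)) ∘ₗ
    (MonoidAlgebra.coeffLinearEquiv k).toLinearMap

@[simp] lemma Dlin_single (f : FreeGroup S) (c : k) :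
    Dlin k S (MonoidAlgebra.single f c) = c • Dfun k S f := by
  rw [Dlin, LinearMap.comp_apply, LinearEquiv.coe_coe, MonoidAlgebra.coeffLinearEquiv_apply, MonoidAlgebra.coeff_single]
  rw [Finsupp.lsum_single]
  rfl

lemma Dlin_mul_sub_one (t : S) (a : MonoidAlgebra k (FreeGroup S)) :
    Dlin k S (a * (MonoidAlgebra.of k (FreeGroup S) (FreeGroup.of t) - 1)) =
      Finsupp.single t a := by
  induction a using MonoidAlgebra.induction_linear with
  | zero => simp
  | add a b ha hb => rw [add_mul, map_add, ha, hb, ← Finsupp.single_add]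
  | single f c =>
      rw [mul_sub, mul_one, MonoidAlgebra.of_apply, MonoidAlgebra.single_mul_single, mul_one,
        map_sub, Dlin_single, Dlin_single, Dfun_mul, Dfun_of]
      rw [smul_add, sub_eq_iff_eq_add']
      congr 1
      rw [Finsupp.smul_single, smul_eq_mul, mul_one, Finsupp.smul_single]
      congr 1
      simp [MonoidAlgebra.of_apply, MonoidAlgebra.smul_single']

lemma Dlin_Jmap (w : S →₀ MonoidAlgebra k (FreeGroup S)) :
    Dlin k S (Jmap k S w) = w := by
  induction w using Finsupp.induction_linear with
  | zero => simp
  | add a b ha hb => rw [map_add, map_add, ha, hb]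
  | single s c => rw [Jmap_single, Dlin_mul_sub_one]

lemma Jmap_injective : Function.Injective (Jmap k S) :=
  Function.LeftInverse.injective (Dlin_Jmap k S)

section Quot

variable (T : Set (FreeGroup S))

lemma pi_of (f : FreeGroup S) :
    foxPi k S T (MonoidAlgebra.of k (FreeGroup S) f) =
      MonoidAlgebra.of k (RelQuot S T) (QuotientGroup.mk f) := by
  rw [foxPi, MonoidAlgebra.lift_of]
  rfl

/-- `ρ : F → kG^(S)` built from the canonical Fox derivatives. -/
def rho (f : FreeGroup S) : S →₀ MonoidAlgebra k (RelQuot S T) :=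
  (Dfun k S f).mapRange (foxPi k S T) (map_zero _)

lemma mapRange_pi_smul (a : MonoidAlgebra k (FreeGroup S))
    (w : S →₀ MonoidAlgebra k (FreeGroup S)) :
    (a • w).mapRange (foxPi k S T) (map_zero _) =
      foxPi k S T a • w.mapRange (foxPi k S T) (map_zero _) := by
  ext s
  simp [Finsupp.mapRange_apply, smul_eq_mul, map_mul]

@[simp] lemma rho_one : rho k S T 1 = 0 := by simp [rho]

@[simp] lemma rho_of (s : S) : rho k S T (FreeGroup.of s) = Finsupp.single s 1 := by
  simp [rho]

lemma rho_mul (f f' : FreeGroup S) :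
    rho k S T (f * f') = rho k S T f +
      (MonoidAlgebra.of k (RelQuot S T) (QuotientGroup.mk f)) • rho k S T f' := by
  rw [rho, Dfun_mul, Finsupp.mapRange_add (map_add _), mapRange_pi_smul, pi_of]
  rfl

lemma rho_inv (f : FreeGroup S) :
    rho k S T f⁻¹ =
      -((MonoidAlgebra.of k (RelQuot S T) (QuotientGroup.mk f)⁻¹) • rho k S T f) := by
  have h0 : rho k S T (f⁻¹ * f) = 0 := by rw [inv_mul_cancel, rho_one]
  rw [rho_mul] at h0
  have h1 := eq_neg_of_add_eq_zero_left h0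
  rw [h1]
  norm_cast

lemma mk_eq_one_of_mem {r : FreeGroup S} (h : r ∈ Subgroup.normalClosure T) :
    (QuotientGroup.mk r : RelQuot S T) = 1 := (QuotientGroup.eq_one_iff r).mpr h

lemma rho_mul_of_mem {r r' : FreeGroup S} (h : r ∈ Subgroup.normalClosure T) :
    rho k S T (r * r') = rho k S T r + rho k S T r' := by
  rw [rho_mul, mk_eq_one_of_mem S T h, map_one, one_smul]

lemma rho_inv_of_mem {r : FreeGroup S} (h : r ∈ Subgroup.normalClosure T) :
    rho k S T r⁻¹ = -rho k S T r := by
  rw [rho_inv, mk_eq_one_of_mem S T h, inv_one, map_one, one_smul]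

open Classical in
/-- A set-theoretic section of `F → G` with `σ 1 = 1`. -/
def sigma (g : RelQuot S T) : FreeGroup S := if g = 1 then 1 else g.out

@[simp] lemma sigma_one : sigma S T 1 = 1 := if_pos rfl

@[simp] lemma mk_sigma (g : RelQuot S T) :
    (QuotientGroup.mk (sigma S T g) : RelQuot S T) = g := by
  rw [sigma]
  split
  · rename_i h; rw [h]; rfl
  · exact QuotientGroup.out_eq' g

/-- The element `σ(g)·f·σ(g·f̄)⁻¹` of `N`. -/
def wElt (g : RelQuot S T) (f : FreeGroup S) : FreeGroup S :=
  sigma S T g * f * (sigma S T (g * QuotientGroup.mk f))⁻¹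

lemma wElt_mem (g : RelQuot S T) (f : FreeGroup S) :
    wElt S T g f ∈ Subgroup.normalClosure T := by
  rw [← QuotientGroup.eq_one_iff, wElt]
  simp only [QuotientGroup.mk_mul, QuotientGroup.mk_inv, mk_sigma]
  group

/-- The map `Φ : G × F → N_ab`, `(g, f) ↦ [σ(g)·f·σ(g·f̄)⁻¹]`. -/
def Phi (g : RelQuot S T) (f : FreeGroup S) :
    Additive (Abelianization ↥(Subgroup.normalClosure T)) :=
  Additive.ofMul (Abelianization.of ⟨wElt S T g f, wElt_mem S T g f⟩)

@[simp] lemma Phi_one (g : RelQuot S T) : Phi S T g 1 = 0 := by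
  have : (⟨wElt S T g 1, wElt_mem S T g 1⟩ : ↥(Subgroup.normalClosure T)) = 1 := by
    ext
    simp [wElt]
  rw [Phi, this, map_one]
  rfl

lemma Phi_mul (g : RelQuot S T) (f f' : FreeGroup S) :
    Phi S T g (f * f') = Phi S T g f + Phi S T (g * QuotientGroup.mk f) f' := by
  have : (⟨wElt S T g (f * f'), wElt_mem S T g (f * f')⟩ :
      ↥(Subgroup.normalClosure T)) =
      ⟨wElt S T g f, wElt_mem S T g f⟩ *
        ⟨wElt S T (g * QuotientGroup.mk f) f', wElt_mem S T (g * QuotientGroup.mk f) f'⟩ := by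
    ext
    simp only [wElt, QuotientGroup.mk_mul]
    push_cast
    group
  rw [Phi, this, map_mul]
  rfl

lemma Phi_inv (g : RelQuot S T) (f : FreeGroup S) :
    Phi S T g f⁻¹ = -Phi S T (g * (QuotientGroup.mk f)⁻¹) f := by
  have : (⟨wElt S T g f⁻¹, wElt_mem S T g f⁻¹⟩ : ↥(Subgroup.normalClosure T)) =
      (⟨wElt S T (g * (QuotientGroup.mk f)⁻¹) f,
        wElt_mem S T (g * (QuotientGroup.mk f)⁻¹) f⟩)⁻¹ := by
    ext
    show wElt S T g f⁻¹ = (wElt S T (g * (QuotientGroup.mk f)⁻¹) f)⁻¹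
    simp only [wElt, QuotientGroup.mk_inv]
    group
  rw [Phi, this, map_inv]
  rfl

lemma Phi_id {r : FreeGroup S} (h : r ∈ Subgroup.normalClosure T) :
    Phi S T 1 r = Additive.ofMul (Abelianization.of ⟨r, h⟩) := by
  have : (⟨wElt S T 1 r, wElt_mem S T 1 r⟩ : ↥(Subgroup.normalClosure T)) = ⟨r, h⟩ := by
    ext
    show wElt S T 1 r = r
    simp only [wElt, (QuotientGroup.eq_one_iff r).mpr h]
    simp
  rw [Phi, this]

/-- `∂₁` as a `kG`-linear map. -/
def D1B : (S →₀ MonoidAlgebra k (RelQuot S T)) →ₗ[MonoidAlgebra k (RelQuot S T)]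
    MonoidAlgebra k (RelQuot S T) :=
  Finsupp.lsum ℕ fun s => LinearMap.toSpanSingleton (MonoidAlgebra k (RelQuot S T))
    (MonoidAlgebra k (RelQuot S T))
    (MonoidAlgebra.of k (RelQuot S T) (QuotientGroup.mk (FreeGroup.of s)) - 1)

lemma foxD1_eq : foxD1 k S T = D1B k S T := rfl

@[simp] lemma D1B_single (s : S) (c : MonoidAlgebra k (RelQuot S T)) :
    D1B k S T (Finsupp.single s c) =
      c * (MonoidAlgebra.of k (RelQuot S T) (QuotientGroup.mk (FreeGroup.of s)) - 1) := by
  simp [D1B, smul_eq_mul]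

lemma pi_Jmap (w : S →₀ MonoidAlgebra k (FreeGroup S)) :
    foxPi k S T (Jmap k S w) = D1B k S T (w.mapRange (foxPi k S T) (map_zero _)) := by
  induction w using Finsupp.induction_linear with
  | zero => simp
  | add a b ha hb =>
      rw [map_add, map_add, ha, hb, Finsupp.mapRange_add (map_add _), map_add]
  | single s c =>
      rw [Jmap_single, Finsupp.mapRange_single, D1B_single, map_mul, map_sub, map_one, pi_of]

lemma D1B_rho (f : FreeGroup S) :
    D1B k S T (rho k S T f) =
      MonoidAlgebra.of k (RelQuot S T) (QuotientGroup.mk f) - 1 := by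
  rw [rho, ← pi_Jmap, ← Dfun_spec, map_sub, map_one, pi_of]

/-- `η : kG → kG^(S)`, `g ↦ ρ(σ g)`, `k`-linearly extended. -/
def etaMap : MonoidAlgebra k (RelQuot S T) →ₗ[k] (S →₀ MonoidAlgebra k (RelQuot S T)) :=
  (Finsupp.lsum k fun g => LinearMap.toSpanSingleton k _ (rho k S T (sigma S T g))) ∘ₗ
    (MonoidAlgebra.coeffLinearEquiv k).toLinearMap

@[simp] lemma etaMap_single (g : RelQuot S T) (c : k) :
    etaMap k S T (MonoidAlgebra.single g c) = c • rho k S T (sigma S T g) := by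
  rw [etaMap, LinearMap.comp_apply, LinearEquiv.coe_coe, MonoidAlgebra.coeffLinearEquiv_apply, MonoidAlgebra.coeff_single]
  rw [Finsupp.lsum_single]
  rfl

@[simp] lemma etaMap_of (g : RelQuot S T) :
    etaMap k S T (MonoidAlgebra.of k (RelQuot S T) g) = rho k S T (sigma S T g) := by
  rw [MonoidAlgebra.of_apply, etaMap_single, one_smul]

lemma D1B_etaMap (a : MonoidAlgebra k (RelQuot S T)) :
    D1B k S T (etaMap k S T a) = a - algebraMap k _ (augHom k (RelQuot S T) a) := by
  induction a using MonoidAlgebra.induction_linear with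
  | zero => simp
  | add a b ha hb =>
      rw [map_add, map_add, ha, hb, map_add, map_add]
      exact sub_add_sub_comm _ _ _ _
  | single g c =>
      rw [etaMap_single, LinearMap.map_smul_of_tower, D1B_rho, mk_sigma]
      have : augHom k (RelQuot S T) (MonoidAlgebra.single g c) = c := by
        simp [augHom, MonoidAlgebra.lift_single]
      rw [this, smul_sub, Algebra.algebraMap_eq_smul_one]
      congr 1
      rw [MonoidAlgebra.of_apply, MonoidAlgebra.smul_single', mul_one]

/-- `τ : kG^(S) → k ⊗ N_ab`, `e_s·g ↦ 1 ⊗ Φ(g, s)`, `k`-linearly extended. -/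
def tauMap : (S →₀ MonoidAlgebra k (RelQuot S T)) →ₗ[k]
    (k ⊗[ℤ] Additive (Abelianization ↥(Subgroup.normalClosure T))) :=
  Finsupp.lsum k fun s => (Finsupp.lsum k fun g =>
    LinearMap.toSpanSingleton k _ ((1 : k) ⊗ₜ[ℤ] Phi S T g (FreeGroup.of s))) ∘ₗ
    (MonoidAlgebra.coeffLinearEquiv k).toLinearMap

@[simp] lemma tauMap_single (s : S) (g : RelQuot S T) (c : k) :
    tauMap k S T (Finsupp.single s (MonoidAlgebra.single g c)) =
      c ⊗ₜ[ℤ] Phi S T g (FreeGroup.of s) := by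
  rw [tauMap, Finsupp.lsum_single, LinearMap.comp_apply, LinearEquiv.coe_coe, MonoidAlgebra.coeffLinearEquiv_apply,
    MonoidAlgebra.coeff_single, Finsupp.lsum_single]
  rw [LinearMap.toSpanSingleton_apply, TensorProduct.smul_tmul', smul_eq_mul, mul_one]

/-- `ρ` as a group hom on `N`. -/
def rhoN : ↥(Subgroup.normalClosure T) →*
    Multiplicative (S →₀ MonoidAlgebra k (RelQuot S T)) where
  toFun r := Multiplicative.ofAdd (rho k S T (r : FreeGroup S))
  map_one' := by simp
  map_mul' r r' := by
    simp only [Subgroup.coe_mul, rho_mul_of_mem k S T r.2]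
    rfl

/-- The induced `k`-linear map `k ⊗ N_ab → kG^(S)`. -/
def ellMap : (k ⊗[ℤ] Additive (Abelianization ↥(Subgroup.normalClosure T))) →ₗ[k]
    (S →₀ MonoidAlgebra k (RelQuot S T)) :=
  LinearMap.liftBaseChange k
    ((MonoidHom.toAdditiveLeft (Abelianization.lift (rhoN k S T))).toIntLinearMap)

@[simp] lemma ellMap_tmul (c : k) (r : ↥(Subgroup.normalClosure T)) :
    ellMap k S T (c ⊗ₜ[ℤ] Additive.ofMul (Abelianization.of r)) =
      c • rho k S T (r : FreeGroup S) := by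
  rw [ellMap, LinearMap.liftBaseChange_tmul]
  rfl

lemma rho_wElt (g : RelQuot S T) (f : FreeGroup S) :
    rho k S T (wElt S T g f) =
      rho k S T (sigma S T g) +
        (MonoidAlgebra.of k (RelQuot S T) g) • rho k S T f -
        rho k S T (sigma S T (g * QuotientGroup.mk f)) := by
  rw [wElt, rho_mul, rho_mul, rho_inv, smul_neg, ← mul_smul, ← map_mul]
  simp only [QuotientGroup.mk_mul, QuotientGroup.mk_inv, mk_sigma, mul_inv_cancel, map_one,
    one_smul]
  abel

/-- Key computation: `τ(g·ρ(f)) = 1 ⊗ Φ(g, f)`. -/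
lemma tau_smul_rho (f : FreeGroup S) :
    ∀ g : RelQuot S T,
      tauMap k S T ((MonoidAlgebra.of k (RelQuot S T) g) • rho k S T f) =
        (1 : k) ⊗ₜ[ℤ] Phi S T g f := by
  induction f using FreeGroup.induction_on with
  | C1 => intro g; simp
  | of s =>
      intro g
      rw [rho_of, Finsupp.smul_single, smul_eq_mul, mul_one,
        MonoidAlgebra.of_apply, tauMap_single]
  | inv_of s ih =>
      intro g
      rw [rho_inv, rho_of, smul_neg, ← mul_smul, ← map_mul, Finsupp.smul_single,
        smul_eq_mul, mul_one, map_neg, MonoidAlgebra.of_apply, tauMap_single, Phi_inv,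
        TensorProduct.tmul_neg]
  | mul x y ihx ihy =>
      intro g
      rw [rho_mul, smul_add, map_add, ihx, ← mul_smul, ← map_mul, ihy]
      rw [Phi_mul, TensorProduct.tmul_add]

lemma tau_rho {r : FreeGroup S} (h : r ∈ Subgroup.normalClosure T) :
    tauMap k S T (rho k S T r) =
      (1 : k) ⊗ₜ[ℤ] Additive.ofMul (Abelianization.of
        (⟨r, h⟩ : ↥(Subgroup.normalClosure T))) := by
  have := tau_smul_rho k S T r 1
  rw [map_one, one_smul, Phi_id S T h] at this
  exact this

/-- The contracting-homotopy identity: `ℓ ∘ τ + η ∘ ∂₁ = id`. -/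
lemma ell_tau_eta (w : S →₀ MonoidAlgebra k (RelQuot S T)) :
    ellMap k S T (tauMap k S T w) + etaMap k S T (D1B k S T w) = w := by
  induction w using Finsupp.induction_linear with
  | zero => simp
  | add a b ha hb =>
      rw [map_add, map_add, map_add, map_add]
      rw [add_add_add_comm, ha, hb]
  | single s b =>
      induction b using MonoidAlgebra.induction_linear with
      | zero => simp
      | add a b ha hb =>
          rw [Finsupp.single_add, map_add, map_add, map_add, map_add,
            add_add_add_comm, ha, hb, ← Finsupp.single_add]
      | single g c =>
          rw [tauMap_single, D1B_single]
          have hc : (MonoidAlgebra.single g c : MonoidAlgebra k (RelQuot S T)) =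
              c • MonoidAlgebra.of k (RelQuot S T) g := by
            rw [MonoidAlgebra.of_apply, MonoidAlgebra.smul_single', mul_one]
          have h2 : (c ⊗ₜ[ℤ] Phi S T g (FreeGroup.of s)) =
              c • ((1:k) ⊗ₜ[ℤ] Phi S T g (FreeGroup.of s)) := by
            rw [TensorProduct.smul_tmul', smul_eq_mul, mul_one]
          have h3 : ellMap k S T ((1:k) ⊗ₜ[ℤ] Phi S T g (FreeGroup.of s)) =
              rho k S T (wElt S T g (FreeGroup.of s)) := by
            have := ellMap_tmul k S T 1
              ⟨wElt S T g (FreeGroup.of s), wElt_mem S T g (FreeGroup.of s)⟩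
            rw [one_smul] at this
            exact this
          have h4 : rho k S T (sigma S T g) +
              (MonoidAlgebra.of k (RelQuot S T)) g • rho k S T (FreeGroup.of s) -
              rho k S T (sigma S T (g * QuotientGroup.mk (FreeGroup.of s))) +
              (rho k S T (sigma S T (g * QuotientGroup.mk (FreeGroup.of s))) -
                rho k S T (sigma S T g)) =
              (MonoidAlgebra.of k (RelQuot S T)) g • rho k S T (FreeGroup.of s) := by
            abel
          rw [h2, map_smul, h3, rho_wElt, hc, smul_mul_assoc, LinearMap.map_smul_of_tower,
            mul_sub, mul_one, ← map_mul, map_sub, etaMap_of, etaMap_of, ← smul_add, h4,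
            rho_of, Finsupp.smul_single, smul_eq_mul, mul_one, Finsupp.smul_single, ← hc]

lemma ab_surj (m : Additive (Abelianization ↥(Subgroup.normalClosure T))) :
    ∃ r : ↥(Subgroup.normalClosure T), Additive.ofMul (Abelianization.of r) = m := by
  have h1 : ∀ a : Abelianization ↥(Subgroup.normalClosure T),
      ∃ r, Abelianization.of r = a := fun a =>
    QuotientGroup.induction_on a fun z => ⟨z, rfl⟩
  obtain ⟨r, hr⟩ := h1 (Additive.toMul m)
  exact ⟨r, congrArg Additive.ofMul hr⟩

lemma tau_ell (x : k ⊗[ℤ] Additive (Abelianization ↥(Subgroup.normalClosure T))) :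
    tauMap k S T (ellMap k S T x) = x := by
  induction x with
  | zero => simp
  | tmul c m =>
      obtain ⟨r, rfl⟩ := ab_surj S T m
      rw [ellMap_tmul, map_smul, tau_rho k S T r.2]
      rw [TensorProduct.smul_tmul', smul_eq_mul, mul_one]
  | add x y hx hy => rw [map_add, map_add, hx, hy]

lemma D1B_ell (x : k ⊗[ℤ] Additive (Abelianization ↥(Subgroup.normalClosure T))) :
    D1B k S T (ellMap k S T x) = 0 := by
  induction x with
  | zero => simp
  | tmul c m =>
      obtain ⟨r, rfl⟩ := ab_surj S T m
      rw [ellMap_tmul, LinearMap.map_smul_of_tower, D1B_rho, mk_eq_one_of_mem S T r.2,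
        map_one, sub_self, smul_zero]
  | add x y hx hy => rw [map_add, map_add, hx, hy, add_zero]

lemma rho_mem_span {r : FreeGroup S} (h : r ∈ Subgroup.normalClosure T) :
    rho k S T r ∈ Submodule.span (MonoidAlgebra k (RelQuot S T)) (rho k S T '' T) := by
  have h' : r ∈ Subgroup.closure (Group.conjugatesOfSet T) := h
  clear h
  induction h' using Subgroup.closure_induction with
  | mem x hx =>
      obtain ⟨t, ht, hconj⟩ := Group.mem_conjugatesOfSet_iff.mp hx
      obtain ⟨c, hc⟩ := isConj_iff.mp hconj
      have htN : t ∈ Subgroup.normalClosure T := Subgroup.subset_normalClosure ht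
      have hx2 : rho k S T x =
          (MonoidAlgebra.of k (RelQuot S T)) (QuotientGroup.mk c) • rho k S T t := by
        rw [← hc, rho_mul, rho_mul, rho_inv, QuotientGroup.mk_mul,
          mk_eq_one_of_mem S T htN, mul_one, smul_neg, ← mul_smul, ← map_mul,
          mul_inv_cancel, map_one, one_smul]
        abel
      rw [hx2]
      exact Submodule.smul_mem _ _ (Submodule.subset_span ⟨t, ht, rfl⟩)
  | one => rw [rho_one]; exact zero_mem _
  | mul x y hx hy ihx ihy =>
      rw [rho_mul_of_mem k S T (show x ∈ Subgroup.normalClosure T from hx)]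
      exact add_mem ihx ihy
  | inv x hx ihx =>
      rw [rho_inv_of_mem k S T (show x ∈ Subgroup.normalClosure T from hx)]
      exact neg_mem ihx

lemma augHom_of (G : Type*) [Group G] (g : G) :
    augHom k G (MonoidAlgebra.of k G g) = 1 := by
  rw [augHom, MonoidAlgebra.lift_of]
  rfl

lemma augHom_D1B (w : S →₀ MonoidAlgebra k (RelQuot S T)) :
    augHom k (RelQuot S T) (D1B k S T w) = 0 := by
  induction w using Finsupp.induction_linear with
  | zero => simp
  | add a b ha hb => rw [map_add, map_add, ha, hb, add_zero]
  | single s c => rw [D1B_single, map_mul, map_sub, map_one, augHom_of, sub_self, mul_zero]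

end Quot

end FoxCalc

/-- The free presentation of the augmentation ideal via Fox derivatives: with
`N = ⟪T⟫ ⊴ F = FreeGroup S`, `G = F/N`, and `D` the family of Fox derivatives
(`hD` states the defining property `f - 1 = Σ_s (∂f/∂s)(s - 1)`):
(a) the image of `∂₁` is the augmentation ideal `kI_G`;
(b) `r ↦ Σ_s π(∂r/∂s)·e_s` is additive on `N`, vanishes on `[N, N]`, induces an
injective `k`-linear map `k ⊗_ℤ N_{ab} → kG^(S)` whose image is the kernel of `∂₁`;
in particular the kernel of `∂₁` is the `kG`-submodule generated by the images of the
relators `t ∈ T`. -/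
theorem fox_relation_module
    (k S : Type) [CommRing k] (T : Set (FreeGroup S))
    (D : FreeGroup S → (S →₀ MonoidAlgebra k (FreeGroup S)))
    (hD : ∀ f : FreeGroup S,
      MonoidAlgebra.of k (FreeGroup S) f - 1 =
        (D f).sum fun s c =>
          c * (MonoidAlgebra.of k (FreeGroup S) (FreeGroup.of s) - 1)) :
    -- (a) the image of `∂₁` is the augmentation ideal
    (Set.range (foxD1 k S T) =
      (augIdeal k (RelQuot S T) : Set (MonoidAlgebra k (RelQuot S T)))) ∧
    -- (b) `ρ : r ↦ Σ_s π(∂r/∂s) e_s` is additive on `N` ...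
    (∀ r r' : FreeGroup S,
      r ∈ Subgroup.normalClosure T → r' ∈ Subgroup.normalClosure T →
        foxRho k S T D (r * r') = foxRho k S T D r + foxRho k S T D r') ∧
    -- ... vanishes on `[N, N]` ...
    (∀ r ∈ (⁅Subgroup.normalClosure T, Subgroup.normalClosure T⁆ :
        Subgroup (FreeGroup S)), foxRho k S T D r = 0) ∧
    -- ... and induces an injective `k`-linear map `k ⊗_ℤ N_ab → kG^(S)` with image
    -- the kernel of `∂₁`
    (∃ ℓ : TensorProduct ℤ k (Additive (Abelianization ↥(Subgroup.normalClosure T)))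
        →ₗ[k] (S →₀ MonoidAlgebra k (RelQuot S T)),
      (∀ (c : k) (r : ↥(Subgroup.normalClosure T)),
        ℓ (c ⊗ₜ[ℤ] Additive.ofMul (Abelianization.of r)) =
          c • foxRho k S T D (r : FreeGroup S)) ∧
      Function.Injective ℓ ∧
      Set.range ℓ = {w | foxD1 k S T w = 0}) ∧
    -- in particular, the kernel of `∂₁` is generated as a `kG`-module by the images of
    -- the relators
    ({w | foxD1 k S T w = 0} =
      (Submodule.span (MonoidAlgebra k (RelQuot S T)) (foxRho k S T D '' T) :
        Set (S →₀ MonoidAlgebra k (RelQuot S T)))) := by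
  classical
  have hDeq : D = FoxCalc.Dfun k S := by
    funext f
    apply FoxCalc.Jmap_injective k S
    rw [FoxCalc.Jmap_apply, ← hD f, FoxCalc.Dfun_spec k S f]
  have hrho : foxRho k S T D = FoxCalc.rho k S T := by
    funext f
    show (D f).mapRange _ _ = _
    rw [hDeq]
    rfl
  have hD1 : foxD1 k S T = ⇑(FoxCalc.D1B k S T) := FoxCalc.foxD1_eq k S T
  have hle : (⁅Subgroup.normalClosure T, Subgroup.normalClosure T⁆ :
      Subgroup (FreeGroup S)) ≤ Subgroup.normalClosure T := by
    rw [Subgroup.commutator_def]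
    refine (Subgroup.closure_le _).mpr ?_
    rintro x ⟨g₁, h₁, g₂, h₂, rfl⟩
    rw [SetLike.mem_coe, commutatorElement_def]
    exact mul_mem (mul_mem (mul_mem h₁ h₂) (inv_mem h₁)) (inv_mem h₂)
  refine ⟨?_, ?_, ?_, ⟨FoxCalc.ellMap k S T, ?_, ?_, ?_⟩, ?_⟩
  · -- (a)
    ext a
    simp only [Set.mem_range, SetLike.mem_coe, augIdeal, RingHom.mem_ker]
    constructor
    · rintro ⟨w, rfl⟩
      rw [hD1]
      exact FoxCalc.augHom_D1B k S T w
    · intro ha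
      refine ⟨FoxCalc.etaMap k S T a, ?_⟩
      rw [hD1, FoxCalc.D1B_etaMap, ha, map_zero, sub_zero]
  · -- additivity on N
    intro r r' hr hr'
    rw [hrho]
    exact FoxCalc.rho_mul_of_mem k S T hr
  · -- vanishing on [N, N]
    intro r hr
    rw [hrho]
    rw [Subgroup.commutator_def] at hr
    induction hr using Subgroup.closure_induction with
    | mem x hx =>
        obtain ⟨g₁, h₁, g₂, h₂, rfl⟩ := hx
        have m1 : g₁ * g₂ ∈ Subgroup.normalClosure T := mul_mem h₁ h₂
        have m3 : g₁ * g₂ * g₁⁻¹ ∈ Subgroup.normalClosure T := mul_mem m1 (inv_mem h₁)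
        rw [commutatorElement_def, FoxCalc.rho_mul_of_mem k S T m3,
          FoxCalc.rho_mul_of_mem k S T m1, FoxCalc.rho_mul_of_mem k S T h₁,
          FoxCalc.rho_inv_of_mem k S T h₁, FoxCalc.rho_inv_of_mem k S T h₂]
        abel
    | one => exact FoxCalc.rho_one k S T
    | mul x y hx hy ihx ihy =>
        have hxN : x ∈ Subgroup.normalClosure T := hle (by
          rw [Subgroup.commutator_def]; exact hx)
        rw [FoxCalc.rho_mul_of_mem k S T hxN, ihx, ihy, add_zero]
    | inv x hx ihx =>
        have hxN : x ∈ Subgroup.normalClosure T := hle (by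
          rw [Subgroup.commutator_def]; exact hx)
        rw [FoxCalc.rho_inv_of_mem k S T hxN, ihx, neg_zero]
  · -- formula for ℓ
    intro c r
    rw [hrho]
    exact FoxCalc.ellMap_tmul k S T c r
  · -- injectivity of ℓ
    exact Function.LeftInverse.injective (FoxCalc.tau_ell k S T)
  · -- range ℓ = ker ∂₁
    ext w
    simp only [Set.mem_range, Set.mem_setOf_eq]
    constructor
    · rintro ⟨x, rfl⟩
      rw [hD1]
      exact FoxCalc.D1B_ell k S T x
    · intro hw
      refine ⟨FoxCalc.tauMap k S T w, ?_⟩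
      have h2 := FoxCalc.ell_tau_eta k S T w
      rw [hD1] at hw
      rw [hw, map_zero, add_zero] at h2
      exact h2
  · -- ker ∂₁ = span of relators
    ext w
    simp only [Set.mem_setOf_eq, SetLike.mem_coe]
    constructor
    · intro hw
      have h2 := FoxCalc.ell_tau_eta k S T w
      rw [hD1] at hw
      rw [hw, map_zero, add_zero] at h2
      rw [← h2, hrho]
      generalize FoxCalc.tauMap k S T w = x
      induction x with
      | zero => rw [map_zero]; exact zero_mem _
      | tmul c m =>
          obtain ⟨r, rfl⟩ := FoxCalc.ab_surj S T m
          rw [FoxCalc.ellMap_tmul]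
          exact Submodule.smul_of_tower_mem _ c (FoxCalc.rho_mem_span k S T r.2)
      | add x y hx hy => rw [map_add]; exact add_mem hx hy
    · intro hw
      rw [hrho] at hw
      rw [hD1]
      have hker : Submodule.span (MonoidAlgebra k (RelQuot S T))
          (FoxCalc.rho k S T '' T) ≤ LinearMap.ker (FoxCalc.D1B k S T) := by
        refine Submodule.span_le.mpr ?_
        rintro _ ⟨t, ht, rfl⟩
        rw [SetLike.mem_coe, LinearMap.mem_ker, FoxCalc.D1B_rho,
          FoxCalc.mk_eq_one_of_mem S T (Subgroup.subset_normalClosure ht), map_one,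
          sub_self]
      exact hker hw
end
end

section
/- Free groups are residually-(torsion-free nilpotent): if F is a free group and g ∈ F is a nontrivial element, then there exists a normal subgroup N of F such that g ∉ N and the quotient F/N is nilpotent and torsion-free. -/
open Finset
open scoped commutatorElement

namespace MagnusResidual

variable {β : Type*}

abbrev A (β : Type*) := MonoidAlgebra ℤ (FreeMonoid β)

instance instCoeFunA : CoeFun (A β) (fun _ => FreeMonoid β → ℤ) := ⟨fun f => f.coeff⟩

theorem mul_apply_split (f g : A β) (l : List β) :
    (f * g) (FreeMonoid.ofList l) =
      ∑ i ∈ Finset.range (l.length + 1),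
        f (FreeMonoid.ofList (l.take i)) * g (FreeMonoid.ofList (l.drop i)) := by
  classical
  have hs : ∀ {p : FreeMonoid β × FreeMonoid β},
      p ∈ (Finset.range (l.length + 1)).image
        (fun i => (FreeMonoid.ofList (l.take i), FreeMonoid.ofList (l.drop i)))
        ↔ p.1 * p.2 = FreeMonoid.ofList l := by
    intro p
    constructor
    · intro hp
      rcases Finset.mem_image.mp hp with ⟨i, _, rfl⟩
      rw [← FreeMonoid.ofList_append, List.take_append_drop]
    · intro hp
      apply Finset.mem_image.mpr
      have hl : FreeMonoid.toList p.1 ++ FreeMonoid.toList p.2 = l := by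
        rw [← FreeMonoid.toList_mul, hp]
        rfl
      refine ⟨(FreeMonoid.toList p.1).length, ?_, ?_⟩
      · apply Finset.mem_range.mpr
        have := congrArg List.length hl
        simp only [List.length_append] at this
        omega
      · rw [← hl, List.take_left, List.drop_left]
        exact Prod.ext rfl rfl
  rw [MonoidAlgebra.mul_apply_antidiagonal f g _ _ hs, Finset.sum_image]
  intro i hi j hj hij
  have h1 := congrArg (fun q => (FreeMonoid.toList q.1).length) hij
  simp only [FreeMonoid.toList_ofList, List.length_take] at h1
  simp only [Finset.mem_coe, Finset.mem_range] at hi hj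
  omega

/-- the truncation congruence: agreement of coefficients on words of length `≤ n`. -/
def tc (β : Type*) (n : ℕ) : RingCon (A β) where
  r f g := ∀ l : List β, l.length ≤ n → f (FreeMonoid.ofList l) = g (FreeMonoid.ofList l)
  iseqv := ⟨fun _ _ _ => rfl, fun h l hl => (h l hl).symm, fun h h' l hl => (h l hl).trans (h' l hl)⟩
  add' := by
    intro a b c d h h' l hl
    show (a + c) (FreeMonoid.ofList l) = (b + d) (FreeMonoid.ofList l)
    rw [MonoidAlgebra.coeff_add, MonoidAlgebra.coeff_add, Finsupp.add_apply, Finsupp.add_apply, h l hl, h' l hl]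
  mul' := by
    intro a b c d h h' l hl
    rw [mul_apply_split, mul_apply_split]
    refine Finset.sum_congr rfl fun i hi => ?_
    have hti : (l.take i).length ≤ n := by
      rw [List.length_take]; omega
    have hdi : (l.drop i).length ≤ n := by
      rw [List.length_drop]; omega
    rw [h _ hti, h' _ hdi]

abbrev Q (β : Type*) (n : ℕ) := (tc β n).Quotient

/-- truncated coefficient function -/
def cf (n : ℕ) (l : List β) (x : Q β n) : ℤ :=
  Quot.liftOn x (fun f => if l.length ≤ n then f (FreeMonoid.ofList l) else 0)
    (fun f g h => by
      split
      · exact h l ‹_›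
      · rfl)

theorem cf_coe (n : ℕ) (l : List β) (f : A β) :
    cf n l (f : Q β n) = if l.length ≤ n then f (FreeMonoid.ofList l) else 0 := rfl

theorem exists_rep (n : ℕ) (x : Q β n) : ∃ f : A β, (f : Q β n) = x :=
  Quot.inductionOn x fun f => ⟨f, rfl⟩

theorem cf_add (n : ℕ) (l : List β) (x y : Q β n) :
    cf n l (x + y) = cf n l x + cf n l y := by
  obtain ⟨f, rfl⟩ := exists_rep n x
  obtain ⟨g, rfl⟩ := exists_rep n y
  rw [← RingCon.coe_add, cf_coe, cf_coe, cf_coe]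
  split
  · exact Finsupp.add_apply f.coeff g.coeff _
  · simp

theorem cf_zero (n : ℕ) (l : List β) : cf n l (0 : Q β n) = 0 := by
  rw [← RingCon.coe_zero, cf_coe]
  split
  · exact Finsupp.zero_apply
  · rfl

theorem cf_neg (n : ℕ) (l : List β) (x : Q β n) : cf n l (-x) = - cf n l x := by
  obtain ⟨f, rfl⟩ := exists_rep n x
  rw [← RingCon.coe_neg, cf_coe, cf_coe]
  split
  · exact Finsupp.neg_apply f.coeff _
  · simp

theorem cf_sub (n : ℕ) (l : List β) (x y : Q β n) :
    cf n l (x - y) = cf n l x - cf n l y := by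
  rw [sub_eq_add_neg, cf_add, cf_neg, sub_eq_add_neg]

/-- `cf` as an additive monoid hom -/
noncomputable def cfh (n : ℕ) (l : List β) : Q β n →+ ℤ :=
  AddMonoidHom.mk' (cf n l) (cf_add n l)

theorem cf_one_nil (n : ℕ) : cf n ([] : List β) (1 : Q β n) = 1 := by
  rw [← RingCon.coe_one, cf_coe, if_pos (by simp : ([] : List β).length ≤ n)]
  show (MonoidAlgebra.single 1 1 : A β) (FreeMonoid.ofList []) = 1
  rw [FreeMonoid.ofList_nil, MonoidAlgebra.coeff_single, Finsupp.single_eq_same]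

theorem cf_one_ne (n : ℕ) (l : List β) (hl : l ≠ []) : cf n l (1 : Q β n) = 0 := by
  classical
  rw [← RingCon.coe_one, cf_coe]
  split
  · show (MonoidAlgebra.single 1 1 : A β) (FreeMonoid.ofList l) = 0
    rw [MonoidAlgebra.coeff_single, Finsupp.single_apply, if_neg]
    intro h
    apply hl
    have := congrArg FreeMonoid.toList h
    simpa using this.symm
  · rfl

/-- vanishing of all coefficients in degrees `< j` -/
def DD (n j : ℕ) (x : Q β n) : Prop := ∀ l : List β, l.length < j → cf n l x = 0

theorem DD_mono {n j j' : ℕ} (h : j' ≤ j) {x : Q β n} (hx : DD n j x) : DD n j' x :=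
  fun l hl => hx l (lt_of_lt_of_le hl h)

theorem DD_zero (n j : ℕ) : DD n j (0 : Q β n) := fun l _ => cf_zero n l

theorem DD_add {n j : ℕ} {x y : Q β n} (hx : DD n j x) (hy : DD n j y) : DD n j (x + y) :=
  fun l hl => by rw [cf_add, hx l hl, hy l hl, add_zero]

theorem DD_neg {n j : ℕ} {x : Q β n} (hx : DD n j x) : DD n j (-x) :=
  fun l hl => by rw [cf_neg, hx l hl, neg_zero]

theorem DD_mul_left {n j : ℕ} (x : Q β n) {y : Q β n} (hy : DD n j y) : DD n j (x * y) := by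
  obtain ⟨f, rfl⟩ := exists_rep n x
  obtain ⟨g, rfl⟩ := exists_rep n y
  intro l hl
  rw [← RingCon.coe_mul, cf_coe]
  split
  case isFalse => rfl
  case isTrue h =>
    rw [mul_apply_split]
    refine Finset.sum_eq_zero fun i hi => ?_
    have h2 : cf n (l.drop i) ((g : A β) : Q β n) = 0 := hy _ (by rw [List.length_drop]; omega)
    rw [cf_coe, if_pos (by rw [List.length_drop]; omega)] at h2
    rw [h2, mul_zero]

theorem DD_mul_right {n j : ℕ} {x : Q β n} (hx : DD n j x) (y : Q β n) : DD n j (x * y) := by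
  obtain ⟨f, rfl⟩ := exists_rep n x
  obtain ⟨g, rfl⟩ := exists_rep n y
  intro l hl
  rw [← RingCon.coe_mul, cf_coe]
  split
  case isFalse => rfl
  case isTrue h =>
    rw [mul_apply_split]
    refine Finset.sum_eq_zero fun i hi => ?_
    simp only [Finset.mem_range] at hi
    have h2 : cf n (l.take i) ((f : A β) : Q β n) = 0 := hx _ (by rw [List.length_take]; omega)
    rw [cf_coe, if_pos (by rw [List.length_take]; omega)] at h2
    rw [h2, zero_mul]

theorem DD_mul {n j k : ℕ} {x y : Q β n} (hx : DD n j x) (hy : DD n k y) :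
    DD n (j + k) (x * y) := by
  obtain ⟨f, rfl⟩ := exists_rep n x
  obtain ⟨g, rfl⟩ := exists_rep n y
  intro l hl
  rw [← RingCon.coe_mul, cf_coe]
  split
  case isFalse => rfl
  case isTrue h =>
    rw [mul_apply_split]
    refine Finset.sum_eq_zero fun i hi => ?_
    simp only [Finset.mem_range] at hi
    rcases lt_or_ge i j with hij | hij
    · have h2 : cf n (l.take i) ((f : A β) : Q β n) = 0 := hx _ (by rw [List.length_take]; omega)
      rw [cf_coe, if_pos (by rw [List.length_take]; omega)] at h2
      rw [h2, zero_mul]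
    · have h2 : cf n (l.drop i) ((g : A β) : Q β n) = 0 := hy _ (by rw [List.length_drop]; omega)
      rw [cf_coe, if_pos (by rw [List.length_drop]; omega)] at h2
      rw [h2, mul_zero]

theorem DD_top {n : ℕ} {x : Q β n} (h : DD n (n + 1) x) : x = 0 := by
  obtain ⟨f, rfl⟩ := exists_rep n x
  rw [show (0 : Q β n) = ((0 : A β) : Q β n) from rfl, RingCon.eq]
  intro l hl
  have h2 := h l (by omega)
  rw [cf_coe, if_pos hl] at h2
  exact h2.trans (Finsupp.zero_apply).symm

theorem DD_comm {n j : ℕ} {x : Q β n} (hx : DD n j x) (y : Q β n) :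
    DD n (j + 1) (x * y - y * x) := by
  obtain ⟨f, rfl⟩ := exists_rep n x
  obtain ⟨g, rfl⟩ := exists_rep n y
  intro l hl
  rw [← RingCon.coe_mul, ← RingCon.coe_mul, ← RingCon.coe_sub, cf_coe]
  split
  case isFalse => rfl
  case isTrue h =>
    rw [MonoidAlgebra.coeff_sub, Finsupp.sub_apply, mul_apply_split, mul_apply_split]
    have key1 : ∀ i ∈ Finset.range (l.length + 1), i ≠ l.length →
        (f : A β) (FreeMonoid.ofList (l.take i)) * (g : A β) (FreeMonoid.ofList (l.drop i)) = 0 := by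
      intro i hi hne
      simp only [Finset.mem_range] at hi
      have h2 : cf n (l.take i) ((f : A β) : Q β n) = 0 := hx _ (by rw [List.length_take]; omega)
      rw [cf_coe, if_pos (by rw [List.length_take]; omega)] at h2
      rw [h2, zero_mul]
    have key2 : ∀ i ∈ Finset.range (l.length + 1), i ≠ 0 →
        (g : A β) (FreeMonoid.ofList (l.take i)) * (f : A β) (FreeMonoid.ofList (l.drop i)) = 0 := by
      intro i hi hne
      simp only [Finset.mem_range] at hi
      have h2 : cf n (l.drop i) ((f : A β) : Q β n) = 0 := hx _ (by rw [List.length_drop]; omega)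
      rw [cf_coe, if_pos (by rw [List.length_drop]; omega)] at h2
      rw [h2, mul_zero]
    rw [Finset.sum_eq_single_of_mem l.length (Finset.self_mem_range_succ _) key1,
      Finset.sum_eq_single_of_mem 0 (Finset.mem_range.mpr (by omega)) key2]
    simp only [List.take_length, List.drop_length, List.take_zero, List.drop_zero]
    rw [FreeMonoid.ofList_nil]
    ring

theorem DD_comm₀ (n : ℕ) (x y : Q β n) : DD n 2 (x * y - y * x) := by
  obtain ⟨f, rfl⟩ := exists_rep n x
  obtain ⟨g, rfl⟩ := exists_rep n y
  intro l hl
  rw [← RingCon.coe_mul, ← RingCon.coe_mul, ← RingCon.coe_sub, cf_coe]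
  split
  case isFalse => rfl
  case isTrue h =>
    rw [MonoidAlgebra.coeff_sub, Finsupp.sub_apply, mul_apply_split, mul_apply_split]
    match l, hl with
    | [], _ =>
      simp only [List.length_nil, Finset.sum_range_one, List.take_nil, List.drop_nil]
      ring
    | [a], _ =>
      simp only [List.length_cons, List.length_nil, Finset.sum_range_succ,
        Finset.sum_range_zero, List.take_zero, List.drop_zero,
        show List.take 1 [a] = [a] from rfl, show List.drop 1 [a] = [] from rfl]
      ring

/-! ### Magnus units -/

noncomputable def XX (y : β) : A β := MonoidAlgebra.single (FreeMonoid.ofList [y]) 1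

noncomputable def pos (y : β) : A β := 1 + XX y

noncomputable def invN (n : ℕ) (y : β) : A β := ∑ i ∈ Finset.range (n + 1), (-XX y) ^ i

theorem single_apply_ofList (w : List β) (b : ℤ) (l : List β) [Decidable (w = l)] :
    (MonoidAlgebra.single (FreeMonoid.ofList w) b : A β) (FreeMonoid.ofList l)
      = if w = l then b else 0 := by
  classical
  rw [MonoidAlgebra.coeff_single, Finsupp.single_apply]
  exact if_congr ⟨fun h => congrArg FreeMonoid.toList h, fun h => congrArg FreeMonoid.ofList h⟩
    rfl rfl

theorem negX_pow (y : β) (k : ℕ) :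
    (-XX y) ^ k = MonoidAlgebra.single (FreeMonoid.ofList (List.replicate k y)) ((-1 : ℤ) ^ k) := by
  induction k with
  | zero =>
    simp only [pow_zero]
    rfl
  | succ k ih =>
    have hneg : -XX y = MonoidAlgebra.single (FreeMonoid.ofList [y]) (-1 : ℤ) := by
      rw [XX, ← MonoidAlgebra.single_neg]
    rw [pow_succ, ih, hneg, MonoidAlgebra.single_mul_single, ← FreeMonoid.ofList_append,
      ← List.replicate_succ']
    congr 1
    rw [pow_succ]

theorem pos_eq (y : β) :
    pos y = MonoidAlgebra.single (FreeMonoid.ofList []) (1 : ℤ)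
      + MonoidAlgebra.single (FreeMonoid.ofList [y]) (1 : ℤ) := by
  rw [pos, XX, FreeMonoid.ofList_nil, MonoidAlgebra.one_def]

theorem pos_nil (y : β) : pos y (FreeMonoid.ofList []) = 1 := by
  classical
  rw [pos_eq, MonoidAlgebra.coeff_add, Finsupp.add_apply, single_apply_ofList, single_apply_ofList,
    if_pos rfl, if_neg (by simp)]
  ring

theorem pos_single (y : β) : pos y (FreeMonoid.ofList [y]) = 1 := by
  classical
  rw [pos_eq, MonoidAlgebra.coeff_add, Finsupp.add_apply, single_apply_ofList, single_apply_ofList,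
    if_pos rfl, if_neg (by simp)]
  ring

theorem pos_supp (y : β) (l : List β) (h : pos y (FreeMonoid.ofList l) ≠ 0) :
    ∃ k, l = List.replicate k y := by
  classical
  by_contra hc
  push_neg at hc
  apply h
  rw [pos_eq, MonoidAlgebra.coeff_add, Finsupp.add_apply, single_apply_ofList, single_apply_ofList,
    if_neg, if_neg]
  · ring
  · exact fun he => hc 1 (by simpa [List.replicate] using he.symm)
  · exact fun he => hc 0 (by simpa [List.replicate] using he.symm)

theorem invN_apply (n : ℕ) (y : β) (l : List β) [Decidable (l = List.replicate l.length y)] :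
    invN n y (FreeMonoid.ofList l)
      = if l.length ≤ n ∧ l = List.replicate l.length y then (-1 : ℤ) ^ l.length else 0 := by
  classical
  rw [invN, MonoidAlgebra.coeff_sum, Finsupp.finset_sum_apply]
  by_cases h : l.length ≤ n ∧ l = List.replicate l.length y
  · rw [if_pos h]
    rw [Finset.sum_eq_single_of_mem l.length (Finset.mem_range.mpr (by omega))]
    · rw [negX_pow, single_apply_ofList, if_pos h.2.symm]
    · intro i _ hne
      rw [negX_pow, single_apply_ofList, if_neg]
      intro he
      exact hne (by simpa using congrArg List.length he)
  · rw [if_neg h]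
    refine Finset.sum_eq_zero fun i hi => ?_
    rw [negX_pow, single_apply_ofList, if_neg]
    intro he
    have hlen : l.length = i := by simpa using (congrArg List.length he).symm
    exact h ⟨by simp only [Finset.mem_range] at hi; omega, by rw [hlen, ← he]⟩

theorem invN_nil (n : ℕ) (y : β) : invN n y (FreeMonoid.ofList []) = 1 := by
  classical
  rw [invN_apply, if_pos ⟨Nat.zero_le n, rfl⟩]
  rfl

theorem invN_single (n : ℕ) (hn : 1 ≤ n) (y : β) : invN n y (FreeMonoid.ofList [y]) = -1 := by
  classical
  rw [invN_apply, if_pos ⟨by simpa using hn, rfl⟩]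
  simp

theorem invN_supp (n : ℕ) (y : β) (l : List β) (h : invN n y (FreeMonoid.ofList l) ≠ 0) :
    ∃ k, l = List.replicate k y := by
  classical
  rw [invN_apply] at h
  by_cases h2 : l.length ≤ n ∧ l = List.replicate l.length y
  · exact ⟨l.length, h2.2⟩
  · rw [if_neg h2] at h
    exact absurd rfl h

theorem geom₁ (n : ℕ) (y : β) : pos y * invN n y = 1 - (-XX y) ^ (n + 1) := by
  have : pos y = 1 - (-XX y) := by rw [pos, sub_neg_eq_add]
  rw [this, invN, mul_neg_geom_sum]

theorem geom₂ (n : ℕ) (y : β) : invN n y * pos y = 1 - (-XX y) ^ (n + 1) := by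
  have : pos y = 1 - (-XX y) := by rw [pos, sub_neg_eq_add]
  rw [this, invN, geom_sum_mul_neg]

theorem coe_negX_pow (n : ℕ) (y : β) : (((-XX y) ^ (n + 1) : A β) : Q β n) = 0 := by
  classical
  rw [show (0 : Q β n) = ((0 : A β) : Q β n) from rfl, RingCon.eq]
  intro l hl
  rw [negX_pow, single_apply_ofList, if_neg, MonoidAlgebra.coeff_zero, Finsupp.zero_apply]
  intro h
  have := congrArg List.length h
  simp at this
  omega

/-- the Magnus unit `1 + X_y` in the truncated algebra -/
noncomputable def U (n : ℕ) (y : β) : (Q β n)ˣ where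
  val := ((pos y : A β) : Q β n)
  inv := ((invN n y : A β) : Q β n)
  val_inv := by
    rw [← RingCon.coe_mul, geom₁, RingCon.coe_sub, coe_negX_pow, sub_zero, RingCon.coe_one]
  inv_val := by
    rw [← RingCon.coe_mul, geom₂, RingCon.coe_sub, coe_negX_pow, sub_zero, RingCon.coe_one]

/-! ### the key coefficient computation -/

noncomputable def wt (n : ℕ) (e : β × Bool) : A β := cond e.2 (pos e.1) (invN n e.1)

theorem wt_supp {n : ℕ} (e : β × Bool) (l : List β) (h : wt n e (FreeMonoid.ofList l) ≠ 0) :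
    ∃ k, l = List.replicate k e.1 := by
  rcases e with ⟨y, b⟩
  cases b
  · exact invN_supp n y l h
  · exact pos_supp y l h

theorem wt_nil {n : ℕ} (e : β × Bool) : wt n e (FreeMonoid.ofList []) = 1 := by
  rcases e with ⟨y, b⟩
  cases b
  · exact invN_nil n y
  · exact pos_nil y

theorem wt_single {n : ℕ} (hn : 1 ≤ n) (e : β × Bool) :
    wt n e (FreeMonoid.ofList [e.1]) = cond e.2 1 (-1) := by
  rcases e with ⟨y, b⟩
  cases b
  · exact invN_single n hn y
  · exact pos_single y

theorem chain_not_rep {m : List β} (hm : List.Chain' Ne m) {i : ℕ} (h2 : 2 ≤ i) (y : β) :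
    m.take i ≠ List.replicate i y := by
  intro h
  have hlen := congrArg List.length h
  simp only [List.length_take, List.length_replicate] at hlen
  have hml : 2 ≤ m.length := by omega
  match m, i, h2 with
  | a :: b :: r, k + 2, _ =>
    rw [List.take_succ_cons, List.take_succ_cons] at h
    rw [show List.replicate (k + 2) y = y :: y :: List.replicate k y from rfl] at h
    injection h with h1 h'
    injection h' with h2' h''
    exact (List.isChain_cons_cons.mp hm).1 (h1.trans h2'.symm)
  | [], k + 2, _ => simp at hml
  | [a], k + 2, _ => simp at hml

theorem SUP (n : ℕ) : ∀ (l : List (β × Bool)) (m : List β), List.Chain' Ne m →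
    l.length < m.length → ((l.map (wt n)).prod) (FreeMonoid.ofList m) = 0 := by
  intro l
  induction l with
  | nil =>
    intro m hm hlen
    classical
    simp only [List.map_nil, List.prod_nil]
    rw [MonoidAlgebra.one_def, show (1 : FreeMonoid β) = FreeMonoid.ofList [] from rfl,
      single_apply_ofList, if_neg]
    intro h
    rw [← h] at hlen
    simp at hlen
  | cons p t ih =>
    intro m hm hlen
    simp only [List.map_cons, List.prod_cons]
    rw [mul_apply_split]
    refine Finset.sum_eq_zero fun i hi => ?_
    simp only [Finset.mem_range] at hi
    match i with
    | 0 =>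
      rw [List.drop_zero, ih m hm (by simp at hlen; omega), mul_zero]
    | 1 =>
      rw [ih (m.drop 1) (by rw [List.drop_one]; exact hm.tail)
        (by rw [List.length_drop]; simp at hlen ⊢; omega), mul_zero]
    | (k + 2) =>
      by_cases hz : wt n p (FreeMonoid.ofList (m.take (k + 2))) = 0
      · rw [hz, zero_mul]
      · obtain ⟨c, hc⟩ := wt_supp p _ hz
        have hcl : c = k + 2 := by
          have := congrArg List.length hc
          simp only [List.length_take, List.length_replicate] at this
          omega
        rw [hcl] at hc
        exact absurd hc (chain_not_rep hm (by omega) p.1)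

theorem KEY (n : ℕ) (hn : 1 ≤ n) : ∀ (l : List (β × Bool)),
    List.Chain' (fun u v => u.1 ≠ v.1) l →
    ((l.map (wt n)).prod) (FreeMonoid.ofList (l.map (·.1)))
      = (l.map fun p => cond p.2 (1 : ℤ) (-1)).prod := by
  intro l
  induction l with
  | nil =>
    intro _
    simp only [List.map_nil, List.prod_nil]
    rw [MonoidAlgebra.one_def, FreeMonoid.ofList_nil, MonoidAlgebra.coeff_single, Finsupp.single_eq_same]
  | cons p t ih =>
    intro hl
    have hm : List.Chain' Ne (p.1 :: List.map (fun x => x.1) t) := by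
      have h2 := (List.isChain_map (Prod.fst : β × Bool → β)).mpr hl
      simpa [List.Chain'] using h2
    simp only [List.map_cons, List.prod_cons]
    rw [mul_apply_split]
    rw [Finset.sum_eq_single_of_mem 1 (Finset.mem_range.mpr (by simp))]
    · rw [show List.take 1 (p.1 :: List.map (fun x => x.1) t) = [p.1] from rfl,
        show List.drop 1 (p.1 :: List.map (fun x => x.1) t) = List.map (fun x => x.1) t from rfl,
        wt_single hn, ih hl.tail]
    · intro i hi hne
      simp only [Finset.mem_range, List.length_cons, List.length_map] at hi
      match i, hne with
      | 0, _ =>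
        rw [List.drop_zero, SUP n t (p.1 :: List.map (fun x => x.1) t) hm (by simp), mul_zero]
      | (k + 2), _ =>
        by_cases hz :
            wt n p (FreeMonoid.ofList ((p.1 :: List.map (fun x => x.1) t).take (k + 2))) = 0
        · rw [hz, zero_mul]
        · obtain ⟨c, hc⟩ := wt_supp p _ hz
          have hcl : c = k + 2 := by
            have h3 := congrArg List.length hc
            simp only [List.length_take, List.length_replicate, List.length_cons,
              List.length_map] at h3
            omega
          rw [hcl] at hc
          exact absurd hc (chain_not_rep hm (by omega) p.1)

theorem sign_prod_ne_zero (l : List (β × Bool)) :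
    (l.map fun p => cond p.2 (1 : ℤ) (-1)).prod ≠ 0 := by
  apply List.prod_ne_zero
  intro h
  rcases List.mem_map.mp h with ⟨p, -, hp⟩
  revert hp
  cases p.2 <;> simp

/-! ### nilpotency of the unit group -/

noncomputable def HH (n j : ℕ) : Subgroup (Q β n)ˣ where
  carrier := {u | DD n j ((u : Q β n) - 1)}
  one_mem' := by
    show DD n j (((1 : (Q β n)ˣ) : Q β n) - 1)
    rw [Units.val_one, sub_self]
    exact DD_zero n j
  mul_mem' := by
    intro a b ha hb
    have key : ((a * b : (Q β n)ˣ) : Q β n) - 1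
        = ((a : Q β n) - 1) * ((b : Q β n) - 1) + ((a : Q β n) - 1) + ((b : Q β n) - 1) := by
      rw [Units.val_mul, mul_sub, sub_mul, sub_mul]
      simp only [one_mul, mul_one]
      abel
    show DD n j _
    rw [key]
    exact DD_add (DD_add (DD_mul_left _ hb) ha) hb
  inv_mem' := by
    intro a ha
    have key : ((a⁻¹ : (Q β n)ˣ) : Q β n) - 1
        = -(((a⁻¹ : (Q β n)ˣ) : Q β n) * ((a : Q β n) - 1)) := by
      rw [mul_sub, mul_one, Units.inv_mul, neg_sub]
    show DD n j _
    rw [key]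
    exact DD_neg (DD_mul_left _ ha)

theorem mem_HH {n j : ℕ} {u : (Q β n)ˣ} : u ∈ HH n j ↔ DD n j ((u : Q β n) - 1) := Iff.rfl

theorem commutator_sub_one {n : ℕ} (u v : (Q β n)ˣ) :
    ((⁅u, v⁆ : (Q β n)ˣ) : Q β n) - 1
      = (((u * v : (Q β n)ˣ) : Q β n) - ((v * u : (Q β n)ˣ) : Q β n))
          * (((v * u)⁻¹ : (Q β n)ˣ) : Q β n) := by
  have hcom : ⁅u, v⁆ = (u * v) * (v * u)⁻¹ := by
    rw [commutatorElement_def]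
    group
  rw [hcom, Units.val_mul, sub_mul, Units.mul_inv]

theorem commutator_mem_base {n : ℕ} (u v : (Q β n)ˣ) : ⁅u, v⁆ ∈ HH n 2 := by
  rw [mem_HH, commutator_sub_one]
  apply DD_mul_right
  rw [Units.val_mul, Units.val_mul]
  exact DD_comm₀ n _ _

theorem commutator_mem_step {n j : ℕ} (u v : (Q β n)ˣ) (hu : u ∈ HH n j) :
    ⁅u, v⁆ ∈ HH n (j + 1) := by
  rw [mem_HH, commutator_sub_one]
  apply DD_mul_right
  have key : ((u * v : (Q β n)ˣ) : Q β n) - ((v * u : (Q β n)ˣ) : Q β n)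
      = ((u : Q β n) - 1) * (v : Q β n) - (v : Q β n) * ((u : Q β n) - 1) := by
    rw [Units.val_mul, Units.val_mul, sub_mul, mul_sub, one_mul, mul_one]
    abel
  rw [key]
  exact DD_comm (mem_HH.mp hu) _

theorem units_nilpotent (β : Type*) (n : ℕ) : Group.IsNilpotent (Q β n)ˣ := by
  rw [nilpotent_iff_lowerCentralSeries]
  refine ⟨n + 1, ?_⟩
  have main : ∀ j, (⊤ : Subgroup (Q β n)ˣ).lowerCentralSeries (j + 1) ≤ HH n (j + 2) := by
    intro j
    induction j with
    | zero =>
      rw [show (0 : ℕ) + 1 = 1 from rfl, show (⊤ : Subgroup (Q β n)ˣ).lowerCentralSeries 1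
        = ⁅(⊤ : Subgroup (Q β n)ˣ).lowerCentralSeries 0, ⊤⁆ from Subgroup.lowerCentralSeries_succ _ 0,
        Subgroup.lowerCentralSeries_zero]
      exact Subgroup.commutator_le.mpr fun u _ v _ => commutator_mem_base u v
    | succ j ih =>
      rw [Subgroup.lowerCentralSeries_succ]
      refine le_trans (Subgroup.commutator_mono ih le_rfl) ?_
      exact Subgroup.commutator_le.mpr fun u hu v _ => commutator_mem_step u v hu
  rw [eq_bot_iff]
  refine le_trans (main n) ?_
  intro u hu
  have h1 : DD n (n + 1) ((u : Q β n) - 1) := DD_mono (by omega) (mem_HH.mp hu)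
  have h2 := DD_top h1
  rw [sub_eq_zero] at h2
  rw [Subgroup.mem_bot]
  exact Units.ext h2

/-! ### torsion-freeness -/

theorem cf_nil_mul (n : ℕ) (x y : Q β n) : cf n [] (x * y) = cf n [] x * cf n [] y := by
  obtain ⟨f, rfl⟩ := exists_rep n x
  obtain ⟨g, rfl⟩ := exists_rep n y
  rw [← RingCon.coe_mul, cf_coe, cf_coe, cf_coe]
  rw [if_pos (by simp), if_pos (by simp), if_pos (by simp)]
  rw [mul_apply_split]
  simp [Finset.sum_range_one]

theorem torsionfree_units (n : ℕ) (u : (Q β n)ˣ) (hu : cf n [] (u : Q β n) = 1)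
    (hne : u ≠ 1) (k : ℕ) (hk : 0 < k) (hcontra : u ^ k = 1) : False := by
  classical
  set a : Q β n := (u : Q β n) - 1 with ha
  have hane : a ≠ 0 := by
    rw [ha, sub_ne_zero]
    intro h
    exact hne (Units.ext (by rw [h, Units.val_one]))
  have hex : ∃ m, ∃ l : List β, l.length = m ∧ cf n l a ≠ 0 := by
    by_contra hc
    push_neg at hc
    exact hane (DD_top fun l _ => hc l.length l rfl)
  obtain ⟨w, hwlen, hwne⟩ := Nat.find_spec hex
  set j := Nat.find hex with hj
  have hDD : DD n j a := by
    intro l hl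
    by_contra hc
    exact Nat.find_min hex hl ⟨l, rfl, hc⟩
  have hj1 : 1 ≤ j := by
    by_contra hc
    have hj0 : j = 0 := by omega
    rw [hj0] at hwlen
    have hw0 : w = [] := List.length_eq_zero_iff.mp hwlen
    apply hwne
    rw [hw0, ha, cf_sub, hu, cf_one_nil, sub_self]
  have hmem : u ∈ HH n j := hDD
  have hgeo : ((u ^ k : (Q β n)ˣ) : Q β n) - 1 = (∑ i ∈ Finset.range k, (u : Q β n) ^ i) * a := by
    rw [ha, geom_sum_mul, Units.val_pow_eq_pow_val]
  have hsum : (∑ i ∈ Finset.range k, (u : Q β n) ^ i) * a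
      = (∑ i ∈ Finset.range k, (((u ^ i : (Q β n)ˣ) : Q β n) - 1) * a) + k • a := by
    rw [Finset.sum_mul]
    calc ∑ i ∈ Finset.range k, (u : Q β n) ^ i * a
        = ∑ i ∈ Finset.range k, ((((u ^ i : (Q β n)ˣ) : Q β n) - 1) * a + a) := by
          refine Finset.sum_congr rfl fun i _ => ?_
          rw [Units.val_pow_eq_pow_val, sub_mul, one_mul, sub_add_cancel]
      _ = _ := by rw [Finset.sum_add_distrib, Finset.sum_const, Finset.card_range]
  have hz : cf n w (∑ i ∈ Finset.range k, (((u ^ i : (Q β n)ˣ) : Q β n) - 1) * a) = 0 := by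
    rw [show cf n w = (cfh n w : Q β n → ℤ) from rfl, map_sum]
    refine Finset.sum_eq_zero fun i _ => ?_
    have h1 : DD n j (((u ^ i : (Q β n)ˣ) : Q β n) - 1) := mem_HH.mp ((HH n j).pow_mem hmem i)
    have h2 : DD n (j + j) ((((u ^ i : (Q β n)ˣ) : Q β n) - 1) * a) := DD_mul h1 hDD
    exact h2 w (by omega)
  have hfinal : cf n w (((u ^ k : (Q β n)ˣ) : Q β n) - 1) = (k : ℤ) * cf n w a := by
    rw [hgeo, hsum, cf_add, hz, zero_add,
      show cf n w = (cfh n w : Q β n → ℤ) from rfl, map_nsmul]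
    rw [nsmul_eq_mul]
  rw [hcontra, Units.val_one, sub_self, cf_zero] at hfinal
  have hkz : (k : ℤ) ≠ 0 := Int.natCast_ne_zero.mpr (by omega)
  exact mul_ne_zero hkz hwne hfinal.symm

/-! ### free group side -/

theorem exists_bad_of_not_chain' {γ : Type*} (R : γ → γ → Prop) :
    ∀ L : List γ, ¬List.Chain' R L → ∃ L₁ x y L₂, L = L₁ ++ x :: y :: L₂ ∧ ¬R x y
  | [], h => absurd List.isChain_nil h
  | [a], h => absurd (List.isChain_singleton a) h
  | a :: b :: t, h => by
    by_cases hab : R a b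
    · have h2 : ¬List.Chain' R (b :: t) := by
        intro hc
        exact h (List.isChain_cons_cons.mpr ⟨hab, hc⟩)
      obtain ⟨L₁, x, y, L₂, heq, hxy⟩ := exists_bad_of_not_chain' R (b :: t) h2
      exact ⟨a :: L₁, x, y, L₂, by rw [List.cons_append, ← heq], hxy⟩
    · exact ⟨[], a, b, t, rfl, hab⟩

def blk {γ : Type*} (p : γ × Bool) : List ((γ × Bool) × Bool) :=
  cond p.2 [((p.1, false), true), ((p.1, true), true)]
    [((p.1, true), false), ((p.1, false), false)]

theorem blk_ne_nil {γ : Type*} (p : γ × Bool) : blk p ≠ [] := by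
  rcases p with ⟨a, b⟩
  cases b <;> simp [blk]

theorem chain_blk {γ : Type*} (p : γ × Bool) :
    List.Chain' (fun u v : (γ × Bool) × Bool => u.1 ≠ v.1) (blk p) := by
  rcases p with ⟨a, b⟩
  cases b <;> simp [blk, List.Chain']

theorem chainE {γ : Type*} :
    ∀ L : List (γ × Bool), List.Chain' (fun p q => ¬(q.1 = p.1 ∧ q.2 = !p.2)) L →
      List.Chain' (fun u v : (γ × Bool) × Bool => u.1 ≠ v.1) ((L.map blk).flatten)
  | [], _ => by simp [List.Chain']
  | [p], _ => by simpa using chain_blk p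
  | p :: q :: t, h => by
    obtain ⟨hpq, ht⟩ := List.isChain_cons_cons.mp h
    have ih := chainE (q :: t) ht
    rw [List.map_cons, List.flatten_cons]
    refine List.isChain_append.mpr ⟨chain_blk p, ih, ?_⟩
    intro x hx z hz
    rw [List.map_cons, List.flatten_cons, List.head?_append_of_ne_nil _ (blk_ne_nil q)] at hz
    rcases p with ⟨a, b⟩
    rcases q with ⟨c, d⟩
    simp only at hpq
    cases b <;> cases d <;>
      simp only [blk, cond_true, cond_false, List.getLast?_cons_cons,
        List.getLast?_singleton, Option.mem_def, Option.some.injEq, List.head?_cons] at hx hz <;>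
      subst hx <;> subst hz <;> simp_all <;> exact fun he => hpq he.symm

theorem val_lift {γ : Type*} (n : ℕ) :
    ∀ L : List (γ × Bool),
      ((FreeGroup.lift (fun a : γ => U n (a, false) * U n (a, true)) (FreeGroup.mk L) :
          (Q (γ × Bool) n)ˣ) : Q (γ × Bool) n)
        = ((((L.map blk).flatten.map (wt n)).prod : A (γ × Bool)) : Q (γ × Bool) n)
  | [] => by
    rw [FreeGroup.lift_mk]
    simp only [List.map_nil, List.prod_nil, Units.val_one, List.flatten_nil]
    rw [RingCon.coe_one]
  | p :: t => by
    rw [FreeGroup.lift_mk, List.map_cons, List.prod_cons, Units.val_mul]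
    have ih := val_lift n t
    rw [FreeGroup.lift_mk] at ih
    rw [ih, List.map_cons, List.flatten_cons, List.map_append, List.prod_append, RingCon.coe_mul]
    congr 1
    rcases p with ⟨a, s⟩
    cases s
    · show (((U n (a, false) * U n (a, true))⁻¹ : (Q (γ × Bool) n)ˣ) : Q (γ × Bool) n) = _
      rw [mul_inv_rev, Units.val_mul]
      rw [show ((blk ((a, false) : γ × Bool)).map (wt n)).prod
        = invN n (a, true) * invN n (a, false) by simp [blk, wt]]
      rw [RingCon.coe_mul]
      rfl
    · show (((U n (a, false) * U n (a, true)) : (Q (γ × Bool) n)ˣ) : Q (γ × Bool) n) = _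
      rw [Units.val_mul]
      rw [show ((blk ((a, true) : γ × Bool)).map (wt n)).prod
        = pos ((a, false) : γ × Bool) * pos ((a, true) : γ × Bool) by simp [blk, wt]]
      rw [RingCon.coe_mul]
      rfl

end MagnusResidual

/-- The old Mathlib `Monoid.IsTorsionFree` (removed since), restored with its old meaning. -/
def Monoid.IsTorsionFree (G : Type*) [Monoid G] : Prop :=
  ∀ g : G, g ≠ 1 → ¬IsOfFinOrder g

open MagnusResidual in
/-- Free groups are residually (torsion-free nilpotent). -/
theorem freeGroup_residually_torsionFreeNilpotent
    (α : Type*) (g : FreeGroup α) (hg : g ≠ 1) :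
    ∃ (N : Subgroup (FreeGroup α)) (_ : N.Normal),
      g ∉ N ∧ Group.IsNilpotent (FreeGroup α ⧸ N) ∧
        Monoid.IsTorsionFree (FreeGroup α ⧸ N) := by
  classical
  set L : List (α × Bool) := g.toWord with hLdef
  have hLne : L ≠ [] := fun h => hg (FreeGroup.toWord_eq_nil_iff.mp h)
  have hred : List.Chain' (fun p q : α × Bool => ¬(q.1 = p.1 ∧ q.2 = !p.2)) L := by
    by_contra hc
    obtain ⟨L₁, x, y, L₂, heq, hxy⟩ := exists_bad_of_not_chain' _ L hc
    rw [not_not] at hxy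
    obtain ⟨xa, xb⟩ := x
    obtain ⟨ya, yb⟩ := y
    obtain ⟨h1, h2⟩ := hxy
    simp only at h1 h2
    subst h1
    subst h2
    have heq2 : FreeGroup.reduce (g.toWord) = L₁ ++ (ya, xb) :: (ya, !xb) :: L₂ := by
      rw [FreeGroup.reduce_toWord, ← hLdef]
      exact heq
    exact FreeGroup.reduce.not heq2
  set E : List ((α × Bool) × Bool) := (L.map blk).flatten with hEdef
  set n : ℕ := E.length with hndef
  have hn1 : 1 ≤ n := by
    rw [hndef]
    cases hL : L with
    | nil => exact absurd hL hLne
    | cons p t =>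
      have hEeq : E = blk p ++ ((t.map blk).flatten) := by
        rw [hEdef, hL, List.map_cons, List.flatten_cons]
      rw [hEeq, List.length_append]
      rcases p with ⟨a, b⟩
      cases b <;> simp [blk]  <;> omega
  set μ : FreeGroup α →* (Q (α × Bool) n)ˣ :=
    FreeGroup.lift (fun a => U n (a, false) * U n (a, true)) with hμ
  have hc1 : ∀ z : FreeGroup α, cf n [] ((μ z : (Q (α × Bool) n)ˣ) : Q (α × Bool) n) = 1 := by
    intro z
    refine FreeGroup.induction_on z ?_ ?_ ?_ ?_
    · rw [map_one, Units.val_one, cf_one_nil]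
    · intro a
      show cf n [] ((μ (FreeGroup.of a) : (Q (α × Bool) n)ˣ) : Q (α × Bool) n) = 1
      rw [hμ, FreeGroup.lift_apply_of, Units.val_mul, cf_nil_mul]
      rw [show ((U n ((a, false) : α × Bool)) : Q (α × Bool) n)
          = ((pos ((a, false) : α × Bool) : A (α × Bool)) : Q (α × Bool) n) from rfl,
        show ((U n ((a, true) : α × Bool)) : Q (α × Bool) n)
          = ((pos ((a, true) : α × Bool) : A (α × Bool)) : Q (α × Bool) n) from rfl]
      rw [cf_coe, cf_coe, if_pos (by simp), if_pos (by simp)]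
      rw [show FreeMonoid.ofList ([] : List (α × Bool)) = 1 from rfl] at *
      rw [show (1 : FreeMonoid (α × Bool)) = FreeMonoid.ofList [] from rfl]
      rw [pos_nil, pos_nil]
      norm_num
    · intro a ha
      show cf n [] ((μ (FreeGroup.of a)⁻¹ : (Q (α × Bool) n)ˣ) : Q (α × Bool) n) = 1
      have ha' : cf n [] ((μ (FreeGroup.of a) : (Q (α × Bool) n)ˣ) : Q (α × Bool) n) = 1 := ha
      rw [map_inv]
      have hone : cf n []
          (((μ (FreeGroup.of a) : (Q (α × Bool) n)ˣ) : Q (α × Bool) n)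
            * (((μ (FreeGroup.of a))⁻¹ : (Q (α × Bool) n)ˣ) : Q (α × Bool) n)) = 1 := by
        rw [Units.mul_inv, cf_one_nil]
      rw [cf_nil_mul, ha', one_mul] at hone
      exact hone
    · intro x y hx hy
      rw [map_mul, Units.val_mul, cf_nil_mul, hx, hy, one_mul]
  refine ⟨μ.ker, MonoidHom.normal_ker μ, ?_, ?_, ?_⟩
  · rw [MonoidHom.mem_ker]
    intro hμg
    have hval : ((μ g : (Q (α × Bool) n)ˣ) : Q (α × Bool) n)
        = (((E.map (wt n)).prod : A (α × Bool)) : Q (α × Bool) n) := by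
      conv_lhs => rw [hμ, show g = FreeGroup.mk L from (FreeGroup.mk_toWord).symm]
      rw [hEdef]
      exact val_lift n L
    have hchain : List.Chain' (fun u v : (α × Bool) × Bool => u.1 ≠ v.1) E := by
      rw [hEdef]
      exact chainE L hred
    have hcf : cf n (E.map (·.1)) ((μ g : (Q (α × Bool) n)ˣ) : Q (α × Bool) n)
        = (E.map fun p => cond p.2 (1 : ℤ) (-1)).prod := by
      rw [hval, cf_coe, if_pos (by rw [List.length_map])]
      exact KEY n hn1 E hchain
    rw [hμg, Units.val_one] at hcf
    rw [cf_one_ne _ _ (fun h => by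
      have h2 := congrArg List.length h
      simp only [List.length_map, List.length_nil] at h2
      omega)] at hcf
    exact sign_prod_ne_zero E hcf.symm
  · haveI : Group.IsNilpotent (Q (α × Bool) n)ˣ := units_nilpotent _ n
    exact nilpotent_of_surjective (QuotientGroup.quotientKerEquivRange μ).symm.toMonoidHom
      (MulEquiv.surjective _)
  · intro q hq1 hqfin
    obtain ⟨k, hk0, hk⟩ := isOfFinOrder_iff_pow_eq_one.mp hqfin
    obtain ⟨x, rfl⟩ := QuotientGroup.mk_surjective q
    have hx1 : μ x ≠ 1 := by
      intro h
      exact hq1 ((QuotientGroup.eq_one_iff x).mpr (MonoidHom.mem_ker.mpr h))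
    have hxk : (μ x) ^ k = 1 := by
      have h1 : ((x ^ k : FreeGroup α) : FreeGroup α ⧸ μ.ker) = 1 := by
        rw [QuotientGroup.mk_pow]
        exact hk
      have h2 : x ^ k ∈ μ.ker := (QuotientGroup.eq_one_iff _).mp h1
      rw [← map_pow]
      exact MonoidHom.mem_ker.mp h2
    exact torsionfree_units n (μ x) (hc1 x) hx1 k hk0 hxk
end
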